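/- arXiv:1005.1721 — 5 statements merged into one kernel-verified Lean document; each statement's English description precedes it below -/
import Mathlib

section
/- Every connected graph that admits an isometric embedding into the Cartesian product of two trees is a median graph. -/
open SimpleGraph

/-- The metric interval between `u` and `v` in a graph `G`. -/
def gInterval {V : Type} (G : SimpleGraph V) (u v : V) : Set V :=
  {z | G.dist u z + G.dist z v = G.dist u v}

/-- `G` is a median graph: it is connected and every triple of vertices has a
unique median. -/
def IsMedianGraph {V : Type} (G : SimpleGraph V) : Prop :=
  G.Connected ∧ ∀ u v w : V,
    ∃! m : V, m ∈ gInterval G u v ∧ m ∈ gInterval G v w ∧ m ∈ gInterval G u w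

/-- `f` is an isometric embedding of the graph `H` into the graph `G`. -/
def IsIsometricEmbedding {A B : Type} (H : SimpleGraph A) (G : SimpleGraph B)
    (f : A → B) : Prop :=
  ∀ x y : A, G.dist (f x) (f y) = H.dist x y

/-- `G` admits an isometric embedding into the Cartesian product of two trees. -/
def EmbedsInTwoTrees {V : Type} (G : SimpleGraph V) : Prop :=
  ∃ (A B : Type) (T₁ : SimpleGraph A) (T₂ : SimpleGraph B),
    T₁.IsTree ∧ T₂.IsTree ∧ ∃ f : V → A × B, IsIsometricEmbedding G (T₁ □ T₂) f

section General
variable {V : Type} {G : SimpleGraph V}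

/-- adjacent vertices are at distance 1 -/
lemma adj_dist_one {a b : V} (h : G.Adj a b) : G.dist a b = 1 :=
  SimpleGraph.dist_eq_one_iff_adj.mpr h

/-- index-distance lemma: in a geodesic walk, the i-th vertex is at distance i from the start. -/
lemma geo_getVert (hc : G.Connected) {x y : V} (w : G.Walk x y)
    (hw : w.length = G.dist x y) :
    ∀ i, i ≤ w.length →
      G.dist x (w.getVert i) = i ∧ G.dist (w.getVert i) y = w.length - i := by
  induction w with
  | nil =>
    intro i hi
    simp only [Walk.length_nil, Nat.le_zero] at hi
    subst hi
    simp [SimpleGraph.dist_self]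
  | @cons x x₁ y h w' ih =>
    have hd1 : G.dist x x₁ ≤ 1 := by
      simpa using SimpleGraph.dist_le (Walk.cons h Walk.nil)
    have htri : G.dist x y ≤ G.dist x x₁ + G.dist x₁ y := hc.dist_triangle
    have hle : G.dist x₁ y ≤ w'.length := SimpleGraph.dist_le w'
    have hw' : w'.length = G.dist x₁ y := by
      simp only [Walk.length_cons] at hw; omega
    intro i hi
    match i with
    | 0 => simpa using hw.symm
    | (j+1) =>
      simp only [Walk.length_cons] at hi
      obtain ⟨h1, h2⟩ := ih hw' j (by omega)
      simp only [Walk.getVert_cons_succ, Walk.length_cons]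
      set c := w'.getVert j with hc'
      have t1 : G.dist x c ≤ G.dist x x₁ + G.dist x₁ c := hc.dist_triangle
      have t2 : G.dist x y ≤ G.dist x c + G.dist c y := hc.dist_triangle
      simp only [Walk.length_cons] at hw
      constructor <;> omega

/-- a geodesic walk is a path -/
lemma geo_isPath (hc : G.Connected) {x y : V} (w : G.Walk x y)
    (hw : w.length = G.dist x y) : w.IsPath := by
  induction w with
  | nil => exact Walk.IsPath.nil
  | @cons x x₁ y h w' ih =>
    have hd1 : G.dist x x₁ ≤ 1 := by
      simpa using SimpleGraph.dist_le (Walk.cons h Walk.nil)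
    have htri : G.dist x y ≤ G.dist x x₁ + G.dist x₁ y := hc.dist_triangle
    have hle : G.dist x₁ y ≤ w'.length := SimpleGraph.dist_le w'
    have hw' : w'.length = G.dist x₁ y := by
      simp only [Walk.length_cons] at hw; omega
    refine (ih hw').cons ?_
    intro hmem
    obtain ⟨n, hn, hnle⟩ := Walk.mem_support_iff_exists_getVert.mp hmem
    have := (geo_getVert hc (Walk.cons h w') hw (n+1) (by simpa using Nat.succ_le_succ hnle)).1
    rw [Walk.getVert_cons_succ, hn, SimpleGraph.dist_self] at this
    omega

/-- betweenness transitivity -/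
lemma between_trans (hc : G.Connected) {x b c y : V}
    (h1 : G.dist x b + G.dist b y = G.dist x y)
    (h2 : G.dist b c + G.dist c y = G.dist b y) :
    G.dist x c + G.dist c y = G.dist x y ∧ G.dist x b + G.dist b c = G.dist x c := by
  have t1 : G.dist x c ≤ G.dist x b + G.dist b c := hc.dist_triangle
  have t2 : G.dist x y ≤ G.dist x c + G.dist c y := hc.dist_triangle
  omega

/-- if x is between y,z, s between x,y, t between x,z, then x is between s,t -/
lemma between_mid (hc : G.Connected) {x y z s t : V}
    (hx : G.dist y x + G.dist x z = G.dist y z)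
    (hs : G.dist x s + G.dist s y = G.dist x y)
    (ht : G.dist x t + G.dist t z = G.dist x z) :
    G.dist s x + G.dist x t = G.dist s t := by
  have c1 : G.dist y s = G.dist s y := SimpleGraph.dist_comm ..
  have c2 : G.dist y x = G.dist x y := SimpleGraph.dist_comm ..
  have c3 : G.dist s x = G.dist x s := SimpleGraph.dist_comm ..
  have t1 : G.dist y z ≤ G.dist y s + G.dist s z := hc.dist_triangle
  have t2 : G.dist s z ≤ G.dist s x + G.dist x z := hc.dist_triangle
  have t3 : G.dist s t ≤ G.dist s x + G.dist x t := hc.dist_triangle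
  have t4 : G.dist s z ≤ G.dist s t + G.dist t z := hc.dist_triangle
  omega

/-- second vertex of a geodesic: if x ≠ y there is a neighbour of x between x and y -/
lemma exists_second (hc : G.Connected) {x y : V} (hne : x ≠ y) :
    ∃ a, G.Adj x a ∧ G.dist x a + G.dist a y = G.dist x y := by
  obtain ⟨w, hw⟩ := hc.exists_walk_length_eq_dist x y
  have hpos : 0 < G.dist x y := hc.pos_dist_of_ne hne
  cases w with
  | nil => exact absurd rfl hne
  | @cons _ x₁ _ h w' =>
    refine ⟨x₁, h, ?_⟩
    have := (geo_getVert hc (Walk.cons h w') hw 1 (by simp only [Walk.length_cons]; omega))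
    simp only [Walk.getVert_cons_succ, Walk.getVert_zero] at this
    rw [this.1, this.2]
    simp only [Walk.length_cons] at hw ⊢
    omega

end General

section Tree
variable {A : Type} {T : SimpleGraph A}

/-- in a tree, every path realizes the distance -/
lemma tree_path_length (hT : T.IsTree) {x y : A} (p : T.Walk x y) (hp : p.IsPath) :
    p.length = T.dist x y := by
  obtain ⟨g, hg⟩ := hT.isConnected.exists_walk_length_eq_dist x y
  have hgp : g.IsPath := geo_isPath hT.isConnected g hg
  have h : p = g := Subtype.ext_iff.mp (hT.IsAcyclic.path_unique ⟨p, hp⟩ ⟨g, hgp⟩)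
  rw [h, hg]

/-- uniqueness of points in intervals at a fixed distance (tree) -/
lemma tree_unique (hT : T.IsTree) {x y a b : A}
    (ha : T.dist x a + T.dist a y = T.dist x y)
    (hb : T.dist x b + T.dist b y = T.dist x y)
    (hd : T.dist x a = T.dist x b) : a = b := by
  have hc := hT.isConnected
  obtain ⟨p1, hp1⟩ := hc.exists_walk_length_eq_dist x a
  obtain ⟨p2, hp2⟩ := hc.exists_walk_length_eq_dist a y
  obtain ⟨q1, hq1⟩ := hc.exists_walk_length_eq_dist x b
  obtain ⟨q2, hq2⟩ := hc.exists_walk_length_eq_dist b y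
  have hwa : (p1.append p2).length = T.dist x y := by
    rw [Walk.length_append]; omega
  have hwb : (q1.append q2).length = T.dist x y := by
    rw [Walk.length_append]; omega
  have hpa : (p1.append p2).IsPath := geo_isPath hc _ hwa
  have hpb : (q1.append q2).IsPath := geo_isPath hc _ hwb
  have h : p1.append p2 = q1.append q2 :=
    Subtype.ext_iff.mp (hT.IsAcyclic.path_unique ⟨p1.append p2, hpa⟩ ⟨q1.append q2, hpb⟩)
  have hamem : a ∈ (q1.append q2).support := by
    rw [← h]
    exact Walk.mem_support_iff_exists_append.mpr ⟨p1, p2, rfl⟩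
  have hbmem : b ∈ (q1.append q2).support := Walk.mem_support_iff_exists_append.mpr ⟨q1, q2, rfl⟩
  obtain ⟨n, hn, hnle⟩ := Walk.mem_support_iff_exists_getVert.mp hamem
  obtain ⟨n', hn', hnle'⟩ := Walk.mem_support_iff_exists_getVert.mp hbmem
  have e1 := (geo_getVert hc _ hwb n hnle).1
  have e2 := (geo_getVert hc _ hwb n' hnle').1
  rw [hn] at e1; rw [hn'] at e2
  have : n = n' := by omega
  rw [← hn, this]
  exact hn'

/-- in a tree, distances to a fixed vertex change by exactly 1 along an edge -/
lemma tree_pm1 (hT : T.IsTree) {a b x : A} (h : T.Adj a b) :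
    T.dist x b = T.dist x a + 1 ∨ T.dist x b + 1 = T.dist x a := by
  have hc := hT.isConnected
  obtain ⟨w, hw⟩ := hc.exists_walk_length_eq_dist x a
  by_cases hmem : b ∈ w.support
  · obtain ⟨n, hn, hnle⟩ := Walk.mem_support_iff_exists_getVert.mp hmem
    obtain ⟨e1, e2⟩ := geo_getVert hc _ hw n hnle
    rw [hn] at e1 e2
    have hba : T.dist b a = 1 := adj_dist_one h.symm
    right
    omega
  · have hcp : (w.concat h).IsPath := by
      rw [← Walk.isPath_reverse_iff, Walk.reverse_concat]
      refine Walk.IsPath.cons ((Walk.isPath_reverse_iff w).mpr (geo_isPath hc _ hw)) ?_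
      rw [Walk.support_reverse, List.mem_reverse]
      exact hmem
    have := tree_path_length hT _ hcp
    rw [Walk.length_concat, hw] at this
    left
    omega

/-- step lemma: in a tree, if a walk step goes away from x, the next one does too -/
lemma tree_step (hT : T.IsTree) {x a b c : A} (hab : T.Adj a b) (hbc : T.Adj b c)
    (hac : a ≠ c) (h : T.dist x b = T.dist x a + 1) : T.dist x c = T.dist x b + 1 := by
  rcases tree_pm1 hT hbc (x := x) with h' | h'
  · omega
  · exfalso
    apply hac
    refine tree_unique hT (x := x) (y := b) ?_ ?_ ?_
    · rw [adj_dist_one hab]; omega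
    · rw [adj_dist_one hbc.symm]; omega
    · omega

/-- going-away lemma: if a geodesic walk starts by moving away from x, it moves away entirely. -/
lemma tree_up (hT : T.IsTree) {y z x : A} (w : T.Walk y z) (hw : w.length = T.dist y z)
    (h1 : T.dist x (w.getVert 1) = T.dist x y + 1) :
    T.dist x z = T.dist x y + w.length := by
  have hc := hT.isConnected
  induction w with
  | nil => simp
  | @cons y v1 z h w' ih =>
    have hd1 : T.dist y v1 ≤ 1 := by
      simpa using SimpleGraph.dist_le (Walk.cons h Walk.nil)
    have htri : T.dist y z ≤ T.dist y v1 + T.dist v1 z := hc.dist_triangle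
    have hle : T.dist v1 z ≤ w'.length := SimpleGraph.dist_le w'
    have hw' : w'.length = T.dist v1 z := by
      simp only [Walk.length_cons] at hw; omega
    simp only [Walk.getVert_cons_succ, Walk.getVert_zero] at h1
    cases w' with
    | nil =>
      simp only [Walk.length_cons, Walk.length_nil]
      simpa using h1
    | @cons v1' v2 z h2 w'' =>
      have hyv2 : y ≠ v2 := by
        have h22 := (geo_getVert hc _ hw 2 (by simp [Walk.length_cons])).1
        simp only [Walk.getVert_cons_succ, Walk.getVert_zero] at h22
        intro hcon
        rw [hcon, SimpleGraph.dist_self] at h22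
        simp at h22
      have hstep : T.dist x v2 = T.dist x v1 + 1 := by
        refine tree_step hT h h2 hyv2 h1
      have := ih hw' (by simpa using hstep)
      simp only [Walk.length_cons] at this ⊢
      omega

/-- existence of medians in trees (walk version) -/
lemma tree_median_walk (hT : T.IsTree) {y z : A} (w : T.Walk y z)
    (hw : w.length = T.dist y z) (x : A) :
    ∃ m, T.dist y m + T.dist m z = T.dist y z ∧
      T.dist x m + T.dist m y = T.dist x y ∧
      T.dist x m + T.dist m z = T.dist x z := by
  have hc := hT.isConnected
  induction w with
  | @nil u =>
    exact ⟨u, by simp [SimpleGraph.dist_self], by simp [SimpleGraph.dist_self],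
      by simp [SimpleGraph.dist_self]⟩
  | @cons y v1 z h w' ih =>
    have hd1 : T.dist y v1 = 1 := adj_dist_one h
    have htri : T.dist y z ≤ T.dist y v1 + T.dist v1 z := hc.dist_triangle
    have hle : T.dist v1 z ≤ w'.length := SimpleGraph.dist_le w'
    have hw' : w'.length = T.dist v1 z := by
      simp only [Walk.length_cons] at hw; omega
    rcases tree_pm1 hT h (x := x) with hup | hdown
    · -- v1 is away from x: the whole walk goes away; median is y
      have hall := tree_up hT (Walk.cons h w') hw (by simpa using hup)
      refine ⟨y, by simp [SimpleGraph.dist_self], by simp [SimpleGraph.dist_self], ?_⟩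
      simp only [Walk.length_cons] at hall hw
      omega
    · -- v1 is towards x
      obtain ⟨m, hm1, hm2, hm3⟩ := ih hw'
      refine ⟨m, ?_, ?_, hm3⟩
      · have t1 : T.dist y m ≤ T.dist y v1 + T.dist v1 m := hc.dist_triangle
        have t2 : T.dist y z ≤ T.dist y m + T.dist m z := hc.dist_triangle
        have c1 : T.dist v1 m = T.dist m v1 := SimpleGraph.dist_comm
        simp only [Walk.length_cons] at hw
        omega
      · have t1 : T.dist m y ≤ T.dist m v1 + T.dist v1 y := hc.dist_triangle
        have t2 : T.dist x y ≤ T.dist x m + T.dist m y := hc.dist_triangle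
        have c1 : T.dist v1 y = T.dist y v1 := SimpleGraph.dist_comm
        omega

/-- existence of medians in trees -/
lemma tree_median (hT : T.IsTree) (x y z : A) :
    ∃ m, T.dist x m + T.dist m y = T.dist x y ∧
      T.dist y m + T.dist m z = T.dist y z ∧
      T.dist x m + T.dist m z = T.dist x z := by
  obtain ⟨w, hw⟩ := hT.isConnected.exists_walk_length_eq_dist y z
  obtain ⟨m, h1, h2, h3⟩ := tree_median_walk hT w hw x
  have c1 : T.dist m y = T.dist y m := SimpleGraph.dist_comm
  exact ⟨m, by omega, h1, h3⟩

/-- uniqueness of medians in trees -/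
lemma tree_median_unique (hT : T.IsTree) {x y z p q : A}
    (hp1 : T.dist x p + T.dist p y = T.dist x y)
    (hp2 : T.dist y p + T.dist p z = T.dist y z)
    (hp3 : T.dist x p + T.dist p z = T.dist x z)
    (hq1 : T.dist x q + T.dist q y = T.dist x y)
    (hq2 : T.dist y q + T.dist q z = T.dist y z)
    (hq3 : T.dist x q + T.dist q z = T.dist x z) : p = q := by
  have c1 : T.dist p y = T.dist y p := SimpleGraph.dist_comm
  have c2 : T.dist q y = T.dist y q := SimpleGraph.dist_comm
  exact tree_unique hT hp1 hq1 (by omega)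

/-- direction uniqueness: a neighbour of x inside I(x,y) is on the geodesic towards
any m ∈ I(x,y), m ≠ x. -/
lemma tree_dir (hT : T.IsTree) {x y m a : A}
    (hm : T.dist x m + T.dist m y = T.dist x y) (hxm : x ≠ m)
    (ha : T.Adj x a) (haI : T.dist x a + T.dist a y = T.dist x y) :
    T.dist x a + T.dist a m = T.dist x m := by
  have hc := hT.isConnected
  obtain ⟨g, hg, hgI⟩ := exists_second hc hxm
  have t1 : T.dist g y ≤ T.dist g m + T.dist m y := hc.dist_triangle
  have t2 : T.dist x y ≤ T.dist x g + T.dist g y := hc.dist_triangle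
  have hgI' : T.dist x g + T.dist g y = T.dist x y := by omega
  have hag : a = g := tree_unique hT haI hgI' (by rw [adj_dist_one ha, adj_dist_one hg])
  rw [hag]
  exact hgI

end Tree

section Prod
variable {A B : Type} {T1 : SimpleGraph A} {T2 : SimpleGraph B}

lemma boxProd_walk_ge (hc1 : T1.Connected) (hc2 : T2.Connected) :
    ∀ {p q : A × B} (w : (T1 □ T2).Walk p q),
      T1.dist p.1 q.1 + T2.dist p.2 q.2 ≤ w.length := by
  intro p q w
  induction w with
  | nil => simp [SimpleGraph.dist_self]
  | @cons p v q h w' ih =>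
    have t1 : T1.dist p.1 q.1 ≤ T1.dist p.1 v.1 + T1.dist v.1 q.1 := hc1.dist_triangle
    have t2 : T2.dist p.2 q.2 ≤ T2.dist p.2 v.2 + T2.dist v.2 q.2 := hc2.dist_triangle
    rcases SimpleGraph.boxProd_adj.mp h with ⟨h1, h2⟩ | ⟨h1, h2⟩
    · have e1 : T1.dist p.1 v.1 = 1 := adj_dist_one h1
      have e2 : T2.dist p.2 v.2 = 0 := by rw [h2, SimpleGraph.dist_self]
      simp only [Walk.length_cons]
      omega
    · have e1 : T2.dist p.2 v.2 = 1 := adj_dist_one h1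
      have e2 : T1.dist p.1 v.1 = 0 := by rw [h2, SimpleGraph.dist_self]
      simp only [Walk.length_cons]
      omega

lemma boxProd_dist (hc1 : T1.Connected) (hc2 : T2.Connected) (p q : A × B) :
    (T1 □ T2).dist p q = T1.dist p.1 q.1 + T2.dist p.2 q.2 := by
  refine le_antisymm ?_ ?_
  · obtain ⟨w1, hw1⟩ := hc1.exists_walk_length_eq_dist p.1 q.1
    obtain ⟨w2, hw2⟩ := hc2.exists_walk_length_eq_dist p.2 q.2
    have hwalk : ((w1.boxProdLeft T2 p.2).append (w2.boxProdRight T1 q.1)).length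
        = T1.dist p.1 q.1 + T2.dist p.2 q.2 := by
      have a1 : (w1.boxProdLeft T2 p.2).length = w1.length := Walk.length_map _ _
      have a2 : (w2.boxProdRight T1 q.1).length = w2.length := Walk.length_map _ _
      rw [Walk.length_append, a1, a2, hw1, hw2]
    calc (T1 □ T2).dist p q = (T1 □ T2).dist (p.1, p.2) (q.1, q.2) := by simp
    _ ≤ _ := SimpleGraph.dist_le ((w1.boxProdLeft T2 p.2).append (w2.boxProdRight T1 q.1))
    _ = _ := hwalk
  · obtain ⟨w, hw⟩ := ((hc1.boxProd hc2).exists_walk_length_eq_dist p q)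
    rw [← hw]
    exact boxProd_walk_ge hc1 hc2 w

/-- betweenness in the box product descends to components -/
lemma boxProd_between (hc1 : T1.Connected) (hc2 : T2.Connected) {p c q : A × B}
    (h : (T1 □ T2).dist p c + (T1 □ T2).dist c q = (T1 □ T2).dist p q) :
    (T1.dist p.1 c.1 + T1.dist c.1 q.1 = T1.dist p.1 q.1) ∧
    (T2.dist p.2 c.2 + T2.dist c.2 q.2 = T2.dist p.2 q.2) := by
  rw [boxProd_dist hc1 hc2, boxProd_dist hc1 hc2, boxProd_dist hc1 hc2] at h
  have t1 : T1.dist p.1 q.1 ≤ T1.dist p.1 c.1 + T1.dist c.1 q.1 := hc1.dist_triangle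
  have t2 : T2.dist p.2 q.2 ≤ T2.dist p.2 c.2 + T2.dist c.2 q.2 := hc2.dist_triangle
  omega

/-- first move in the second factor along a geodesic in a product of two trees -/
lemma ffm (h1 : T1.IsTree) (h2 : T2.IsTree) :
    ∀ {x y : A × B} (w : (T1 □ T2).Walk x y),
      w.length = (T1 □ T2).dist x y → x.2 ≠ y.2 →
      ∃ s1 β, (s1, β) ∈ w.support ∧
        (T1.dist x.1 s1 + T1.dist s1 y.1 = T1.dist x.1 y.1) ∧
        T2.Adj x.2 β ∧ (T2.dist x.2 β + T2.dist β y.2 = T2.dist x.2 y.2) := by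
  have hc1 := h1.isConnected
  have hc2 := h2.isConnected
  have hc : (T1 □ T2).Connected := hc1.boxProd hc2
  intro x y w
  induction w with
  | nil => intro _ hne; exact absurd rfl hne
  | @cons x v y h w' ih =>
    intro hw hne
    have hd1 : (T1 □ T2).dist x v = 1 := adj_dist_one h
    have htri : (T1 □ T2).dist x y ≤ (T1 □ T2).dist x v + (T1 □ T2).dist v y :=
      hc.dist_triangle
    have hle : (T1 □ T2).dist v y ≤ w'.length := SimpleGraph.dist_le w'
    have hw' : w'.length = (T1 □ T2).dist v y := by
      simp only [Walk.length_cons] at hw; omega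
    have hvI : (T1 □ T2).dist x v + (T1 □ T2).dist v y = (T1 □ T2).dist x y := by
      simp only [Walk.length_cons] at hw; omega
    obtain ⟨hvI1, hvI2⟩ := boxProd_between hc1 hc2 hvI
    rcases SimpleGraph.boxProd_adj.mp h with ⟨ha1, ha2⟩ | ⟨ha1, ha2⟩
    · -- first move in factor 1
      have hne' : v.2 ≠ y.2 := by rw [← ha2]; exact hne
      obtain ⟨s1, β, hmem, hI1, hadj, hI2⟩ := ih hw' hne'
      refine ⟨s1, β, ?_, ?_, ?_, ?_⟩
      · rw [Walk.support_cons]; exact List.mem_cons_of_mem _ hmem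
      · exact (between_trans hc1 hvI1 hI1).1
      · rw [ha2]; exact hadj
      · rw [ha2]
        have e : T2.dist x.2 v.2 = 0 := by rw [ha2, SimpleGraph.dist_self]
        rw [ha2] at e hvI2
        omega
    · -- first move in factor 2
      refine ⟨v.1, v.2, ?_, ?_, ?_, ?_⟩
      · rw [Walk.support_cons]
        exact List.mem_cons_of_mem _ (by simpa using Walk.start_mem_support w')
      · rw [ha2] at hvI1 ⊢
        have e : T1.dist v.1 v.1 = 0 := SimpleGraph.dist_self
        have : T1.dist x.1 v.1 = 0 := by rw [ha2, SimpleGraph.dist_self]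
        omega
      · exact ha1
      · exact hvI2

/-- a geodesic between two vertices with the same second coordinate passes through
`(x1, c)` for any `x1` between the first coordinates -/
lemma pass (h1 : T1.IsTree) (h2 : T2.IsTree) {x1 : A} :
    ∀ {p q : A × B} (w : (T1 □ T2).Walk p q),
      w.length = (T1 □ T2).dist p q → p.2 = q.2 →
      T1.dist p.1 x1 + T1.dist x1 q.1 = T1.dist p.1 q.1 →
      (x1, p.2) ∈ w.support := by
  have hc1 := h1.isConnected
  have hc2 := h2.isConnected
  have hc : (T1 □ T2).Connected := hc1.boxProd hc2
  intro p q w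
  induction w with
  | @nil u =>
    intro _ h2eq hx
    rw [SimpleGraph.dist_self] at hx
    have : T1.dist u.1 x1 = 0 := by omega
    have hx1 : u.1 = x1 := (hc1.dist_eq_zero_iff).mp this
    rw [← hx1]
    simp
  | @cons p v q h w' ih =>
    intro hw h2eq hx
    by_cases hx1 : x1 = p.1
    · rw [hx1]
      simp
    · have hd1 : (T1 □ T2).dist p v = 1 := adj_dist_one h
      have htri : (T1 □ T2).dist p q ≤ (T1 □ T2).dist p v + (T1 □ T2).dist v q :=
        hc.dist_triangle
      have hle : (T1 □ T2).dist v q ≤ w'.length := SimpleGraph.dist_le w'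
      have hw' : w'.length = (T1 □ T2).dist v q := by
        simp only [Walk.length_cons] at hw; omega
      have hvI : (T1 □ T2).dist p v + (T1 □ T2).dist v q = (T1 □ T2).dist p q := by
        simp only [Walk.length_cons] at hw; omega
      obtain ⟨hvI1, hvI2⟩ := boxProd_between hc1 hc2 hvI
      have hv2 : v.2 = p.2 := by
        rw [h2eq] at hvI2 ⊢
        rw [SimpleGraph.dist_self] at hvI2
        have h0 : T2.dist q.2 v.2 = 0 := by omega
        exact ((hc2.dist_eq_zero_iff).mp h0).symm
      have hadj1 : T1.Adj p.1 v.1 := by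
        rcases SimpleGraph.boxProd_adj.mp h with ⟨ha1, _⟩ | ⟨ha1, ha2⟩
        · exact ha1
        · rw [hv2] at ha1; exact absurd ha1 (T2.irrefl)
      have hdir := tree_dir h1 (x := p.1) (y := q.1) (m := x1) (a := v.1)
        hx (fun hcon => hx1 hcon.symm) hadj1 hvI1
      have hd11 : T1.dist p.1 v.1 = 1 := adj_dist_one hadj1
      have hx' : T1.dist v.1 x1 + T1.dist x1 q.1 = T1.dist v.1 q.1 := by omega
      have h2eq' : v.2 = q.2 := by rw [hv2, h2eq]
      have := ih hw' h2eq' hx'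
      rw [hv2] at this
      rw [Walk.support_cons]
      exact List.mem_cons_of_mem _ this

end Prod

section Claims
variable {V A B : Type} {G : SimpleGraph V} {T1 : SimpleGraph A} {T2 : SimpleGraph B}
  {f : V → A × B}

lemma emb_adj (hf : IsIsometricEmbedding G (T1 □ T2) f) {a b : V} (h : G.Adj a b) :
    (T1 □ T2).Adj (f a) (f b) := by
  have : (T1 □ T2).dist (f a) (f b) = 1 := by rw [hf]; exact adj_dist_one h
  exact SimpleGraph.dist_eq_one_iff_adj.mp this

/-- the embedding as a graph homomorphism -/
def embHom (hf : IsIsometricEmbedding G (T1 □ T2) f) : G →g (T1 □ T2) :=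
  ⟨f, fun h => emb_adj hf h⟩

lemma claimA (hG : G.Connected) (h1 : T1.IsTree) (h2 : T2.IsTree)
    (hf : IsIsometricEmbedding G (T1 □ T2) f) {u v : V} {m : A × B}
    (hm1 : (T1 □ T2).dist (f u) m + (T1 □ T2).dist m (f v) = (T1 □ T2).dist (f u) (f v))
    (hne1 : (f u).1 ≠ m.1) (hne2 : (f u).2 ≠ m.2) :
    ∃ r, (T1 □ T2).dist (f u) (f r) + (T1 □ T2).dist (f r) m = (T1 □ T2).dist (f u) m
      ∧ f r ≠ f u := by
  have hfd : ∀ x y, (T1 □ T2).dist (f x) (f y) = G.dist x y := hf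
  have hc1 := h1.isConnected
  have hc2 := h2.isConnected
  have hc : (T1 □ T2).Connected := hc1.boxProd hc2
  obtain ⟨hm11, hm12⟩ := boxProd_between hc1 hc2 hm1
  have huv : u ≠ v := by
    intro e
    rw [e, SimpleGraph.dist_self] at hm1
    have h0 : (T1 □ T2).dist (f v) m = 0 := by omega
    have := (hc.dist_eq_zero_iff).mp h0
    rw [← e] at this
    exact hne1 (congrArg Prod.fst this)
  obtain ⟨a, hadj, hbet⟩ := exists_second hG huv
  have hbetP : (T1 □ T2).dist (f u) (f a) + (T1 □ T2).dist (f a) (f v)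
      = (T1 □ T2).dist (f u) (f v) := by
    rw [hfd, hfd, hfd]; exact hbet
  obtain ⟨hA1, hA2⟩ := boxProd_between hc1 hc2 hbetP
  have hadjP : (T1 □ T2).Adj (f u) (f a) := emb_adj hf hadj
  refine ⟨a, ?_, hadjP.ne.symm⟩
  rw [boxProd_dist hc1 hc2, boxProd_dist hc1 hc2, boxProd_dist hc1 hc2]
  rcases SimpleGraph.boxProd_adj.mp hadjP with ⟨hb1, hb2⟩ | ⟨hb1, hb2⟩
  · have hdir := tree_dir h1 hm11 hne1 hb1 hA1
    have e0 : T2.dist (f u).2 (f a).2 = 0 := by rw [hb2, SimpleGraph.dist_self]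
    have e1 : T2.dist (f a).2 m.2 = T2.dist (f u).2 m.2 := by rw [← hb2]
    omega
  · have hdir := tree_dir h2 hm12 hne2 hb1 hA2
    have e0 : T1.dist (f u).1 (f a).1 = 0 := by rw [hb2, SimpleGraph.dist_self]
    have e1 : T1.dist (f a).1 m.1 = T1.dist (f u).1 m.1 := by rw [← hb2]
    omega

lemma claimB (hG : G.Connected) (h1 : T1.IsTree) (h2 : T2.IsTree)
    (hf : IsIsometricEmbedding G (T1 □ T2) f) {u v w : V} {m : A × B}
    (hm1 : (T1 □ T2).dist (f u) m + (T1 □ T2).dist m (f v) = (T1 □ T2).dist (f u) (f v))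
    (hm2 : (T1 □ T2).dist (f v) m + (T1 □ T2).dist m (f w) = (T1 □ T2).dist (f v) (f w))
    (hm3 : (T1 □ T2).dist (f u) m + (T1 □ T2).dist m (f w) = (T1 □ T2).dist (f u) (f w))
    (heq1 : (f u).1 = m.1) (hne2 : (f u).2 ≠ m.2) :
    ∃ r, (T1 □ T2).dist (f u) (f r) + (T1 □ T2).dist (f r) m = (T1 □ T2).dist (f u) m
      ∧ f r ≠ f u := by
  have hfd : ∀ x y, (T1 □ T2).dist (f x) (f y) = G.dist x y := hf
  have hcoe : ⇑(embHom hf) = f := rfl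
  have hc1 := h1.isConnected
  have hc2 := h2.isConnected
  have hc : (T1 □ T2).Connected := hc1.boxProd hc2
  obtain ⟨c11, c12⟩ := boxProd_between hc1 hc2 hm1
  obtain ⟨c21, c22⟩ := boxProd_between hc1 hc2 hm2
  obtain ⟨c31, c32⟩ := boxProd_between hc1 hc2 hm3
  have hxy2 : (f u).2 ≠ (f v).2 := by
    intro e
    have h0 : T2.dist (f u).2 (f v).2 = 0 := by rw [e, SimpleGraph.dist_self]
    have h1 : T2.dist (f u).2 m.2 = 0 := by omega
    exact hne2 ((hc2.dist_eq_zero_iff).mp h1)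
  have hxz2 : (f u).2 ≠ (f w).2 := by
    intro e
    have h0 : T2.dist (f u).2 (f w).2 = 0 := by rw [e, SimpleGraph.dist_self]
    have h1 : T2.dist (f u).2 m.2 = 0 := by omega
    exact hne2 ((hc2.dist_eq_zero_iff).mp h1)
  have huv : u ≠ v := fun e => hxy2 (by rw [e])
  have huw : u ≠ w := fun e => hxz2 (by rw [e])
  -- geodesic from u to v, mapped into the product
  obtain ⟨wuv, hwuv⟩ := hG.exists_walk_length_eq_dist u v
  have hWuv : (wuv.map (embHom hf)).length = (T1 □ T2).dist (f u) (f v) := by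
    rw [Walk.length_map, hwuv, hfd]
  obtain ⟨s1, β, hmem, hs1, hβadj, hβI⟩ := ffm h1 h2 (wuv.map (embHom hf)) hWuv hxy2
  rw [Walk.support_map] at hmem
  rw [hcoe] at hmem hs1 hβadj hβI
  obtain ⟨p', _, hfp'⟩ := List.mem_map.mp hmem
  -- geodesic from u to w, mapped into the product
  obtain ⟨wuw, hwuw⟩ := hG.exists_walk_length_eq_dist u w
  have hWuw : (wuw.map (embHom hf)).length = (T1 □ T2).dist (f u) (f w) := by
    rw [Walk.length_map, hwuw, hfd]
  obtain ⟨t1, β', hmem', ht1, hβ'adj, hβ'I⟩ := ffm h1 h2 (wuw.map (embHom hf)) hWuw hxz2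
  rw [Walk.support_map] at hmem'
  rw [hcoe] at hmem' ht1 hβ'adj hβ'I
  obtain ⟨q', _, hfq'⟩ := List.mem_map.mp hmem'
  -- the two first steps in factor 2 agree
  have hβm : T2.dist (f u).2 β + T2.dist β m.2 = T2.dist (f u).2 m.2 :=
    tree_dir h2 c12 hne2 hβadj hβI
  have hβ'm : T2.dist (f u).2 β' + T2.dist β' m.2 = T2.dist (f u).2 m.2 :=
    tree_dir h2 c32 hne2 hβ'adj hβ'I
  have hββ' : β = β' := tree_unique h2 hβm hβ'm
    (by rw [adj_dist_one hβadj, adj_dist_one hβ'adj])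
  -- (f u).1 is between s1 and t1 in T1
  have hyz1 : T1.dist (f v).1 (f u).1 + T1.dist (f u).1 (f w).1
      = T1.dist (f v).1 (f w).1 := by rw [heq1]; exact c21
  have hmid : T1.dist s1 (f u).1 + T1.dist (f u).1 t1 = T1.dist s1 t1 :=
    between_mid hc1 hyz1 hs1 ht1
  -- geodesic from p' to q', mapped into the product
  obtain ⟨wpq, hwpq⟩ := hG.exists_walk_length_eq_dist p' q'
  have hWpq : (wpq.map (embHom hf)).length = (T1 □ T2).dist (f p') (f q') := by
    rw [Walk.length_map, hwpq, hfd]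
  have hsnd : (f p').2 = (f q').2 := by rw [hfp', hfq', ← hββ']
  have hfst : T1.dist (f p').1 (f u).1 + T1.dist (f u).1 (f q').1
      = T1.dist (f p').1 (f q').1 := by rw [hfp', hfq']; exact hmid
  have hpass := pass h1 h2 (wpq.map (embHom hf)) hWpq hsnd hfst
  rw [Walk.support_map, hcoe] at hpass
  obtain ⟨r, _, hfr⟩ := List.mem_map.mp hpass
  have hfr' : f r = ((f u).1, β) := by rw [hfr, hfp']
  refine ⟨r, ?_, ?_⟩
  · rw [boxProd_dist hc1 hc2, boxProd_dist hc1 hc2, boxProd_dist hc1 hc2, hfr']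
    have e0 : T1.dist (f u).1 m.1 = 0 := by rw [heq1, SimpleGraph.dist_self]
    have e1 : T1.dist (f u).1 (((f u).1, β) : A × B).1 = 0 := SimpleGraph.dist_self
    have e2 : T1.dist (((f u).1, β) : A × B).1 m.1 = 0 := by
      show T1.dist (f u).1 m.1 = 0; exact e0
    have e3 : T2.dist (f u).2 (((f u).1, β) : A × B).2 + T2.dist (((f u).1, β) : A × B).2 m.2
        = T2.dist (f u).2 m.2 := hβm
    omega
  · intro e
    rw [hfr'] at e
    exact hβadj.ne (congrArg Prod.snd e.symm)

lemma claimFull (hG : G.Connected) (h1 : T1.IsTree) (h2 : T2.IsTree)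
    (hf : IsIsometricEmbedding G (T1 □ T2) f) {u v w : V} {m : A × B}
    (hm1 : (T1 □ T2).dist (f u) m + (T1 □ T2).dist m (f v) = (T1 □ T2).dist (f u) (f v))
    (hm2 : (T1 □ T2).dist (f v) m + (T1 □ T2).dist m (f w) = (T1 □ T2).dist (f v) (f w))
    (hm3 : (T1 □ T2).dist (f u) m + (T1 □ T2).dist m (f w) = (T1 □ T2).dist (f u) (f w))
    (hne : f u ≠ m) :
    ∃ r, (T1 □ T2).dist (f u) (f r) + (T1 □ T2).dist (f r) m = (T1 □ T2).dist (f u) m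
      ∧ f r ≠ f u := by
  have hc1 := h1.isConnected
  have hc2 := h2.isConnected
  by_cases hne2 : (f u).2 ≠ m.2
  · by_cases hne1 : (f u).1 ≠ m.1
    · exact claimA hG h1 h2 hf hm1 hne1 hne2
    · exact claimB hG h1 h2 hf hm1 hm2 hm3 (not_not.mp hne1) hne2
  · have heq2 : (f u).2 = m.2 := not_not.mp hne2
    have hne1 : (f u).1 ≠ m.1 := by
      intro e
      exact hne (Prod.ext e heq2)
    -- swap the two factors
    set f' : V → B × A := fun t => ((f t).2, (f t).1) with hf'def
    have hf' : IsIsometricEmbedding G (T2 □ T1) f' := by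
      intro a b
      rw [show f' a = ((f a).2, (f a).1) from rfl, show f' b = ((f b).2, (f b).1) from rfl]
      rw [boxProd_dist hc2 hc1, ← hf a b, boxProd_dist hc1 hc2]
      exact Nat.add_comm _ _
    have key : ∀ (p q : A × B), (T2 □ T1).dist (p.2, p.1) (q.2, q.1) = (T1 □ T2).dist p q := by
      intro p q
      rw [boxProd_dist hc2 hc1, boxProd_dist hc1 hc2]
      exact Nat.add_comm _ _
    have hm1' : (T2 □ T1).dist (f' u) (m.2, m.1) + (T2 □ T1).dist (m.2, m.1) (f' v)
        = (T2 □ T1).dist (f' u) (f' v) := by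
      rw [show f' u = ((f u).2, (f u).1) from rfl, show f' v = ((f v).2, (f v).1) from rfl,
        key (f u) m, key m (f v), key (f u) (f v)]
      exact hm1
    have hm2' : (T2 □ T1).dist (f' v) (m.2, m.1) + (T2 □ T1).dist (m.2, m.1) (f' w)
        = (T2 □ T1).dist (f' v) (f' w) := by
      rw [show f' v = ((f v).2, (f v).1) from rfl, show f' w = ((f w).2, (f w).1) from rfl,
        key (f v) m, key m (f w), key (f v) (f w)]
      exact hm2
    have hm3' : (T2 □ T1).dist (f' u) (m.2, m.1) + (T2 □ T1).dist (m.2, m.1) (f' w)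
        = (T2 □ T1).dist (f' u) (f' w) := by
      rw [show f' u = ((f u).2, (f u).1) from rfl, show f' w = ((f w).2, (f w).1) from rfl,
        key (f u) m, key m (f w), key (f u) (f w)]
      exact hm3
    have heq1' : (f' u).1 = (m.2, m.1).1 := heq2
    have hne2' : (f' u).2 ≠ (m.2, m.1).2 := hne1
    obtain ⟨r, hr, hrne⟩ := claimB hG h2 h1 hf' hm1' hm2' hm3' heq1' hne2'
    refine ⟨r, ?_, ?_⟩
    · rw [show f' u = ((f u).2, (f u).1) from rfl, show f' r = ((f r).2, (f r).1) from rfl,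
        key (f u) (f r), key (f r) m, key (f u) m] at hr
      exact hr
    · intro e
      exact hrne (by rw [hf'def]; simp only; rw [e])

end Claims

section Main
variable {V A B : Type} {G : SimpleGraph V} {T1 : SimpleGraph A} {T2 : SimpleGraph B}
  {f : V → A × B}

lemma exists_median_preimage (hG : G.Connected) (h1 : T1.IsTree) (h2 : T2.IsTree)
    (hf : IsIsometricEmbedding G (T1 □ T2) f) :
    ∀ (n : ℕ) (u v w : V) (m : A × B),
      (T1 □ T2).dist (f u) m + (T1 □ T2).dist m (f v) = (T1 □ T2).dist (f u) (f v) →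
      (T1 □ T2).dist (f v) m + (T1 □ T2).dist m (f w) = (T1 □ T2).dist (f v) (f w) →
      (T1 □ T2).dist (f u) m + (T1 □ T2).dist m (f w) = (T1 □ T2).dist (f u) (f w) →
      (T1 □ T2).dist (f u) m + (T1 □ T2).dist (f v) m + (T1 □ T2).dist (f w) m = n →
      ∃ t : V, f t = m := by
  have hc : (T1 □ T2).Connected := h1.isConnected.boxProd h2.isConnected
  intro n
  induction n using Nat.strong_induction_on with
  | _ n ih =>
    intro u v w m hm1 hm2 hm3 hsum
    by_cases hx : f u = m
    · exact ⟨u, hx⟩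
    · obtain ⟨r, hr, hrne⟩ := claimFull hG h1 h2 hf hm1 hm2 hm3 hx
      have t1 : (T1 □ T2).dist (f r) (f v) ≤
          (T1 □ T2).dist (f r) m + (T1 □ T2).dist m (f v) := hc.dist_triangle
      have t2 : (T1 □ T2).dist (f u) (f v) ≤
          (T1 □ T2).dist (f u) (f r) + (T1 □ T2).dist (f r) (f v) := hc.dist_triangle
      have hm1' : (T1 □ T2).dist (f r) m + (T1 □ T2).dist m (f v)
          = (T1 □ T2).dist (f r) (f v) := by omega
      have t3 : (T1 □ T2).dist (f r) (f w) ≤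
          (T1 □ T2).dist (f r) m + (T1 □ T2).dist m (f w) := hc.dist_triangle
      have t4 : (T1 □ T2).dist (f u) (f w) ≤
          (T1 □ T2).dist (f u) (f r) + (T1 □ T2).dist (f r) (f w) := hc.dist_triangle
      have hm3' : (T1 □ T2).dist (f r) m + (T1 □ T2).dist m (f w)
          = (T1 □ T2).dist (f r) (f w) := by omega
      have hpos : 0 < (T1 □ T2).dist (f u) (f r) :=
        hc.pos_dist_of_ne (fun e => hrne e.symm)
      exact ih ((T1 □ T2).dist (f r) m + (T1 □ T2).dist (f v) m + (T1 □ T2).dist (f w) m)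
        (by omega) r v w m hm1' hm2 hm3' rfl

/-- Every connected graph that admits an isometric embedding into the Cartesian
product of two trees is a median graph. -/
theorem partialDoubleTree_isMedian {V : Type} (G : SimpleGraph V)
    (hG : G.Connected) (h : EmbedsInTwoTrees G) : IsMedianGraph G := by
  obtain ⟨A, B, T1, T2, h1, h2, f, hf⟩ := h
  have hfd : ∀ x y, (T1 □ T2).dist (f x) (f y) = G.dist x y := hf
  have hc1 := h1.isConnected
  have hc2 := h2.isConnected
  have hc : (T1 □ T2).Connected := hc1.boxProd hc2
  refine ⟨hG, fun u v w => ?_⟩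
  obtain ⟨m1, e11, e12, e13⟩ := tree_median h1 (f u).1 (f v).1 (f w).1
  obtain ⟨m2, e21, e22, e23⟩ := tree_median h2 (f u).2 (f v).2 (f w).2
  have hm1 : (T1 □ T2).dist (f u) (m1, m2) + (T1 □ T2).dist (m1, m2) (f v)
      = (T1 □ T2).dist (f u) (f v) := by
    rw [boxProd_dist hc1 hc2, boxProd_dist hc1 hc2, boxProd_dist hc1 hc2]
    dsimp only
    omega
  have hm2 : (T1 □ T2).dist (f v) (m1, m2) + (T1 □ T2).dist (m1, m2) (f w)
      = (T1 □ T2).dist (f v) (f w) := by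
    rw [boxProd_dist hc1 hc2, boxProd_dist hc1 hc2, boxProd_dist hc1 hc2]
    dsimp only
    omega
  have hm3 : (T1 □ T2).dist (f u) (m1, m2) + (T1 □ T2).dist (m1, m2) (f w)
      = (T1 □ T2).dist (f u) (f w) := by
    rw [boxProd_dist hc1 hc2, boxProd_dist hc1 hc2, boxProd_dist hc1 hc2]
    dsimp only
    omega
  obtain ⟨t, ht⟩ := exists_median_preimage hG h1 h2 hf _ u v w (m1, m2) hm1 hm2 hm3 rfl
  refine ⟨t, ⟨?_, ?_, ?_⟩, ?_⟩
  · show G.dist u t + G.dist t v = G.dist u v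
    rw [← hfd u t, ← hfd t v, ← hfd u v, ht]
    exact hm1
  · show G.dist v t + G.dist t w = G.dist v w
    rw [← hfd v t, ← hfd t w, ← hfd v w, ht]
    exact hm2
  · show G.dist u t + G.dist t w = G.dist u w
    rw [← hfd u t, ← hfd t w, ← hfd u w, ht]
    exact hm3
  · rintro t' ⟨d1, d2, d3⟩
    have k1 : (T1 □ T2).dist (f u) (f t') + (T1 □ T2).dist (f t') (f v)
        = (T1 □ T2).dist (f u) (f v) := by rw [hfd, hfd, hfd]; exact d1
    have k2 : (T1 □ T2).dist (f v) (f t') + (T1 □ T2).dist (f t') (f w)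
        = (T1 □ T2).dist (f v) (f w) := by rw [hfd, hfd, hfd]; exact d2
    have k3 : (T1 □ T2).dist (f u) (f t') + (T1 □ T2).dist (f t') (f w)
        = (T1 □ T2).dist (f u) (f w) := by rw [hfd, hfd, hfd]; exact d3
    obtain ⟨k11, k12⟩ := boxProd_between hc1 hc2 k1
    obtain ⟨k21, k22⟩ := boxProd_between hc1 hc2 k2
    obtain ⟨k31, k32⟩ := boxProd_between hc1 hc2 k3
    have hfst : (f t').1 = m1 := tree_median_unique h1 k11 k21 k31 e11 e12 e13
    have hsnd : (f t').2 = m2 := tree_median_unique h2 k12 k22 k32 e21 e22 e23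
    have hft' : f t' = f t := by rw [ht]; exact Prod.ext hfst hsnd
    have h0 : G.dist t' t = 0 := by
      rw [← hfd t' t, hft', SimpleGraph.dist_self]
    exact hG.dist_eq_zero_iff.mp h0

end Main
end

section
/- A median graph G with at least three vertices is 2-connected if and only if the link Link(x) is connected for every vertex x of G. -/
open SimpleGraph

/-- The link of a vertex `x` in `G`: its vertices are the neighbors of `x`, two
neighbors `y, z` being adjacent iff `y ≠ z` and there is a vertex `w ≠ x`
adjacent to both `y` and `z` (so that `x, y, w, z` span a 4-cycle). -/
def Link {V : Type} (G : SimpleGraph V) (x : V) :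
    SimpleGraph {y : V // G.Adj x y} :=
  SimpleGraph.fromRel
    (fun y z => ∃ w : V, w ≠ x ∧ G.Adj (y : V) w ∧ G.Adj (z : V) w)

/-- A graph (with at least three vertices) is 2-connected if it is connected
and remains connected after deletion of any single vertex. -/
def TwoConnected {V : Type} (G : SimpleGraph V) : Prop :=
  G.Connected ∧ ∀ v : V, (G.induce {u | u ≠ v}).Connected

section Aux
variable {V : Type} {G : SimpleGraph V}

/-- interval of an edge is just the endpoints -/
lemma interval_edge (hc : G.Connected) {p q z : V} (h : G.Adj p q)
    (hz : z ∈ gInterval G p q) : z = p ∨ z = q := by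
  have hpq : G.dist p q = 1 := dist_eq_one_iff_adj.mpr h
  have := hz
  simp only [gInterval, Set.mem_setOf_eq, hpq] at this
  rcases Nat.add_eq_one_iff.mp this with ⟨h1, _⟩ | ⟨_, h2⟩
  · exact Or.inl ((hc.dist_eq_zero_iff.mp h1).symm)
  · exact Or.inr (hc.dist_eq_zero_iff.mp h2)

/-- along an edge, distances to any vertex differ by exactly 1 -/
lemma median_dist_step (hG : IsMedianGraph G) (x : V) {p q : V} (h : G.Adj p q) :
    G.dist x q = G.dist x p + 1 ∨ G.dist x p = G.dist x q + 1 := by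
  obtain ⟨hc, hmed⟩ := hG
  obtain ⟨m, ⟨hm1, hm2, hm3⟩, -⟩ := hmed p q x
  have hpq : G.dist p q = 1 := dist_eq_one_iff_adj.mpr h
  have cqp : G.dist q p = G.dist p q := SimpleGraph.dist_comm
  have cpx : G.dist p x = G.dist x p := SimpleGraph.dist_comm
  have cqx : G.dist q x = G.dist x q := SimpleGraph.dist_comm
  rcases interval_edge hc h hm1 with h1 | h1
  · left
    have h2 : G.dist q m + G.dist m x = G.dist q x := hm2
    rw [h1] at h2
    omega
  · right
    have h2 : G.dist p m + G.dist m x = G.dist p x := hm3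
    rw [h1] at h2
    omega

/-- gate: for p ≠ x there is a neighbor of x on a geodesic to p -/
lemma exists_gate (hc : G.Connected) {x p : V} (hne : p ≠ x) :
    ∃ n : V, G.Adj x n ∧ n ∈ gInterval G x p := by
  have hd : 0 < G.dist x p := hc.pos_dist_of_ne (Ne.symm hne)
  obtain ⟨W, hW⟩ := hc.exists_walk_length_eq_dist x p
  cases W with
  | nil => simp at hd
  | cons hadj W' =>
    rename_i n
    refine ⟨n, hadj, ?_⟩
    have h1 : G.dist x n ≤ 1 := by
      have := SimpleGraph.dist_le (SimpleGraph.Walk.cons hadj SimpleGraph.Walk.nil)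
      simpa using this
    have h2 : G.dist n p ≤ W'.length := SimpleGraph.dist_le W'
    have h3 : G.dist x p ≤ G.dist x n + G.dist n p := hc.dist_triangle
    have h4 : W'.length + 1 = G.dist x p := by simpa [SimpleGraph.Walk.length_cons] using hW
    simp only [gInterval, Set.mem_setOf_eq]
    omega

/-- interval monotone along an edge going away from x -/
lemma interval_mono (hc : G.Connected) {x p q z : V} (h : G.Adj p q)
    (hd : G.dist x q = G.dist x p + 1) (hz : z ∈ gInterval G x p) :
    z ∈ gInterval G x q := by
  simp only [gInterval, Set.mem_setOf_eq] at hz ⊢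
  have h1 : G.dist z q ≤ G.dist z p + 1 := by
    have := hc.dist_triangle (u := z) (v := p) (w := q)
    rw [dist_eq_one_iff_adj.mpr h] at this
    omega
  have h2 : G.dist x q ≤ G.dist x z + G.dist z q := hc.dist_triangle
  omega

/-- key lemma: two distinct neighbors of x in a common interval I(x,p) are
adjacent in the link -/
lemma link_adj_of_common_interval (hG : IsMedianGraph G) {x p n n' : V}
    (hn : G.Adj x n) (hn' : G.Adj x n') (hne : n ≠ n')
    (hi : n ∈ gInterval G x p) (hi' : n' ∈ gInterval G x p) :
    ∃ w : V, w ≠ x ∧ G.Adj n w ∧ G.Adj n' w := by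
  obtain ⟨hc, hmed⟩ := hG
  obtain ⟨m, ⟨hm1, hm2, hm3⟩, -⟩ := hmed n n' p
  simp only [gInterval, Set.mem_setOf_eq] at hm1 hm2 hm3 hi hi'
  have hxn : G.dist x n = 1 := dist_eq_one_iff_adj.mpr hn
  have hxn' : G.dist x n' = 1 := dist_eq_one_iff_adj.mpr hn'
  have hdp : G.dist n p = G.dist n' p := by omega
  have cnx : G.dist n x = G.dist x n := SimpleGraph.dist_comm
  have hnn' : G.dist n n' ≤ 2 := by
    have h1 := hc.dist_triangle (u := n) (v := x) (w := n')
    omega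
  have hmn : m ≠ n := by
    intro h
    rw [h] at hm2
    have : G.dist n' n = 0 := by omega
    exact hne ((hc.dist_eq_zero_iff.mp this).symm)
  have hmn' : m ≠ n' := by
    intro h
    rw [h] at hm3
    have : G.dist n n' = 0 := by omega
    exact hne (hc.dist_eq_zero_iff.mp this)
  have d1 : 0 < G.dist n m := hc.pos_dist_of_ne (Ne.symm hmn)
  have d2 : 0 < G.dist m n' := hc.pos_dist_of_ne hmn'
  have e1 : G.dist n m = 1 := by omega
  have e2 : G.dist m n' = 1 := by omega
  have hmx : m ≠ x := by
    intro h
    rw [h] at hm3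
    omega
  have e2' : G.dist n' m = 1 := by
    have : G.dist n' m = G.dist m n' := SimpleGraph.dist_comm
    omega
  exact ⟨m, hmx, dist_eq_one_iff_adj.mp e1,
    dist_eq_one_iff_adj.mp e2'⟩

lemma link_reachable_of_common_interval (hG : IsMedianGraph G) {x p n n' : V}
    (hn : G.Adj x n) (hn' : G.Adj x n')
    (hi : n ∈ gInterval G x p) (hi' : n' ∈ gInterval G x p) :
    (Link G x).Reachable ⟨n, hn⟩ ⟨n', hn'⟩ := by
  by_cases hne : n = n'
  · subst hne; rfl
  · obtain ⟨w, hw⟩ := link_adj_of_common_interval hG hn hn' hne hi hi'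
    exact SimpleGraph.Adj.reachable (by
      rw [Link, SimpleGraph.fromRel_adj]
      exact ⟨by simpa using hne, Or.inl ⟨w, hw⟩⟩)

/-- projecting a walk avoiding x to the link of x -/
lemma link_reachable_of_walk (hG : IsMedianGraph G) (x : V) :
    ∀ {p q : V} (W : G.Walk p q), (∀ z ∈ W.support, z ≠ x) →
    ∀ {n n' : V} (hn : G.Adj x n) (hn' : G.Adj x n'),
      n ∈ gInterval G x p → n' ∈ gInterval G x q →
      (Link G x).Reachable ⟨n, hn⟩ ⟨n', hn'⟩ := by
  intro p q W
  induction W with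
  | nil =>
    intro _ n n' hn hn' hi hi'
    exact link_reachable_of_common_interval hG hn hn' hi hi'
  | @cons p r q hadj W' ih =>
    intro hsup n n' hn hn' hi hi'
    have hr : r ≠ x := hsup r (by simp)
    obtain ⟨nr, hnr, hir⟩ := exists_gate hG.1 hr
    have hsup' : ∀ z ∈ W'.support, z ≠ x := fun z hz => hsup z (by simp [hz])
    rcases median_dist_step hG x hadj with hd | hd
    · -- dist x r = dist x p + 1; n ∈ I(x,r)
      have : n ∈ gInterval G x r := interval_mono hG.1 hadj hd hi
      exact (link_reachable_of_common_interval hG hn hnr this hir).trans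
        (ih hsup' hnr hn' hir hi')
    · -- dist x p = dist x r + 1; nr ∈ I(x,p)
      have : nr ∈ gInterval G x p := interval_mono hG.1 hadj.symm hd hir
      exact (link_reachable_of_common_interval hG hn hnr hi this).trans
        (ih hsup' hnr hn' hir hi')

end Aux

section Main
variable {V : Type} {G : SimpleGraph V}

/-- lift a walk in an induced subgraph to the ambient graph -/
lemma induced_walk_lift {s : Set V} :
    ∀ {a b : s} (_ : (G.induce s).Walk a b),
      ∃ W' : G.Walk (a : V) (b : V), ∀ z ∈ W'.support, z ∈ s := by
  intro a b W
  induction W with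
  | nil =>
    refine ⟨SimpleGraph.Walk.nil, ?_⟩
    intro z hz
    simp only [SimpleGraph.Walk.support_nil, List.mem_singleton] at hz
    subst hz
    exact Subtype.coe_prop _
  | @cons a c b h W ih =>
    obtain ⟨W', hW'⟩ := ih
    have hadj : G.Adj (a : V) (c : V) := h
    exact ⟨SimpleGraph.Walk.cons hadj W', by
      intro z hz
      rw [SimpleGraph.Walk.support_cons] at hz
      rcases List.mem_cons.mp hz with rfl | hz
      · exact a.2
      · exact hW' z hz⟩

/-- link reachability transfers to the vertex-deleted graph -/
lemma link_reach_to_induced {v : V} {a b : {y : V // G.Adj v y}}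
    (h : (Link G v).Reachable a b) :
    (G.induce {u | u ≠ v}).Reachable ⟨(a : V), a.2.ne'⟩ ⟨(b : V), b.2.ne'⟩ := by
  obtain ⟨W⟩ := h
  induction W with
  | nil => rfl
  | @cons a c b h W ih =>
    refine SimpleGraph.Reachable.trans ?_ ih
    rw [Link, SimpleGraph.fromRel_adj] at h
    obtain ⟨-, hcase⟩ := h
    have key : ∃ w : V, w ≠ v ∧ G.Adj (a : V) w ∧ G.Adj (c : V) w := by
      rcases hcase with ⟨w, hw, h1, h2⟩ | ⟨w, hw, h1, h2⟩
      · exact ⟨w, hw, h1, h2⟩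
      · exact ⟨w, hw, h2, h1⟩
    obtain ⟨w, hwv, h1, h2⟩ := key
    have e1 : (G.induce {u | u ≠ v}).Adj ⟨(a : V), a.2.ne'⟩ ⟨w, hwv⟩ := h1
    have e2 : (G.induce {u | u ≠ v}).Adj ⟨w, hwv⟩ ⟨(c : V), c.2.ne'⟩ := h2.symm
    exact (e1.reachable).trans e2.reachable

/-- walking in G while jumping over v via links -/
lemma reach_in_deleted (hlink : ∀ x : V, (Link G x).Connected) (v : V) :
    ∀ (n : ℕ) {u w : V} (W : G.Walk u w), W.length = n →
      ∀ (hu : u ≠ v) (hw : w ≠ v),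
      (G.induce {z | z ≠ v}).Reachable ⟨u, hu⟩ ⟨w, hw⟩ := by
  intro n
  induction n using Nat.strong_induction_on with
  | _ n ih =>
  intro u w W hlen hu hw
  cases W with
  | nil => rfl
  | @cons _ r _ h W' =>
    by_cases hr : r = v
    · cases W' with
      | nil => exact absurd hr hw
      | @cons _ s _ h2 W'' =>
        have h2v : G.Adj v s := hr ▸ h2
        have huv : G.Adj v u := (hr ▸ h).symm
        have hs : s ≠ v := h2v.ne'
        have hl : (Link G v).Reachable ⟨u, huv⟩ ⟨s, h2v⟩ :=
          (hlink v).preconnected _ _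
        have step1 := link_reach_to_induced hl
        have step2 : (G.induce {z | z ≠ v}).Reachable ⟨s, hs⟩ ⟨w, hw⟩ := by
          refine ih W''.length ?_ W'' rfl hs hw
          simp only [SimpleGraph.Walk.length_cons] at hlen
          omega
        exact step1.trans step2
    · have e : (G.induce {z | z ≠ v}).Adj ⟨u, hu⟩ ⟨r, hr⟩ := h
      refine e.reachable.trans ?_
      refine ih W'.length ?_ W' rfl hr hw
      simp only [SimpleGraph.Walk.length_cons] at hlen
      omega

end Main

/-- A median graph with at least three vertices is 2-connected iff the link of
every vertex is connected. -/
theorem median_twoConnected_iff_links_connected {V : Type} (G : SimpleGraph V)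
    (hG : IsMedianGraph G) (hcard : ∃ a b c : V, a ≠ b ∧ a ≠ c ∧ b ≠ c) :
    TwoConnected G ↔ ∀ x : V, (Link G x).Connected := by
  have hc : G.Connected := hG.1
  obtain ⟨a, b, c, hab, hac, hbc⟩ := hcard
  have hne : ∀ v : V, ∃ u : V, u ≠ v := by
    intro v
    by_cases h : a = v
    · exact ⟨b, fun hb => hab (h.trans hb.symm)⟩
    · exact ⟨a, h⟩
  constructor
  · intro htc x
    obtain ⟨u, hu⟩ := hne x
    obtain ⟨n0, hn0, -⟩ := exists_gate hc hu
    rw [SimpleGraph.connected_iff]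
    refine ⟨?_, ⟨⟨n0, hn0⟩⟩⟩
    rintro ⟨n, hn⟩ ⟨n', hn'⟩
    have hdel := (htc.2 x)
    have hreach : (G.induce {u | u ≠ x}).Reachable ⟨n, hn.ne'⟩ ⟨n', hn'.ne'⟩ :=
      hdel.preconnected _ _
    obtain ⟨Wi⟩ := hreach
    obtain ⟨W, hW⟩ := induced_walk_lift Wi
    have hin : n ∈ gInterval G x n := by
      simp [gInterval, hc.dist_eq_zero_iff.mpr rfl]
    have hin' : n' ∈ gInterval G x n' := by
      simp [gInterval, hc.dist_eq_zero_iff.mpr rfl]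
    exact link_reachable_of_walk hG x W (fun z hz => hW z hz) hn hn' hin hin'
  · intro hlink
    refine ⟨hc, fun v => ?_⟩
    obtain ⟨u, hu⟩ := hne v
    rw [SimpleGraph.connected_iff]
    refine ⟨?_, ⟨⟨u, hu⟩⟩⟩
    rintro ⟨p, hp⟩ ⟨q, hq⟩
    obtain ⟨W⟩ := hc.preconnected p q
    exact reach_in_deleted hlink v W.length W rfl hp hq
end

section
/- A median graph G with at least three vertices is 2-connected if and only if the incompatibility graph Inc(G) of its convex splits is connected. -/
open SimpleGraph

/-- A set of vertices is convex if it contains the interval between any two of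
its elements. -/
def IsConvexSet {V : Type} (G : SimpleGraph V) (S : Set V) : Prop :=
  ∀ u ∈ S, ∀ v ∈ S, gInterval G u v ⊆ S

/-- A convex split of `G` is an unordered pair `{A, B}` of nonempty convex sets
partitioning the vertex set. -/
def IsConvexSplit {V : Type} (G : SimpleGraph V) (P : Set (Set V)) : Prop :=
  ∃ A B : Set V, P = {A, B} ∧ A.Nonempty ∧ B.Nonempty ∧
    IsConvexSet G A ∧ IsConvexSet G B ∧ A ∪ B = Set.univ ∧ Disjoint A B

/-- Two splits are incompatible when all four pairwise intersections of their
parts are nonempty. -/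
def SplitsIncompatible {V : Type} (P Q : Set (Set V)) : Prop :=
  ∀ A ∈ P, ∀ B ∈ Q, (A ∩ B : Set V).Nonempty

/-- The incompatibility graph of the convex splits of `G`. -/
def IncGraph {V : Type} (G : SimpleGraph V) :
    SimpleGraph {P : Set (Set V) // IsConvexSplit G P} :=
  SimpleGraph.fromRel (fun P Q => SplitsIncompatible P.1 Q.1)

namespace MedianPf

variable {V : Type} {G : SimpleGraph V}

/-- The halfspace of points strictly closer to `a` than to `b`. -/
def W (G : SimpleGraph V) (a b : V) : Set V := {z | G.dist z a + 1 = G.dist z b}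

lemma mem_gI {u v z : V} : z ∈ gInterval G u v ↔ G.dist u z + G.dist z v = G.dist u v :=
  Iff.rfl

lemma left_mem_gI (hc : G.Connected) (u v : V) : u ∈ gInterval G u v := by
  simp [mem_gI]

lemma right_mem_gI (hc : G.Connected) (u v : V) : v ∈ gInterval G u v := by
  simp [mem_gI]

lemma gI_trans1 (hc : G.Connected) {u w z p : V} (hz : z ∈ gInterval G u w)
    (hp : p ∈ gInterval G u z) : p ∈ gInterval G u w := by
  have t1 : G.dist u w ≤ G.dist u p + G.dist p w := hc.dist_triangle
  have t2 : G.dist p w ≤ G.dist p z + G.dist z w := hc.dist_triangle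
  rw [mem_gI] at *
  omega

lemma gI_trans2 (hc : G.Connected) {u w z p : V} (hz : z ∈ gInterval G u w)
    (hp : p ∈ gInterval G z w) : p ∈ gInterval G u w := by
  have t1 : G.dist u w ≤ G.dist u p + G.dist p w := hc.dist_triangle
  have t2 : G.dist u p ≤ G.dist u z + G.dist z p := hc.dist_triangle
  rw [mem_gI] at *
  omega

lemma adj_dist {a b : V} (hab : G.Adj a b) : G.dist a b = 1 :=
  dist_eq_one_iff_adj.2 hab

lemma gI_edge (hc : G.Connected) {a b : V} (hab : G.Adj a b) :
    gInterval G a b = {a, b} := by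
  ext z
  rw [mem_gI, adj_dist hab]
  constructor
  · intro h
    have h0 : G.dist a z = 0 ∨ G.dist z b = 0 := by omega
    rcases h0 with h0 | h0
    · left; exact (hc.dist_eq_zero_iff.1 h0).symm
    · right; exact hc.dist_eq_zero_iff.1 h0
  · rintro (rfl | rfl) <;>
      simp [SimpleGraph.dist_self, adj_dist hab, hc.dist_eq_zero_iff]


lemma notie (hG : IsMedianGraph G) {a b : V} (hab : G.Adj a b) (x : V) :
    G.dist x a + 1 = G.dist x b ∨ G.dist x b + 1 = G.dist x a := by
  have hc := hG.1
  obtain ⟨m, ⟨h1, h2, h3⟩, -⟩ := hG.2 x a b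
  have hm : m ∈ ({a, b} : Set V) := by rw [← gI_edge hc hab]; exact h2
  rcases hm with rfl | rfl
  · left
    have := mem_gI.1 h3
    rwa [adj_dist hab] at this
  · right
    have := mem_gI.1 h1
    rwa [adj_dist hab.symm] at this

lemma mem_W {a b z : V} : z ∈ W G a b ↔ G.dist z a + 1 = G.dist z b := Iff.rfl

lemma w_or (hG : IsMedianGraph G) {a b : V} (hab : G.Adj a b) (x : V) :
    x ∈ W G a b ∨ x ∈ W G b a := notie hG hab x

lemma w_disjoint {a b z : V} (h1 : z ∈ W G a b) (h2 : z ∈ W G b a) : False := by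
  rw [mem_W] at h1 h2; omega

lemma base_mem_W {a b : V} (hab : G.Adj a b) : a ∈ W G a b := by
  rw [mem_W, SimpleGraph.dist_self, adj_dist hab]

lemma no_triangle (hG : IsMedianGraph G) {a b c : V} (h1 : G.Adj a b) (h2 : G.Adj a c)
    (h3 : G.Adj b c) : False := by
  have := notie hG h3 a
  rw [adj_dist h1, adj_dist h2] at this
  omega

/-- Moving within the interval towards `b` keeps one in the halfspace of `b`. -/
lemma w_stays (hc : G.Connected) {a b p q : V} (hab : G.Adj a b) (hp : p ∈ W G b a)
    (hq : q ∈ gInterval G p b) : q ∈ W G b a := by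
  rw [mem_W] at hp ⊢
  rw [mem_gI] at hq
  have t1 : G.dist p a ≤ G.dist p q + G.dist q a := hc.dist_triangle
  have t2 : G.dist q a ≤ G.dist q b + G.dist b a := hc.dist_triangle
  rw [adj_dist hab.symm] at t2
  omega

lemma w_convex (hG : IsMedianGraph G) {a b : V} (hab : G.Adj a b) :
    IsConvexSet G (W G a b) := by
  have hc := hG.1
  intro u hu w hw z hz
  by_contra hzn
  have hz' : z ∈ W G b a := (w_or hG hab z).resolve_left hzn
  obtain ⟨p, ⟨hp1, hp2, hp3⟩, -⟩ := hG.2 u z b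
  have hpuw : p ∈ gInterval G u w := gI_trans1 hc hz hp1
  have hpW : p ∈ W G b a := w_stays hc hab hz' hp2
  obtain ⟨q, ⟨hq1, hq2, hq3⟩, -⟩ := hG.2 p w b
  have hq_uw : q ∈ gInterval G u w := gI_trans2 hc hpuw hq1
  have hq_ub : q ∈ gInterval G u b := gI_trans2 hc hp3 hq3
  have hq_W : q ∈ W G b a := w_stays hc hab hpW hq3
  obtain ⟨m, ⟨hm1, hm2, hm3⟩, -⟩ := hG.2 u w a
  have hmW : m ∈ W G a b := w_stays hc hab.symm hu hm3
  have hm_ub : m ∈ gInterval G u b := by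
    rw [mem_gI] at hm3 ⊢
    rw [mem_W] at hu
    have t1 : G.dist u b ≤ G.dist u m + G.dist m b := hc.dist_triangle
    have t2 : G.dist m b ≤ G.dist m a + G.dist a b := hc.dist_triangle
    rw [adj_dist hab] at t2
    omega
  have hm_wb : m ∈ gInterval G w b := by
    rw [mem_gI] at hm2 ⊢
    rw [mem_W] at hw
    have t1 : G.dist w b ≤ G.dist w m + G.dist m b := hc.dist_triangle
    have t2 : G.dist m b ≤ G.dist m a + G.dist a b := hc.dist_triangle
    rw [adj_dist hab] at t2
    omega
  obtain ⟨c, -, hcu⟩ := hG.2 u w b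
  have e1 : q = c := hcu q ⟨hq_uw, hq2, hq_ub⟩
  have e2 : m = c := hcu m ⟨hm1, hm_wb, hm_ub⟩
  exact w_disjoint (e1 ▸ e2 ▸ hmW) hq_W

lemma w_union (hG : IsMedianGraph G) {a b : V} (hab : G.Adj a b) :
    W G a b ∪ W G b a = Set.univ := by
  ext x
  simpa using w_or hG hab x

lemma w_split (hG : IsMedianGraph G) {a b : V} (hab : G.Adj a b) :
    IsConvexSplit G {W G a b, W G b a} :=
  ⟨W G a b, W G b a, rfl, ⟨a, base_mem_W hab⟩, ⟨b, base_mem_W hab.symm⟩,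
    w_convex hG hab, w_convex hG hab.symm, w_union hG hab,
    Set.disjoint_left.2 fun _ h1 h2 => (w_disjoint h1 h2).elim⟩

lemma parts_eq_W (hG : IsMedianGraph G) {S T : Set V} (hSc : IsConvexSet G S)
    (hTc : IsConvexSet G T) (hU : S ∪ T = Set.univ) (hD : Disjoint S T) {a b : V}
    (ha : a ∈ S) (hb : b ∈ T) (hab : G.Adj a b) : S = W G a b ∧ T = W G b a := by
  have hc := hG.1
  have hsub : ∀ x ∈ S, x ∈ W G a b := by
    intro x hx
    rcases w_or hG hab x with h | h
    · exact h
    · exfalso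
      have hbI : b ∈ gInterval G x a := by
        rw [mem_gI, adj_dist hab.symm]
        rw [mem_W] at h
        omega
      exact Set.disjoint_left.1 hD (hSc x hx a ha hbI) hb
  have htsub : ∀ x ∈ T, x ∈ W G b a := by
    intro x hx
    rcases w_or hG hab x with h | h
    · exfalso
      have haI : a ∈ gInterval G x b := by
        rw [mem_gI, adj_dist hab]
        rw [mem_W] at h
        omega
      exact Set.disjoint_right.1 hD (hTc x hx b hb haI) ha
    · exact h
  constructor
  · apply Set.eq_of_subset_of_subset hsub
    intro x hx
    have : x ∈ S ∪ T := hU ▸ Set.mem_univ x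
    rcases this with h | h
    · exact h
    · exact absurd (htsub x h) (fun h2 => w_disjoint hx h2)
  · apply Set.eq_of_subset_of_subset htsub
    intro x hx
    have : x ∈ S ∪ T := hU ▸ Set.mem_univ x
    rcases this with h | h
    · exact absurd (hsub x h) (fun h2 => w_disjoint h2 hx)
    · exact h

lemma split_parts {P : Set (Set V)} (hP : IsConvexSplit G P) {S : Set V} (hS : S ∈ P) :
    ∃ T, P = {S, T} ∧ S.Nonempty ∧ T.Nonempty ∧ IsConvexSet G S ∧ IsConvexSet G T ∧
      S ∪ T = Set.univ ∧ Disjoint S T := by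
  obtain ⟨A, B, rfl, hAne, hBne, hAc, hBc, hU, hD⟩ := hP
  rcases hS with rfl | rfl
  · exact ⟨B, rfl, hAne, hBne, hAc, hBc, hU, hD⟩
  · exact ⟨A, Set.pair_comm A S, hBne, hAne, hBc, hAc, by rw [Set.union_comm]; exact hU,
      hD.symm⟩

lemma walk_crossing {S T : Set V} (hD : Disjoint S T) (hU : S ∪ T = Set.univ) :
    ∀ {u v : V} (_ : G.Walk u v), u ∈ S → v ∈ T → ∃ a ∈ S, ∃ b ∈ T, G.Adj a b := by
  intro u v p
  induction p with
  | nil => intro hu hv; exact absurd hv (Set.disjoint_left.1 hD hu)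
  | @cons u y v h q ih =>
    intro hu hv
    by_cases hy : y ∈ S
    · exact ih hy hv
    · have : y ∈ S ∪ T := hU ▸ Set.mem_univ y
      exact ⟨u, hu, y, this.resolve_left hy, h⟩


/-! ### Incompatibility graph helpers -/

lemma inc_ne {P Q : {P : Set (Set V) // IsConvexSplit G P}}
    (h : SplitsIncompatible P.1 Q.1) : P ≠ Q := by
  rintro rfl
  obtain ⟨A, B, hPeq, hAne, hBne, -, -, -, hD⟩ := P.2
  have hA : A ∈ P.1 := by rw [hPeq]; exact Set.mem_insert _ _
  have hB : B ∈ P.1 := by rw [hPeq]; exact Set.mem_insert_iff.2 (Or.inr rfl)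
  have hne := h A hA B hB
  rcases hne with ⟨z, hz1, hz2⟩
  exact Set.disjoint_left.1 hD hz1 hz2

lemma inc_adj {P Q : {P : Set (Set V) // IsConvexSplit G P}}
    (h : SplitsIncompatible P.1 Q.1) : (IncGraph G).Adj P Q := by
  rw [IncGraph, SimpleGraph.fromRel_adj]
  exact ⟨inc_ne h, Or.inl h⟩

lemma dist_two (hG : IsMedianGraph G) {y x z : V} (hxy : G.Adj x y) (hxz : G.Adj x z)
    (hyz : y ≠ z) : G.dist y z = 2 := by
  have h1 : G.dist y z ≤ 2 := by
    have := hG.1.dist_triangle (u := y) (v := x) (w := z)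
    rw [adj_dist hxy.symm, adj_dist hxz] at this
    omega
  have h2 : G.dist y z ≠ 0 := by
    intro h0
    exact hyz (hG.1.dist_eq_zero_iff.1 h0)
  have h3 : G.dist y z ≠ 1 := by
    intro h1'
    exact no_triangle hG hxy hxz (dist_eq_one_iff_adj.1 h1')
  omega

lemma square_inc (hG : IsMedianGraph G) {x y z w : V} (hxy : G.Adj x y) (hxz : G.Adj x z)
    (hyz : y ≠ z) (hw : w ≠ x) (hwy : G.Adj w y) (hwz : G.Adj w z) :
    SplitsIncompatible ({W G y x, W G x y} : Set (Set V)) {W G z x, W G x z} := by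
  have dyz : G.dist y z = 2 := dist_two hG hxy hxz hyz
  have dwx : G.dist w x = 2 := by
    have hnadj : ¬ G.Adj w x := fun hwx => no_triangle hG hwy hwx hxy.symm
    have h1 : G.dist w x ≤ 2 := by
      have := hG.1.dist_triangle (u := w) (v := y) (w := x)
      rw [adj_dist hwy, adj_dist hxy.symm] at this
      omega
    have h2 : G.dist w x ≠ 0 := fun h0 => hw (hG.1.dist_eq_zero_iff.1 h0)
    have h3 : G.dist w x ≠ 1 := fun h1' => hnadj (dist_eq_one_iff_adj.1 h1')
    omega
  intro A hA B hB
  have hA' : A = W G y x ∨ A = W G x y := hA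
  have hB' : B = W G z x ∨ B = W G x z := hB
  rcases hA' with rfl | rfl <;> rcases hB' with rfl | rfl
  · exact ⟨w, by rw [mem_W, adj_dist hwy, dwx], by rw [mem_W, adj_dist hwz, dwx]⟩
  · refine ⟨y, ?_, ?_⟩
    · rw [mem_W, SimpleGraph.dist_self, adj_dist hxy.symm]
    · rw [mem_W, adj_dist hxy.symm, dyz]
  · refine ⟨z, ?_, ?_⟩
    · rw [mem_W, adj_dist hxz.symm, SimpleGraph.dist_comm, dyz]
    · rw [mem_W, SimpleGraph.dist_self, adj_dist hxz.symm]
  · exact ⟨x, by rw [mem_W, SimpleGraph.dist_self, adj_dist hxy],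
      by rw [mem_W, SimpleGraph.dist_self, adj_dist hxz]⟩

/-- Local relation at `x` : two neighbours of `x` linked by a square. -/
def LamAdj (G : SimpleGraph V) (x y z : V) : Prop :=
  G.Adj x y ∧ G.Adj x z ∧ ∃ w, w ≠ x ∧ G.Adj w y ∧ G.Adj w z

lemma lam_reach (hG : IsMedianGraph G) {x b : V} (hb : G.Adj b x) {b' : V}
    (h : Relation.ReflTransGen (LamAdj G x) b b') (hb' : G.Adj b' x) :
    (IncGraph G).Reachable ⟨{W G b x, W G x b}, w_split hG hb⟩
      ⟨{W G b' x, W G x b'}, w_split hG hb'⟩ := by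
  induction h with
  | refl => rfl
  | @tail c d h1 h2 ih =>
    obtain ⟨hxc, hxd, w, hwne, hwc, hwd⟩ := h2
    have rc : (IncGraph G).Reachable ⟨{W G b x, W G x b}, w_split hG hb⟩
        ⟨{W G c x, W G x c}, w_split hG hxc.symm⟩ := ih hxc.symm
    by_cases hcd : c = d
    · subst hcd; exact rc
    · exact rc.trans (inc_adj (square_inc hG hxc hxd hcd hwne hwc hwd)).reachable


/-! ### List helpers -/

lemma reshape {l : List V} {b b' : V} (hh : l.head? = some b) (hl : l.getLast? = some b')
    (hbb' : b ≠ b') : ∃ L, l = b :: L ++ [b'] := by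
  match l with
  | [] => simp at hh
  | [c] =>
    simp at hh hl
    subst hh
    exact absurd hl hbb'
  | c :: d :: t =>
    have hc : c = b := by simpa using hh
    subst hc
    have hne : d :: t ≠ [] := by simp
    have hl2 : (d :: t).getLast? = some b' := by
      rw [← hl, List.getLast?_cons_cons]
    have hgl : (d :: t).getLast hne = b' := by
      rw [List.getLast?_eq_getLast hne] at hl2
      simpa using hl2
    refine ⟨(d :: t).dropLast, ?_⟩
    have h2 : (d :: t).dropLast ++ [b'] = d :: t := by
      rw [← hgl]
      exact List.dropLast_append_getLast hne
    calc c :: d :: t = c :: ((d :: t).dropLast ++ [b']) := by rw [h2]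
      _ = c :: (d :: t).dropLast ++ [b'] := by simp

lemma not_nodup_decomp : ∀ (l : List V), ¬ l.Nodup →
    ∃ (a : V) (l1 l2 l3 : List V), l = l1 ++ a :: (l2 ++ a :: l3) := by
  intro l hl
  induction l with
  | nil => simp at hl
  | cons c t ih =>
    by_cases hct : c ∈ t
    · obtain ⟨s, u, rfl⟩ := List.append_of_mem hct
      exact ⟨c, [], s, u, by simp⟩
    · have hnt : ¬ t.Nodup := fun h => hl (List.nodup_cons.2 ⟨hct, h⟩)
      obtain ⟨a, l1, l2, l3, rfl⟩ := ih hnt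
      exact ⟨a, c :: l1, l2, l3, by simp⟩


lemma lam_of_walk (hG : IsMedianGraph G) (x : V) :
    ∀ (n : ℕ) (b b' : V) (L : List V), G.Adj x b → G.Adj x b' →
      List.Chain' G.Adj (b :: L ++ [b']) → (∀ v ∈ b :: L ++ [b'], v ≠ x) →
      (b :: L ++ [b']).length + ((b :: L ++ [b']).map (G.dist x)).sum ≤ n →
      Relation.ReflTransGen (LamAdj G x) b b' := by
  intro n
  induction n with
  | zero =>
    intro b b' L _ _ _ _ hm
    simp [List.length_append] at hm
  | succ n ih =>
    intro b b' L hxb hxb' hch hne hm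
    by_cases hbb' : b = b'
    · exact hbb' ▸ Relation.ReflTransGen.refl
    by_cases hnd : (b :: L ++ [b']).Nodup
    swap
    · -- a duplicated vertex: shortcut the walk
      obtain ⟨a, l1, l2, l3, heq⟩ := not_nodup_decomp _ hnd
      have hch' : List.Chain' G.Adj (l1 ++ a :: l3) := by
        rw [heq] at hch
        have h1 := (List.isChain_split.1 hch).1
        have h2 := (List.isChain_split.1 hch).2
        have h3 : List.Chain' G.Adj ((a :: l2) ++ a :: l3) := h2
        have h4 := (List.isChain_split.1 h3).2
        exact List.isChain_split.2 ⟨h1, h4⟩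
      have hsub : ∀ v ∈ l1 ++ a :: l3, v ∈ b :: L ++ [b'] := by
        intro v hv
        rw [heq]
        simp at hv ⊢
        tauto
      have hh : (l1 ++ a :: l3).head? = some b := by
        have : (b :: L ++ [b']).head? = some b := rfl
        rw [heq] at this
        cases l1 <;> simp_all
      have hlast : (l1 ++ a :: l3).getLast? = some b' := by
        have horig : (b :: L ++ [b']).getLast? = some b' := by
          rw [show b :: L ++ [b'] = (b :: L) ++ [b'] by simp]
          exact List.getLast?_concat
        rw [heq] at horig
        rcases List.eq_nil_or_concat l3 with rfl | ⟨l3', c, rfl⟩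
        · have h1 : (l1 ++ a :: (l2 ++ [a])).getLast? = some a := by
            rw [show l1 ++ a :: (l2 ++ [a]) = (l1 ++ a :: l2) ++ [a] by simp]
            exact List.getLast?_concat
          rw [h1] at horig
          have hab2 : a = b' := by simpa using horig
          subst hab2
          rw [show l1 ++ [a] = l1 ++ [a] from rfl]
          exact List.getLast?_concat
        · simp only [List.concat_eq_append] at *
          have h1 : (l1 ++ a :: (l2 ++ a :: (l3' ++ [c]))).getLast? = some c := by
            rw [show l1 ++ a :: (l2 ++ a :: (l3' ++ [c]))
              = (l1 ++ a :: (l2 ++ a :: l3')) ++ [c] by simp]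
            exact List.getLast?_concat
          rw [h1] at horig
          rw [show l1 ++ a :: (l3' ++ [c]) = (l1 ++ a :: l3') ++ [c] by simp]
          rw [List.getLast?_concat]
          exact horig
      obtain ⟨L', hL'⟩ := reshape hh hlast hbb'
      refine ih b b' L' hxb hxb' (hL' ▸ hch') (fun v hv => hne v (hsub v (hL' ▸ hv))) ?_
      have hmeq : (b :: L ++ [b']).length = l1.length + l2.length + l3.length + 2 := by
        rw [heq]; simp; omega
      have hseq : ((b :: L ++ [b']).map (G.dist x)).sum
          = (l1.map (G.dist x)).sum + (l3.map (G.dist x)).sum + G.dist x a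
            + ((l2.map (G.dist x)).sum + G.dist x a) := by
        rw [heq]; simp; omega
      have hlen' : (b :: L' ++ [b']).length = l1.length + l3.length + 1 := by
        rw [← hL']; simp; omega
      have hsum' : ((b :: L' ++ [b']).map (G.dist x)).sum
          = (l1.map (G.dist x)).sum + (l3.map (G.dist x)).sum + G.dist x a := by
        rw [← hL']; simp; omega
      rw [hlen', hsum']
      rw [hmeq, hseq] at hm
      omega
    by_cases hadjL : ∃ v ∈ L, G.Adj x v
    · -- split the walk at an interior neighbour of x
      obtain ⟨v, hvL, hxv⟩ := hadjL
      obtain ⟨L1, L2, rfl⟩ := List.append_of_mem hvL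
      have heq2 : b :: (L1 ++ v :: L2) ++ [b'] = (b :: L1) ++ v :: (L2 ++ [b']) := by simp
      rw [heq2] at hch hne
      have C1 : List.Chain' G.Adj ((b :: L1) ++ [v]) := (List.isChain_split.1 hch).1
      have C2 : List.Chain' G.Adj (v :: (L2 ++ [b'])) := (List.isChain_split.1 hch).2
      have r1 : Relation.ReflTransGen (LamAdj G x) b v := by
        refine ih b v L1 hxb hxv (by simpa using C1) ?_ ?_
        · intro u hu
          refine hne u ?_
          simp at hu ⊢
          tauto
        · rw [heq2] at hm
          simp at hm ⊢
          omega
      have r2 : Relation.ReflTransGen (LamAdj G x) v b' := by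
        refine ih v b' L2 hxv hxb' (by simpa using C2) ?_ ?_
        · intro u hu
          refine hne u ?_
          simp at hu ⊢
          tauto
        · rw [heq2] at hm
          simp at hm ⊢
          omega
      exact r1.trans r2
    -- now: b ≠ b', no duplicates, no interior vertex adjacent to x
    match L with
    | [] =>
      have hadj : G.Adj b b' := by simpa [List.Chain'] using hch
      exact absurd hadj (fun h => no_triangle hG hxb hxb' h)
    | [w] =>
      have hboth : G.Adj b w ∧ G.Adj w b' := by
        have := hch
        simpa [List.Chain', List.isChain_cons_cons] using this
      have hbw : G.Adj b w := hboth.1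
      have hwb' : G.Adj w b' := hboth.2
      exact Relation.ReflTransGen.single
        ⟨hxb, hxb', w, hne w (by simp), hbw.symm, hwb'⟩
    | w1 :: w2 :: rest =>
      have hc := hG.1
      have hL2 : ∀ v ∈ w1 :: w2 :: rest, 2 ≤ G.dist x v := by
        intro v hv
        have hvx : v ≠ x := hne v (by simp at hv ⊢; tauto)
        have h0 : G.dist x v ≠ 0 := fun h => hvx (hc.dist_eq_zero_iff.1 h).symm
        have h1 : G.dist x v ≠ 1 := fun h => hadjL ⟨v, hv, dist_eq_one_iff_adj.1 h⟩
        omega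
      obtain ⟨Li, hLi⟩ : ∃ m, m ∈ (w1 :: w2 :: rest).argmax (G.dist x) := by
        cases hopt : (w1 :: w2 :: rest).argmax (G.dist x) with
        | none => simp [List.argmax_eq_none] at hopt
        | some m => exact ⟨m, by simp [hopt]⟩
      have hLiL : Li ∈ w1 :: w2 :: rest := List.argmax_mem hLi
      have hmax : ∀ v ∈ w1 :: w2 :: rest, G.dist x v ≤ G.dist x Li :=
        fun v hv => List.le_of_mem_argmax hv hLi
      have hch2 : List.Chain' G.Adj (b :: w1 :: w2 :: (rest ++ [b'])) := by simpa using hch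
      have hadj12 : G.Adj w1 w2 := (List.isChain_cons_cons.1 (List.isChain_cons_cons.1 hch2).2).1
      have hM3 : 3 ≤ G.dist x Li := by
        have d1 := hL2 w1 (by simp)
        have d2 := hL2 w2 (by simp)
        have b1 := hmax w1 (by simp)
        have b2 := hmax w2 (by simp)
        have hne12 := notie hG hadj12 x
        rcases hne12 with h | h <;> omega
      obtain ⟨L1, L2, hLdecomp⟩ := List.append_of_mem hLiL
      rw [hLdecomp] at hch hne hm hnd
      have heq3 : b :: (L1 ++ Li :: L2) ++ [b'] = (b :: L1) ++ Li :: (L2 ++ [b']) := by simp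
      rw [heq3] at hch hne hm hnd
      have C1 : List.Chain' G.Adj ((b :: L1) ++ [Li]) := (List.isChain_split.1 hch).1
      have C2 : List.Chain' G.Adj (Li :: (L2 ++ [b'])) := (List.isChain_split.1 hch).2
      have hbl1 : (b :: L1 : List V) ≠ [] := by simp
      have hne2 : (L2 ++ [b'] : List V) ≠ [] := by simp
      set prev := (b :: L1).getLast hbl1 with hprevdef
      set next := (L2 ++ [b']).head hne2 with hnextdef
      have hprev? : (b :: L1).getLast? = some prev := List.getLast?_eq_getLast hbl1
      have adj_prev : G.Adj prev Li := by
        have h := (List.isChain_append.1 C1).2.2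
        exact h prev hprev? Li rfl
      have adj_next : G.Adj Li next := by
        have hcons : next :: (L2 ++ [b']).tail = L2 ++ [b'] := List.cons_head_tail hne2
        rw [← hcons] at C2
        exact (List.isChain_cons_cons.1 C2).1
      have mem_prev : prev ∈ b :: L1 := List.getLast_mem hbl1
      have mem_next : next ∈ L2 ++ [b'] := List.head_mem hne2
      have memL : ∀ v, v ∈ L1 ∨ v ∈ L2 → v ∈ w1 :: w2 :: rest := by
        intro v hv
        rw [hLdecomp]
        simp
        tauto
      have dxprev : G.dist x prev = G.dist x Li - 1 := by
        have hneq := notie hG adj_prev x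
        have t1 : G.dist x Li ≤ G.dist x prev + 1 := by
          have := hc.dist_triangle (u := x) (v := prev) (w := Li)
          rw [adj_dist adj_prev] at this
          omega
        rcases List.mem_cons.1 mem_prev with h | h
        · exfalso
          have : G.dist x prev = 1 := by rw [h]; exact adj_dist hxb
          omega
        · have hb := hmax prev (memL prev (Or.inl h))
          rcases hneq with h' | h' <;> omega
      have dxnext : G.dist x next = G.dist x Li - 1 := by
        have hneq := notie hG adj_next.symm x
        have t1 : G.dist x Li ≤ G.dist x next + 1 := by
          have := hc.dist_triangle (u := x) (v := next) (w := Li)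
          rw [adj_dist adj_next.symm] at this
          omega
        rcases List.mem_append.1 mem_next with h | h
        · have hb := hmax next (memL next (Or.inr h))
          rcases hneq with h' | h' <;> omega
        · exfalso
          have : G.dist x next = 1 := by
            rw [List.mem_singleton.1 h]; exact adj_dist hxb'
          omega
      have hprevnext : prev ≠ next := by
        intro h
        have hdisj := (List.nodup_append.1 hnd).2.2
        exact hdisj _ mem_prev _ (List.mem_cons_of_mem Li (h ▸ mem_next)) rfl
      have hpn2 : G.dist prev next = 2 := dist_two hG adj_prev.symm adj_next hprevnext
      obtain ⟨m, ⟨g1, g2, g3⟩, -⟩ := hG.2 prev x next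
      have e1 := mem_gI.1 g1
      have e2 := mem_gI.1 g2
      have e3 := mem_gI.1 g3
      have c1 : G.dist prev x = G.dist x prev := SimpleGraph.dist_comm ..
      have c2 : G.dist m x = G.dist x m := SimpleGraph.dist_comm ..
      have hda : G.dist prev m = 1 ∧ G.dist m next = 1 ∧
          G.dist x m = G.dist x Li - 2 := by
        refine ⟨?_, ?_, ?_⟩ <;> omega
      have hmx : m ≠ x := by
        intro h
        have h3 := hda.2.2
        rw [h, SimpleGraph.dist_self] at h3
        omega
      have apm : G.Adj prev m := dist_eq_one_iff_adj.1 hda.1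
      have amn : G.Adj m next := dist_eq_one_iff_adj.1 hda.2.1
      have newC : List.Chain' G.Adj ((b :: L1) ++ m :: (L2 ++ [b'])) := by
        apply List.isChain_split.2
        constructor
        · apply List.isChain_append.2
          refine ⟨(List.isChain_append.1 C1).1, List.isChain_singleton _, ?_⟩
          intro p hp q hq
          simp only [List.head?_cons, Option.mem_def, Option.some.injEq] at hq
          rw [hprev?] at hp
          simp only [Option.mem_def, Option.some.injEq] at hp
          subst hp; subst hq
          exact apm
        · have hcons : next :: (L2 ++ [b']).tail = L2 ++ [b'] := List.cons_head_tail hne2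
          rw [← hcons]
          exact List.isChain_cons_cons.2 ⟨amn, by rw [hcons]; exact List.IsChain.tail C2⟩
      have heq4 : (b :: L1) ++ m :: (L2 ++ [b']) = b :: (L1 ++ m :: L2) ++ [b'] := by simp
      refine ih b b' (L1 ++ m :: L2) hxb hxb' (heq4 ▸ newC) ?_ ?_
      · intro v hv
        have hv' : v = b ∨ v ∈ L1 ∨ v = m ∨ v ∈ L2 ∨ v = b' := by simpa using hv
        rcases hv' with rfl | h | h | h | rfl
        · exact hne v (by simp)
        · exact hne v (by simp; tauto)
        · exact h ▸ hmx
        · exact hne v (by simp; tauto)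
        · exact hne v (by simp)
      · simp only [List.length_append, List.length_cons, List.map_append, List.map_cons,
          List.sum_append, List.sum_cons] at hm ⊢
        omega


/-! ### Walks avoiding a vertex vs the induced graph -/

lemma reach_induce {x : V} {a c : V} (p : G.Walk a c) (hp : ∀ z ∈ p.support, z ≠ x) :
    (G.induce {u | u ≠ x}).Reachable ⟨a, hp a p.start_mem_support⟩
      ⟨c, hp c p.end_mem_support⟩ := by
  induction p with
  | nil => rfl
  | @cons a y c h q ih =>
    have hy : ∀ z ∈ q.support, z ≠ x := fun z hz => hp z (by simp [hz])
    have hadj : (G.induce {u | u ≠ x}).Adj ⟨a, hp a (by simp)⟩ ⟨y, hy y q.start_mem_support⟩ := h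
    exact (hadj.reachable).trans (ih hy)

lemma chain_of_reach {x b b' : V} (hb : b ≠ x) (hb' : b' ≠ x)
    (h : (G.induce {u | u ≠ x}).Reachable ⟨b, hb⟩ ⟨b', hb'⟩) :
    b = b' ∨ ∃ L, List.Chain' G.Adj (b :: L ++ [b']) ∧ ∀ v ∈ b :: L ++ [b'], v ≠ x := by
  by_cases hbb : b = b'
  · exact Or.inl hbb
  obtain ⟨w⟩ := h
  set l := w.support.map Subtype.val with hl
  have hch : List.Chain' G.Adj l := by
    rw [hl]
    exact (List.isChain_map _).2 w.isChain_adj_support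
  have hhead : l.head? = some b := by
    rw [hl, List.head?_map, w.support_eq_cons]
    rfl
  have hlast : l.getLast? = some b' := by
    rw [hl, List.getLast?_map]
    have h1 : w.support.getLast? = some (⟨b', hb'⟩ : {u | u ≠ x}) := by
      rw [List.getLast?_eq_getLast w.support_ne_nil]
      simp [Walk.getLast_support]
    rw [h1]
    rfl
  have hmem : ∀ v ∈ l, v ≠ x := by
    intro v hv
    rw [hl] at hv
    obtain ⟨⟨u, hu⟩, -, rfl⟩ := List.mem_map.1 hv
    exact hu
  obtain ⟨L, hL⟩ := reshape hhead hlast hbb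
  exact Or.inr ⟨L, hL ▸ hch, hL ▸ hmem⟩

lemma dist_getVert_le (hc : G.Connected) {u v : V} (p : G.Walk u v) :
    ∀ i, G.dist u (p.getVert i) ≤ i := by
  induction p with
  | nil => intro i; simp [Walk.getVert, SimpleGraph.dist_self]
  | @cons a y c h q ih =>
    intro i
    cases i with
    | zero => simp [Walk.getVert, SimpleGraph.dist_self]
    | succ i =>
      have h1 : G.dist a (q.getVert i) ≤ G.dist a y + G.dist y (q.getVert i) :=
        hc.dist_triangle
      rw [adj_dist h] at h1
      have := ih i
      calc G.dist a ((Walk.cons h q).getVert (i + 1)) = G.dist a (q.getVert i) := rfl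
        _ ≤ i + 1 := by omega

lemma getVert_dist_le {u v : V} (p : G.Walk u v) :
    ∀ i, G.dist (p.getVert i) v ≤ p.length - i := by
  induction p with
  | nil => intro i; simp [Walk.getVert, SimpleGraph.dist_self]
  | @cons a y c h q ih =>
    intro i
    cases i with
    | zero =>
      simpa [Walk.getVert] using SimpleGraph.dist_le (Walk.cons h q)
    | succ i =>
      calc G.dist ((Walk.cons h q).getVert (i + 1)) c = G.dist (q.getVert i) c := rfl
        _ ≤ q.length - i := ih i
        _ ≤ (Walk.cons h q).length - (i + 1) := by simp [Walk.length_cons]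


/-! ### Forward direction: 2-connected implies Inc connected -/

noncomputable def dSet (G : SimpleGraph V) (A B : Set V) : ℕ :=
  sInf {k | ∃ a ∈ A, ∃ b ∈ B, G.dist a b = k}

lemma dSet_exists {A B : Set V} (hA : A.Nonempty) (hB : B.Nonempty) :
    ∃ a ∈ A, ∃ b ∈ B, G.dist a b = dSet G A B := by
  have hne : {k | ∃ a ∈ A, ∃ b ∈ B, G.dist a b = k}.Nonempty :=
    ⟨G.dist hA.choose hB.choose, hA.choose, hA.choose_spec, hB.choose, hB.choose_spec, rfl⟩
  exact Nat.sInf_mem hne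

lemma dSet_le {A B : Set V} {a b : V} (ha : a ∈ A) (hb : b ∈ B) :
    dSet G A B ≤ G.dist a b :=
  Nat.sInf_le ⟨a, ha, b, hb, rfl⟩

lemma reach_of_disjoint_parts (hG : IsMedianGraph G) (h2 : TwoConnected G) :
    ∀ (n : ℕ) (P Q : {P : Set (Set V) // IsConvexSplit G P}) (Bp Bq : Set V),
      Bp ∈ P.1 → Bq ∈ Q.1 → Bp ∩ Bq = ∅ → dSet G Bp Bq ≤ n →
      (IncGraph G).Reachable P Q := by
  have hc := hG.1
  intro n
  induction n using Nat.strong_induction_on with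
  | _ n ih =>
  intro P Q Bp Bq hBp hBq hdisj hn
  obtain ⟨Ap, hPeq, hBpne, hApne, hBpc, hApc, hPu, hPd⟩ := split_parts P.2 hBp
  obtain ⟨Aq, hQeq, hBqne, hAqne, hBqc, hAqc, hQu, hQd⟩ := split_parts Q.2 hBq
  obtain ⟨bp, hbp, bq, hbq, hd⟩ := dSet_exists (G := G) hBpne hBqne
  set m := dSet G Bp Bq with hm
  have hbqBp : bq ∉ Bp := fun h => by
    have : bq ∈ Bp ∩ Bq := ⟨h, hbq⟩
    rw [hdisj] at this
    exact this
  have hbpBq : bp ∉ Bq := fun h => by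
    have : bp ∈ Bp ∩ Bq := ⟨hbp, h⟩
    rw [hdisj] at this
    exact this
  have hm0 : m ≠ 0 := by
    intro h0
    rw [h0] at hd
    exact hbqBp ((hc.dist_eq_zero_iff.1 hd) ▸ hbp)
  by_cases hm1 : m = 1
  · rw [hm1] at hd
    have hadj : G.Adj bp bq := dist_eq_one_iff_adj.1 hd
    have hbqAp : bq ∈ Ap := by
      have : bq ∈ Bp ∪ Ap := hPu ▸ Set.mem_univ bq
      exact this.resolve_left hbqBp
    have hbpAq : bp ∈ Aq := by
      have : bp ∈ Bq ∪ Aq := hQu ▸ Set.mem_univ bp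
      exact this.resolve_left hbpBq
    have hPW := parts_eq_W hG hBpc hApc hPu hPd hbp hbqAp hadj
    have hQW := parts_eq_W hG hBqc hAqc hQu hQd hbq hbpAq hadj.symm
    have hPQ : P = Q := by
      apply Subtype.ext
      rw [hPeq, hQeq, hPW.1, hPW.2, hQW.1, hQW.2, Set.pair_comm]
    rw [hPQ]
  obtain ⟨p, hp⟩ := hc.exists_walk_length_eq_dist bp bq
  rw [hd] at hp
  by_cases hm2 : m = 2
  · -- distance two: go through the local Λ-graph at the middle vertex
    set x := p.getVert 1 with hx
    have hadj1 : G.Adj bp x := by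
      have := p.adj_getVert_succ (i := 0) (by omega)
      rwa [p.getVert_zero] at this
    have hadj2 : G.Adj x bq := by
      have := p.adj_getVert_succ (i := 1) (by omega)
      have h2' : p.getVert 2 = bq := by
        have hgl : p.getVert p.length = bq := p.getVert_length
        rwa [hp, hm2] at hgl
      rwa [h2'] at this
    have hxBp : x ∉ Bp := by
      intro hmem
      have := dSet_le (G := G) hmem hbq
      rw [adj_dist hadj2] at this
      omega
    have hxBq : x ∉ Bq := by
      intro hmem
      have := dSet_le (G := G) hbp hmem
      rw [adj_dist hadj1] at this
      omega
    have hxAp : x ∈ Ap := ((hPu ▸ Set.mem_univ x : x ∈ Bp ∪ Ap)).resolve_left hxBp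
    have hxAq : x ∈ Aq := ((hQu ▸ Set.mem_univ x : x ∈ Bq ∪ Aq)).resolve_left hxBq
    have hPW := parts_eq_W hG hBpc hApc hPu hPd hbp hxAp hadj1
    have hQW := parts_eq_W hG hBqc hAqc hQu hQd hbq hxAq hadj2.symm
    have hbpx : bp ≠ x := hadj1.ne
    have hbqx : bq ≠ x := (hadj2.symm).ne
    have hreach := (h2.2 x).preconnected ⟨bp, hbpx⟩ ⟨bq, hbqx⟩
    rcases chain_of_reach hbpx hbqx hreach with heq | ⟨L, hch, hmem⟩
    · exfalso; rw [heq] at hd; rw [SimpleGraph.dist_self] at hd; omega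
    · have hrtg := lam_of_walk hG x
        ((bp :: L ++ [bq]).length + ((bp :: L ++ [bq]).map (G.dist x)).sum) bp bq L
        hadj1.symm hadj2 hch hmem (le_refl _)
      have hfin := lam_reach hG hadj1 hrtg hadj2.symm
      have hPfix : P = ⟨{W G bp x, W G x bp}, w_split hG hadj1⟩ := by
        apply Subtype.ext
        rw [hPeq, hPW.1, hPW.2]
      have hQfix : Q = ⟨{W G bq x, W G x bq}, w_split hG hadj2.symm⟩ := by
        apply Subtype.ext
        rw [hQeq, hQW.1, hQW.2]
      rw [hPfix, hQfix]
      exact hfin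
  · -- distance at least three
    have hm3 : 3 ≤ m := by omega
    set x1 := p.getVert 1 with hx1
    set x2 := p.getVert 2 with hx2
    have hadj1 : G.Adj bp x1 := by
      have := p.adj_getVert_succ (i := 0) (by omega)
      rwa [p.getVert_zero] at this
    have hadj12 : G.Adj x1 x2 := p.adj_getVert_succ (i := 1) (by omega)
    have u1 : G.dist bp x1 ≤ 1 := by rw [hx1]; exact dist_getVert_le hc p 1
    have u2 : G.dist x1 bq ≤ m - 1 := by
      rw [hx1]
      have := getVert_dist_le p 1
      rwa [hp] at this
    have u3 : G.dist bp x2 ≤ 2 := by rw [hx2]; exact dist_getVert_le hc p 2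
    have u4 : G.dist x2 bq ≤ m - 2 := by
      rw [hx2]
      have := getVert_dist_le p 2
      rwa [hp] at this
    have hd1 : G.dist bp x1 = 1 ∧ G.dist x1 bq = m - 1 := by
      have t := hc.dist_triangle (u := bp) (v := x1) (w := bq)
      omega
    have hd2 : G.dist bp x2 = 2 ∧ G.dist x2 bq = m - 2 := by
      have t := hc.dist_triangle (u := bp) (v := x2) (w := bq)
      omega
    have hx1Bp : x1 ∉ Bp := fun hmem => by
      have := dSet_le (G := G) hmem hbq; omega
    have hx1Bq : x1 ∉ Bq := fun hmem => by
      have := dSet_le (G := G) hbp hmem; omega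
    have hx2Bp : x2 ∉ Bp := fun hmem => by
      have := dSet_le (G := G) hmem hbq; omega
    have hx2Bq : x2 ∉ Bq := fun hmem => by
      have := dSet_le (G := G) hbp hmem; omega
    have hx1Ap : x1 ∈ Ap := ((hPu ▸ Set.mem_univ x1 : x1 ∈ Bp ∪ Ap)).resolve_left hx1Bp
    have hx1Aq : x1 ∈ Aq := ((hQu ▸ Set.mem_univ x1 : x1 ∈ Bq ∪ Aq)).resolve_left hx1Bq
    have hx2Ap : x2 ∈ Ap := ((hPu ▸ Set.mem_univ x2 : x2 ∈ Bp ∪ Ap)).resolve_left hx2Bp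
    have hx2Aq : x2 ∈ Aq := ((hQu ▸ Set.mem_univ x2 : x2 ∈ Bq ∪ Aq)).resolve_left hx2Bq
    set T : {P : Set (Set V) // IsConvexSplit G P} :=
      ⟨{W G x1 x2, W G x2 x1}, w_split hG hadj12⟩ with hT
    have hbpW1 : bp ∈ W G x1 x2 := by
      rw [mem_W, hd1.1, hd2.1]
    have hbqW2 : bq ∈ W G x2 x1 := by
      rw [mem_W]
      have c1 : G.dist bq x2 = G.dist x2 bq := SimpleGraph.dist_comm ..
      have c2 : G.dist bq x1 = G.dist x1 bq := SimpleGraph.dist_comm ..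
      omega
    have hx1W1 : x1 ∈ W G x1 x2 := base_mem_W hadj12
    have hx2W2 : x2 ∈ W G x2 x1 := base_mem_W hadj12.symm
    have R2 : (IncGraph G).Reachable T Q := by
      by_cases hinc : SplitsIncompatible T.1 Q.1
      · exact (inc_adj hinc).reachable
      · simp only [SplitsIncompatible, not_forall] at hinc
        obtain ⟨A, hA, B, hB, hAB⟩ := hinc
        have hABe : A ∩ B = ∅ := Set.not_nonempty_iff_eq_empty.1 hAB
        have hA' : A = W G x1 x2 ∨ A = W G x2 x1 := hA
        rw [hQeq] at hB
        have hB' : B = Bq ∨ B = Aq := hB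
        rcases hA' with rfl | rfl <;> rcases hB' with hBc | hBc <;> rw [hBc] at hABe
        · refine ih (m - 1) (by omega) T Q (W G x1 x2) Bq (Or.inl rfl) hBq hABe ?_
          have := dSet_le (G := G) hx1W1 hbq
          omega
        · exact absurd hABe (by
            intro h
            have hw : x1 ∈ W G x1 x2 ∩ Aq := ⟨hx1W1, hx1Aq⟩
            rw [h] at hw; exact hw)
        · exact absurd hABe (by
            intro h
            have hw : bq ∈ W G x2 x1 ∩ Bq := ⟨hbqW2, hbq⟩
            rw [h] at hw; exact hw)
        · exact absurd hABe (by
            intro h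
            have hw : x2 ∈ W G x2 x1 ∩ Aq := ⟨hx2W2, hx2Aq⟩
            rw [h] at hw; exact hw)
    have R1 : (IncGraph G).Reachable P T := by
      by_cases hinc : SplitsIncompatible T.1 P.1
      · exact ((inc_adj hinc).reachable).symm
      · simp only [SplitsIncompatible, not_forall] at hinc
        obtain ⟨A, hA, B, hB, hAB⟩ := hinc
        have hABe : A ∩ B = ∅ := Set.not_nonempty_iff_eq_empty.1 hAB
        have hA' : A = W G x1 x2 ∨ A = W G x2 x1 := hA
        rw [hPeq] at hB
        have hB' : B = Bp ∨ B = Ap := hB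
        rcases hA' with rfl | rfl <;> rcases hB' with hBc | hBc <;> rw [hBc] at hABe
        · exact absurd hABe (by
            intro h
            have hw : bp ∈ W G x1 x2 ∩ Bp := ⟨hbpW1, hbp⟩
            rw [h] at hw; exact hw)
        · exact absurd hABe (by
            intro h
            have hw : x1 ∈ W G x1 x2 ∩ Ap := ⟨hx1W1, hx1Ap⟩
            rw [h] at hw; exact hw)
        · refine ih 2 (by omega) P T Bp (W G x2 x1) hBp (Or.inr rfl) ?_ ?_
          · rw [Set.inter_comm]; exact hABe
          · have := dSet_le (G := G) hbp hx2W2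
            omega
        · exact absurd hABe (by
            intro h
            have hw : x2 ∈ W G x2 x1 ∩ Ap := ⟨hx2W2, hx2Ap⟩
            rw [h] at hw; exact hw)
    exact R1.trans R2


lemma exists_edge (hc : G.Connected) {a b : V} (hab : a ≠ b) : ∃ u w : V, G.Adj u w := by
  obtain ⟨p⟩ := hc.preconnected a b
  cases p with
  | nil => exact absurd rfl hab
  | cons h q => exact ⟨_, _, h⟩

lemma forward (hG : IsMedianGraph G) (hcard : ∃ a b c : V, a ≠ b ∧ a ≠ c ∧ b ≠ c)
    (h2 : TwoConnected G) : (IncGraph G).Connected := by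
  obtain ⟨a, b, c, hab, -, -⟩ := hcard
  obtain ⟨u, w, huw⟩ := exists_edge hG.1 hab
  rw [SimpleGraph.connected_iff]
  constructor
  · intro P Q
    by_cases hPQ : P = Q
    · rw [hPQ]
    by_cases hinc : SplitsIncompatible P.1 Q.1
    · exact (inc_adj hinc).reachable
    · simp only [SplitsIncompatible, not_forall] at hinc
      obtain ⟨A, hA, B, hB, hAB⟩ := hinc
      exact reach_of_disjoint_parts hG h2 (dSet G A B) P Q A B hA hB
        (Set.not_nonempty_iff_eq_empty.1 hAB) (le_refl _)
  · exact ⟨⟨{W G u w, W G w u}, w_split hG huw⟩⟩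

/-! ### Converse: a cut vertex disconnects the incompatibility graph -/

lemma nbr_avoid : ∀ {u v : V} (_ : G.Walk u v), u ≠ v →
    ∃ c, G.Adj c v ∧ ∃ (q : G.Walk u c), ∀ z ∈ q.support, z ≠ v := by
  intro u v p
  induction p with
  | nil => intro h; exact absurd rfl h
  | @cons a y e h q ih =>
    intro huv
    by_cases hyv : y = e
    · subst hyv
      refine ⟨a, h, Walk.nil, ?_⟩
      intro z hz
      simp [Walk.support_nil] at hz
      exact hz ▸ huv
    · obtain ⟨c, hcv, q', hq'⟩ := ih hyv
      refine ⟨c, hcv, Walk.cons h q', ?_⟩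
      intro z hz
      rw [Walk.support_cons] at hz
      rcases List.mem_cons.1 hz with rfl | hz'
      · exact huv
      · exact hq' z hz'

lemma converse (hG : IsMedianGraph G) (hcard : ∃ a b c : V, a ≠ b ∧ a ≠ c ∧ b ≠ c)
    (hnc : ¬ TwoConnected G) : ¬ (IncGraph G).Connected := by
  classical
  have hc := hG.1
  have hv : ∃ v : V, ¬ (G.induce {u | u ≠ v}).Connected := by
    by_contra hall
    push_neg at hall
    exact hnc ⟨hc, hall⟩
  obtain ⟨v, hv⟩ := hv
  obtain ⟨a, b, c, hab, hac, hbc⟩ := hcard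
  have hne : Nonempty ({u | u ≠ v} : Set V) := by
    by_cases hav : a = v
    · exact ⟨⟨b, fun h => hab (hav.trans h.symm)⟩⟩
    · exact ⟨⟨a, hav⟩⟩
  have hpre : ¬ (G.induce {u | u ≠ v}).Preconnected := fun hp =>
    hv (by rw [SimpleGraph.connected_iff]; exact ⟨hp, hne⟩)
  rw [SimpleGraph.Preconnected] at hpre
  push_neg at hpre
  obtain ⟨x0, y0, hxy⟩ := hpre
  set C : Set V := {u : V | ∃ h : u ≠ v, (G.induce {u | u ≠ v}).Reachable x0 ⟨u, h⟩}
    with hCdef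
  have hy0C : y0.1 ∉ C := by
    rintro ⟨h, hr⟩
    have heq : (⟨y0.1, h⟩ : {u | u ≠ v}) = y0 := Subtype.ext rfl
    exact hxy (heq ▸ hr)
  have hcross : ∀ u w : V, u ∈ C → w ≠ v → w ∉ C →
      G.dist u v + G.dist v w = G.dist u w := by
    intro u w huC hwv hwC
    obtain ⟨huv, hru⟩ := huC
    have hall : ∀ (q : G.Walk u w), v ∈ q.support := by
      intro q
      by_contra hno
      have hno' : ∀ z ∈ q.support, z ≠ v := fun z hz hzv => hno (hzv ▸ hz)
      have hr := reach_induce q hno'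
      exact hwC ⟨hwv, hru.trans hr⟩
    obtain ⟨q, hq⟩ := hc.exists_walk_length_eq_dist u w
    have vmem : v ∈ q.support := hall q
    have t1 : G.dist u v ≤ (q.takeUntil v vmem).length := SimpleGraph.dist_le _
    have t2 : G.dist v w ≤ (q.dropUntil v vmem).length := SimpleGraph.dist_le _
    have hsplit : (q.takeUntil v vmem).length + (q.dropUntil v vmem).length = q.length := by
      have := congrArg Walk.length (q.take_spec vmem)
      rwa [Walk.length_append] at this
    have t3 : G.dist u w ≤ G.dist u v + G.dist v w := hc.dist_triangle
    omega
  have hpart : ∀ (H : Set V), IsConvexSet G H → v ∉ H → (H ⊆ C ∨ H ∩ C = ∅) := by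
    intro H hconv hvH
    by_contra hcon
    push_neg at hcon
    obtain ⟨hnsub, hninter⟩ := hcon
    obtain ⟨γ, hγH, hγC⟩ := Set.not_subset.1 hnsub
    obtain ⟨β, hβH, hβC⟩ := hninter
    have hγv : γ ≠ v := fun h => hvH (h ▸ hγH)
    have hvI : v ∈ gInterval G β γ := hcross β γ hβC hγv hγC
    exact hvH (hconv β hβH γ hγH hvI)
  classical
  set col : {P : Set (Set V) // IsConvexSplit G P} → Prop :=
    fun P => ∃ H ∈ P.1, v ∉ H ∧ H ⊆ C with hcol
  have hcol_adj : ∀ P Q, (IncGraph G).Adj P Q → col P → col Q := by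
    intro P Q hadj hcolP
    obtain ⟨H, hHP, hvH, hHC⟩ := hcolP
    obtain ⟨A, B, hQeq, hAne, hBne, hAc, hBc, hU, hD⟩ := Q.2
    have hvAB : v ∈ A ∪ B := hU ▸ Set.mem_univ v
    obtain ⟨H', hH'Q, hvH', hH'c⟩ :
        ∃ H', H' ∈ Q.1 ∧ v ∉ H' ∧ IsConvexSet G H' := by
      by_cases hvA : v ∈ A
      · exact ⟨B, by rw [hQeq]; exact Set.mem_insert_iff.2 (Or.inr rfl),
          fun hvB => Set.disjoint_left.1 hD hvA hvB, hBc⟩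
      · exact ⟨A, by rw [hQeq]; exact Set.mem_insert _ _, hvA, hAc⟩
    rcases hpart H' hH'c hvH' with hsub | hempty
    · exact ⟨H', hH'Q, hvH', hsub⟩
    · exfalso
      have hHH' : H ∩ H' = ∅ := by
        ext z
        simp only [Set.mem_inter_iff, Set.mem_empty_iff_false, iff_false, not_and]
        intro hzH hzH'
        have : z ∈ H' ∩ C := ⟨hzH', hHC hzH⟩
        rw [hempty] at this
        exact this
      rw [IncGraph, SimpleGraph.fromRel_adj] at hadj
      obtain ⟨-, hor⟩ := hadj
      rcases hor with hinc | hinc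
      · obtain ⟨z, hz⟩ := hinc H hHP H' hH'Q
        rw [hHH'] at hz
        exact hz
      · obtain ⟨z, hz1, hz2⟩ := hinc H' hH'Q H hHP
        have : z ∈ H ∩ H' := ⟨hz2, hz1⟩
        rw [hHH'] at this
        exact this
  have hcol_reach : ∀ P Q, (IncGraph G).Reachable P Q → col P → col Q := by
    intro P Q hr
    obtain ⟨w⟩ := hr
    induction w with
    | nil => exact id
    | cons h q ih => exact fun hp => ih (hcol_adj _ _ h hp)
  obtain ⟨p0⟩ := hc.preconnected x0.1 v
  obtain ⟨cc, hccv, q0, hq0⟩ := nbr_avoid p0 x0.2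
  have hccC : cc ∈ C := ⟨hccv.ne, reach_induce q0 hq0⟩
  obtain ⟨p1⟩ := hc.preconnected y0.1 v
  obtain ⟨cc', hcc'v, q1, hq1⟩ := nbr_avoid p1 y0.2
  have hcc'C : cc' ∉ C := by
    rintro ⟨h, hr⟩
    have hry : (G.induce {u | u ≠ v}).Reachable y0 ⟨cc', h⟩ := reach_induce q1 hq1
    exact hxy (hr.trans hry.symm)
  set P0 : {P : Set (Set V) // IsConvexSplit G P} :=
    ⟨{W G cc v, W G v cc}, w_split hG hccv⟩ with hP0
  set P1 : {P : Set (Set V) // IsConvexSplit G P} :=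
    ⟨{W G cc' v, W G v cc'}, w_split hG hcc'v⟩ with hP1
  have hWccC : W G cc v ⊆ C := by
    intro z hz
    by_contra hzC
    have hzv : z ≠ v := by
      intro h
      rw [h, mem_W, SimpleGraph.dist_self, adj_dist hccv.symm] at hz
      omega
    have hx := hcross cc z hccC hzv hzC
    rw [mem_W] at hz
    have c1 : G.dist z c = G.dist z c := rfl
    have c2 : G.dist cc z = G.dist z cc := SimpleGraph.dist_comm ..
    have c3 : G.dist v z = G.dist z v := SimpleGraph.dist_comm ..
    rw [adj_dist hccv] at hx
    omega
  have hcolP0 : col P0 := by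
    refine ⟨W G cc v, Set.mem_insert _ _, ?_, hWccC⟩
    intro h
    exact w_disjoint h (base_mem_W hccv.symm)
  have hncolP1 : ¬ col P1 := by
    rintro ⟨H, hH, hvH, hHC⟩
    have hH' : H = W G cc' v ∨ H = W G v cc' := hH
    rcases hH' with rfl | rfl
    · exact hcc'C (hHC (base_mem_W hcc'v))
    · exact hvH (base_mem_W hcc'v.symm)
  intro hconn
  exact hncolP1 (hcol_reach P0 P1 (hconn.preconnected P0 P1) hcolP0)

end MedianPf

/-- A median graph with at least three vertices is 2-connected iff the
incompatibility graph of its convex splits is connected. -/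
theorem median_twoConnected_iff_incGraph_connected {V : Type}
    (G : SimpleGraph V) (hG : IsMedianGraph G)
    (hcard : ∃ a b c : V, a ≠ b ∧ a ≠ c ∧ b ≠ c) :
    TwoConnected G ↔ (IncGraph G).Connected := by
  constructor
  · exact MedianPf.forward hG hcard
  · intro h
    by_contra hnc
    exact MedianPf.converse hG hcard hnc h
end

section
/- Let G be a median graph whose edges are colored in such a way that any two opposite edges of every 4-cycle of G receive the same color. Then G contains a monochromatic cycle if and only if G contains a monochromatic 4-cycle. -/
open SimpleGraph

/-- A cycle (given as a closed walk which is a cycle) is monochromatic for an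
edge coloring `c` if all of its edges receive the same color. -/
def MonochromaticCycle {V C : Type} {G : SimpleGraph V} (c : Sym2 V → C)
    {v : V} (w : G.Walk v v) : Prop :=
  ∃ k : C, ∀ e ∈ w.edges, c e = k

/-- A path from a vertex to itself has length zero. -/
lemma isPath_loop_length_eq_zero {V : Type} {G : SimpleGraph V} {a : V}
    {p : G.Walk a a} (hp : p.IsPath) : p.length = 0 := by
  by_contra h
  have hnil : ¬ p.Nil := by rw [Walk.not_nil_iff_lt_length]; omega
  obtain ⟨x, hax, q, rfl⟩ := Walk.not_nil_iff.mp hnil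
  rw [Walk.cons_isPath_iff] at hp
  exact hp.2 q.end_mem_support

/-- If a path from `a` to `b` contains the edge `s(b,a)`, it has length 1. -/
lemma edge_closing_length {V : Type} {G : SimpleGraph V} {a b : V}
    (p : G.Walk a b) (hp : p.IsPath) (he : s(b, a) ∈ p.edges) : p.length = 1 := by
  cases p with
  | nil => simp at he
  | @cons _ x _ h q =>
    rw [Walk.edges_cons, List.mem_cons] at he
    rcases he with he | he
    · rw [Sym2.eq_iff] at he
      rcases he with ⟨h1, h2⟩ | ⟨h1, h2⟩
      · subst h2; exact absurd rfl h.ne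
      · subst h1
        have := isPath_loop_length_eq_zero hp.of_cons
        simp [Walk.length_cons, this]
    · exfalso
      rw [Walk.cons_isPath_iff] at hp
      exact hp.2 (q.snd_mem_support_of_mem_edges he)

/-- In a median graph, the distances to `z` of two adjacent vertices differ by
exactly one. -/
lemma adj_dist_succ {V : Type} (G : SimpleGraph V) (hG : IsMedianGraph G)
    (z a b : V) (hab : G.Adj a b) :
    G.dist z a + 1 = G.dist z b ∨ G.dist z b + 1 = G.dist z a := by
  obtain ⟨m, ⟨h1, h2, h3⟩, -⟩ := hG.2 a b z
  simp only [gInterval, Set.mem_setOf_eq] at h1 h2 h3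
  have hd1 : G.dist a b = 1 := dist_eq_one_iff_adj.mpr hab
  rw [hd1] at h1
  have hma : G.dist a m = 0 ∨ G.dist m b = 0 := by omega
  rcases hma with h | h
  · have hma' : a = m := hG.1.dist_eq_zero_iff.mp h
    subst hma'
    left
    have c1 : G.dist b a = 1 := by rw [SimpleGraph.dist_comm]; exact hd1
    have c2 : G.dist a z = G.dist z a := SimpleGraph.dist_comm
    have c3 : G.dist b z = G.dist z b := SimpleGraph.dist_comm
    omega
  · have hmb : m = b := hG.1.dist_eq_zero_iff.mp h
    rw [hmb] at h3
    right
    have c2 : G.dist b z = G.dist z b := SimpleGraph.dist_comm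
    have c3 : G.dist a z = G.dist z a := SimpleGraph.dist_comm
    omega

/-- Key inductive step: there is no monochromatic cycle of minimal length
`L ≥ 5`. -/
lemma no_long_mono_cycle {V C : Type} (G : SimpleGraph V) (hG : IsMedianGraph G)
    (c : Sym2 V → C)
    (hc : ∀ x1 x2 x3 x4 : V, G.Adj x1 x2 → G.Adj x2 x3 → G.Adj x3 x4 →
      G.Adj x4 x1 → x1 ≠ x3 → x2 ≠ x4 → c s(x1, x2) = c s(x3, x4))
    (k : C) (L : ℕ) (hL5 : 5 ≤ L)
    (hmin : ∀ (b : V) (D : G.Walk b b), D.IsCycle → (∀ e ∈ D.edges, c e = k) →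
      D.length < L → False)
    (z : V) :
    ∀ n : ℕ, ∀ (a : V) (W : G.Walk a a), W.IsCycle →
      (∀ e ∈ W.edges, c e = k) → W.length = L → z ∈ W.support.tail →
      (W.support.tail.map (G.dist z)).sum = n → False := by
  classical
  have hconn := hG.1
  intro n
  induction n using Nat.strong_induction_on with
  | _ n IH =>
  intro a W hW hmono hlen hz hsum
  -- choose a vertex `v` of the cycle furthest from `z`
  obtain ⟨v, hv1, hv2⟩ := W.support.toFinset.exists_max_image (G.dist z)
    ⟨a, by simp [List.mem_toFinset]⟩
  have hvmem : v ∈ W.support := List.mem_toFinset.mp hv1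
  have hvmax : ∀ x ∈ W.support, G.dist z x ≤ G.dist z v := fun x hx =>
    hv2 x (List.mem_toFinset.mpr hx)
  have hnil : ¬ W.Nil := Walk.not_nil_iff_lt_length.mpr (by omega)
  have hdzv : 1 ≤ G.dist z v := by
    by_contra h
    have h0 : ∀ x ∈ W.support, x = z := fun x hx =>
      (hconn.dist_eq_zero_iff.mp
        (show G.dist z x = 0 by have := hvmax x hx; omega)).symm
    obtain ⟨x, hax, q, heq⟩ := Walk.not_nil_iff.mp hnil
    have h1 : a = z := h0 a W.start_mem_support
    have h2 : x = z := by
      apply h0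
      rw [heq, Walk.support_cons]
      exact List.mem_cons_of_mem _ q.start_mem_support
    rw [h1, h2] at hax
    exact hax.ne rfl
  have hzv : z ≠ v := by
    intro h
    subst h
    rw [SimpleGraph.dist_self] at hdzv
    omega
  -- rotate the cycle so it is based at `v`
  have hWr := hW.rotate hvmem
  have hper := W.rotate_edges v hvmem
  have hmonor : ∀ e ∈ (W.rotate v hvmem).edges, c e = k := fun e he =>
    hmono e (hper.perm.subset he)
  have hlenr : (W.rotate v hvmem).length = L := by
    rw [← Walk.length_edges, hper.perm.length_eq, Walk.length_edges, hlen]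
  have hstail := W.support_rotate v hvmem
  have hzr : z ∈ (W.rotate v hvmem).support.tail := (hstail.perm.mem_iff).mpr hz
  have hsumr : ((W.rotate v hvmem).support.tail.map (G.dist z)).sum = n := by
    rw [← hsum]
    exact (hstail.perm.map (G.dist z)).sum_eq
  have hmaxr : ∀ x ∈ (W.rotate v hvmem).support, G.dist z x ≤ G.dist z v := by
    intro x hx
    rw [Walk.mem_support_iff] at hx
    rcases hx with rfl | hx
    · exact le_refl _
    · exact hvmax x (List.mem_of_mem_tail ((hstail.perm.mem_iff).mp hx))
  -- decompose the rotated cycle as v — w — ⋯ — u — v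
  have hnilr : ¬ (W.rotate v hvmem).Nil :=
    Walk.not_nil_iff_lt_length.mpr (by omega)
  obtain ⟨w, hvw, R, heq⟩ := Walk.not_nil_iff.mp hnilr
  rw [heq] at hWr hmonor hlenr hzr hsumr hmaxr
  have hnilR : ¬ R.reverse.Nil := by
    rw [Walk.not_nil_iff_lt_length, Walk.length_reverse]
    simp only [Walk.length_cons] at hlenr
    omega
  obtain ⟨u, hvu, Q, heq2⟩ := Walk.not_nil_iff.mp hnilR
  have hReq : R = Q.reverse.concat hvu.symm := by
    rw [Walk.concat_eq_append, ← Walk.reverse_cons (h := hvu), ← heq2, Walk.reverse_reverse]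
  rw [hReq] at hWr hmonor hlenr hzr hsumr hmaxr
  set R' := Q.reverse with hR'def
  have huv : G.Adj u v := hvu.symm
  have hlenR' : R'.length + 2 = L := by
    simp only [Walk.length_cons, Walk.length_concat] at hlenr
    omega
  -- support facts
  have hndtail : (R'.support ++ [v]).Nodup := by
    have hnd := hWr.support_nodup
    simpa [Walk.support_cons, Walk.support_concat, List.concat_eq_append] using hnd
  have hndR : R'.support.Nodup := (List.nodup_append.mp hndtail).1
  have hvnotin : v ∉ R'.support := by
    intro hmem
    have := List.nodup_append.mp hndtail
    exact (this.2.2 v hmem v (List.mem_singleton_self v)) rfl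
  have hpathR' : R'.IsPath := Walk.IsPath.mk' hndR
  have hzR : z ∈ R'.support := by
    rw [Walk.support_cons, List.tail_cons, Walk.support_concat,
      List.mem_append] at hzr
    rcases hzr with h | h
    · exact h
    · exact absurd (List.mem_singleton.mp h) hzv
  have hwu : w ≠ u := by
    intro h
    subst h
    have := isPath_loop_length_eq_zero hpathR'
    omega
  have hwmem : w ∈ (Walk.cons hvw (R'.concat huv)).support := by
    rw [Walk.support_cons]
    refine List.mem_cons_of_mem _ ?_
    rw [Walk.support_concat, List.mem_append]
    exact Or.inl R'.start_mem_support
  have humem : u ∈ (Walk.cons hvw (R'.concat huv)).support := by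
    rw [Walk.support_cons]
    refine List.mem_cons_of_mem _ ?_
    rw [Walk.support_concat, List.mem_append]
    exact Or.inl R'.end_mem_support
  -- distance facts
  have hdw : G.dist z w + 1 = G.dist z v := by
    rcases adj_dist_succ G hG z w v hvw.symm with h | h
    · exact h
    · have := hmaxr w hwmem; omega
  have hdu : G.dist z u + 1 = G.dist z v := by
    rcases adj_dist_succ G hG z u v huv with h | h
    · exact h
    · have := hmaxr u humem; omega
  have huw2 : G.dist u w = 2 := by
    have ht : G.dist u w ≤ G.dist u v + G.dist v w := hconn.dist_triangle
    have e1 : G.dist u v = 1 := dist_eq_one_iff_adj.mpr huv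
    have e2 : G.dist v w = 1 := dist_eq_one_iff_adj.mpr hvw
    have h0 : G.dist u w ≠ 0 := fun h => hwu (hconn.dist_eq_zero_iff.mp h).symm
    have h1 : G.dist u w ≠ 1 := by
      intro h
      have hA : G.Adj u w := dist_eq_one_iff_adj.mp h
      have c1 : G.dist z u = G.dist z w := by omega
      rcases adj_dist_succ G hG z u w hA with h' | h' <;> omega
    omega
  -- the median of u, w, z
  obtain ⟨m, ⟨hm1, hm2, hm3⟩, -⟩ := hG.2 u w z
  simp only [gInterval, Set.mem_setOf_eq] at hm1 hm2 hm3
  rw [huw2] at hm1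
  have hmnu : m ≠ u := by
    intro h
    subst h
    have c1 : G.dist w m = G.dist m w := SimpleGraph.dist_comm
    have c2 : G.dist m z = G.dist z m := SimpleGraph.dist_comm
    have c3 : G.dist w z = G.dist z w := SimpleGraph.dist_comm
    have c0 : G.dist m m = 0 := by simp
    omega
  have hmnw : m ≠ w := by
    intro h
    subst h
    have c1 : G.dist u m = 2 := huw2
    have c2 : G.dist m z = G.dist z m := SimpleGraph.dist_comm
    have c3 : G.dist u z = G.dist z u := SimpleGraph.dist_comm
    omega
  have h0um : G.dist u m ≠ 0 := fun h => hmnu (hconn.dist_eq_zero_iff.mp h).symm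
  have h0mw : G.dist m w ≠ 0 := fun h => hmnw (hconn.dist_eq_zero_iff.mp h)
  have hdum : G.dist u m = 1 := by omega
  have hdmw : G.dist m w = 1 := by omega
  have hAum : G.Adj u m := dist_eq_one_iff_adj.mp hdum
  have hAmw : G.Adj m w := dist_eq_one_iff_adj.mp hdmw
  have hdm : G.dist z m + 2 = G.dist z v := by
    have c2 : G.dist m z = G.dist z m := SimpleGraph.dist_comm
    have c3 : G.dist u z = G.dist z u := SimpleGraph.dist_comm
    omega
  have hmv : m ≠ v := by
    intro h
    rw [h] at hdm
    omega
  -- colors of the new square's edges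
  have hkvw : c s(v, w) = k := hmonor s(v, w) (by simp)
  have hkuv : c s(u, v) = k := by
    apply hmonor s(u, v)
    simp [Walk.edges_cons, Walk.edges_concat, List.concat_eq_append]
  have hkR : ∀ e ∈ R'.edges, c e = k := by
    intro e he
    apply hmonor e
    rw [Walk.edges_cons, Walk.edges_concat, List.concat_eq_append]
    exact List.mem_cons_of_mem _ (List.mem_append.mpr (Or.inl he))
  have hcmu : c s(m, u) = k :=
    (hc v w m u hvw hAmw.symm hAum.symm huv (Ne.symm hmv) hwu).symm.trans hkvw
  have hcwm : c s(w, m) = k :=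
    (hc w m u v hAmw.symm hAum.symm huv hvw hwu hmv).trans hkuv
  -- main case distinction
  by_cases hmem : m ∈ R'.support
  · -- the median lies on the cycle: we find a strictly shorter
    -- monochromatic cycle, contradicting minimality of L
    have hspec := R'.take_spec hmem
    have hlen12 : (R'.takeUntil m hmem).length + (R'.dropUntil m hmem).length
        = R'.length := by
      have := congrArg Walk.length hspec
      rw [Walk.length_append] at this
      exact this
    have hS1path : (R'.takeUntil m hmem).IsPath := hpathR'.takeUntil _
    have hS2path : (R'.dropUntil m hmem).IsPath := hpathR'.dropUntil _
    have hS1len0 : (R'.takeUntil m hmem).length ≠ 0 := by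
      intro h
      exact hAmw.ne (Walk.eq_of_length_eq_zero h).symm
    by_cases hS1 : 2 ≤ (R'.takeUntil m hmem).length
    · have hne : s(m, w) ∉ (R'.takeUntil m hmem).edges := by
        intro hin
        have := edge_closing_length _ hS1path hin
        omega
      have hcyc : (Walk.cons hAmw (R'.takeUntil m hmem)).IsCycle :=
        (Walk.cons_isCycle_iff _ hAmw).mpr ⟨hS1path, hne⟩
      refine hmin m _ hcyc ?_ ?_
      · intro e he
        rw [Walk.edges_cons, List.mem_cons] at he
        rcases he with rfl | he
        · rw [Sym2.eq_swap]; exact hcwm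
        · exact hkR e (R'.edges_takeUntil_subset hmem he)
      · rw [Walk.length_cons]
        omega
    · -- here the piece before m has length 1; use the other piece
      have hS2len : 2 ≤ (R'.dropUntil m hmem).length := by omega
      have hne : s(m, u) ∉ (R'.dropUntil m hmem).reverse.edges := by
        intro hin
        rw [Walk.edges_reverse, List.mem_reverse] at hin
        have hin' : s(u, m) ∈ (R'.dropUntil m hmem).edges := by
          rwa [Sym2.eq_swap]
        have := edge_closing_length _ hS2path hin'
        omega
      have hcyc : (Walk.cons hAum.symm (R'.dropUntil m hmem).reverse).IsCycle :=
        (Walk.cons_isCycle_iff _ hAum.symm).mpr ⟨hS2path.reverse, hne⟩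
      refine hmin m _ hcyc ?_ ?_
      · intro e he
        rw [Walk.edges_cons, List.mem_cons] at he
        rcases he with rfl | he
        · exact hcmu
        · rw [Walk.edges_reverse, List.mem_reverse] at he
          exact hkR e (R'.edges_dropUntil_subset hmem he)
      · rw [Walk.length_cons, Walk.length_reverse]
        omega
  · -- the median is not on the cycle: push the cycle towards z
    have hpathI : (R'.concat hAum).IsPath := by
      apply Walk.IsPath.mk'
      rw [Walk.support_concat]
      rw [List.nodup_append]
      exact ⟨hndR, List.nodup_singleton m,
        fun x hx y hy => by rw [List.mem_singleton] at hy; subst hy; rintro rfl; exact hmem hx⟩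
    have hne : s(m, w) ∉ (R'.concat hAum).edges := by
      intro hin
      rw [Walk.edges_concat, List.concat_eq_append, List.mem_append] at hin
      rcases hin with hin | hin
      · exact hmem (R'.fst_mem_support_of_mem_edges hin)
      · rw [List.mem_singleton, Sym2.eq_iff] at hin
        rcases hin with ⟨h1, h2⟩ | ⟨h1, h2⟩
        · exact hmnu h1
        · exact hwu h2
    have hcyc : (Walk.cons hAmw (R'.concat hAum)).IsCycle :=
      (Walk.cons_isCycle_iff _ hAmw).mpr ⟨hpathI, hne⟩
    have htail : (Walk.cons hAmw (R'.concat hAum)).support.tail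
        = R'.support ++ [m] := by
      rw [Walk.support_cons, List.tail_cons, Walk.support_concat]
    have hn : (R'.support.map (G.dist z)).sum + G.dist z v = n := by
      rw [← hsumr, Walk.support_cons, List.tail_cons, Walk.support_concat,
        List.map_append, List.sum_append]
      simp
    refine IH ((R'.support.map (G.dist z)).sum + G.dist z m) (by omega)
      m _ hcyc ?_ ?_ ?_ ?_
    · intro e he
      rw [Walk.edges_cons, Walk.edges_concat, List.concat_eq_append,
        List.mem_cons, List.mem_append, List.mem_singleton] at he
      rcases he with rfl | he | rfl
      · rw [Sym2.eq_swap]; exact hcwm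
      · exact hkR e he
      · rw [Sym2.eq_swap]; exact hcmu
    · rw [Walk.length_cons, Walk.length_concat]
      omega
    · rw [htail, List.mem_append]
      exact Or.inl hzR
    · rw [htail, List.map_append, List.sum_append]
      simp

/-- Let `G` be a median graph whose edges are colored so that opposite edges of
every 4-cycle receive the same color. Then `G` contains a monochromatic cycle
iff it contains a monochromatic 4-cycle. -/
theorem monochromatic_cycle_iff_monochromatic_four_cycle {V C : Type}
    (G : SimpleGraph V) (hG : IsMedianGraph G) (c : Sym2 V → C)
    (hc : ∀ x1 x2 x3 x4 : V, G.Adj x1 x2 → G.Adj x2 x3 → G.Adj x3 x4 →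
      G.Adj x4 x1 → x1 ≠ x3 → x2 ≠ x4 → c s(x1, x2) = c s(x3, x4)) :
    (∃ (v : V) (w : G.Walk v v), w.IsCycle ∧ MonochromaticCycle c w) ↔
      (∃ (v : V) (w : G.Walk v v), w.IsCycle ∧ w.length = 4 ∧
        MonochromaticCycle c w) := by
  classical
  constructor
  · rintro ⟨v0, W0, hW0, hW0m⟩
    have hex : ∃ n : ℕ, ∃ (v : V) (w : G.Walk v v), w.IsCycle ∧
        MonochromaticCycle c w ∧ w.length = n :=
      ⟨W0.length, v0, W0, hW0, hW0m, rfl⟩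
    set L := Nat.find hex with hLdef
    obtain ⟨a, W, hW, hWm, hWlen⟩ := Nat.find_spec hex
    have hminN : ∀ d : ℕ, d < L → ¬ ∃ (v : V) (w : G.Walk v v), w.IsCycle ∧
        MonochromaticCycle c w ∧ w.length = d := fun d hd => Nat.find_min hex hd
    have h3 : 3 ≤ L := by rw [hLdef, ← hWlen]; exact hW.three_le_length
    by_cases h4 : L = 4
    · refine ⟨a, W, hW, ?_, hWm⟩
      rw [hWlen]; exact h4
    have hnilW : ¬ W.Nil := Walk.not_nil_iff_lt_length.mpr (by omega)
    have hzW : a ∈ W.support.tail := by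
      obtain ⟨x, hx, q, heq⟩ := Walk.not_nil_iff.mp hnilW
      rw [heq, Walk.support_cons, List.tail_cons]
      exact q.end_mem_support
    exfalso
    rcases (by omega : L = 3 ∨ 5 ≤ L) with h3' | h5
    · -- a triangle is impossible in a median graph
      obtain ⟨x, hax, P, h1⟩ := Walk.not_nil_iff.mp hnilW
      have hP : P.length = 2 := by
        have h := hWlen
        rw [h1, Walk.length_cons] at h
        omega
      have hnp : ¬ P.Nil := Walk.not_nil_iff_lt_length.mpr (by omega)
      obtain ⟨y, hxy, P2, h2⟩ := Walk.not_nil_iff.mp hnp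
      have hP2 : P2.length = 1 := by
        rw [h2, Walk.length_cons] at hP
        omega
      have hnp2 : ¬ P2.Nil := Walk.not_nil_iff_lt_length.mpr (by omega)
      obtain ⟨d, hyd, P3, h3''⟩ := Walk.not_nil_iff.mp hnp2
      have hP3 : P3.length = 0 := by
        rw [h3'', Walk.length_cons] at hP2
        omega
      have hda : d = a := Walk.eq_of_length_eq_zero hP3
      have hyd' : G.Adj y a := hda ▸ hyd
      have e1 : G.dist a x = 1 := dist_eq_one_iff_adj.mpr hax
      have e2 : G.dist a y = 1 := dist_eq_one_iff_adj.mpr hyd'.symm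
      rcases adj_dist_succ G hG a x y hxy with h | h <;> omega
    · obtain ⟨k, hk⟩ : ∃ k : C, ∀ e ∈ W.edges, c e = k := hWm
      have hmin' : ∀ (b : V) (D : G.Walk b b), D.IsCycle →
          (∀ e ∈ D.edges, c e = k) → D.length < L → False := by
        intro b D h1 h2 h3
        exact hminN D.length h3 ⟨b, D, h1, ⟨k, h2⟩, rfl⟩
      exact no_long_mono_cycle G hG c hc k L h5 hmin' a
        ((W.support.tail.map (G.dist a)).sum) a W hW hk hWlen hzW rfl
  · rintro ⟨v, w, h1, h2, h3⟩
    exact ⟨v, w, h1, h3⟩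
end

section
/- Let G be a finite median graph with the following property: for every three pairwise distinct, pairwise compatible convex splits s0, s1, s2 of G there exists an induced path in the incompatibility graph Inc(G) from s1 to s2 that contains no split incompatible with s0. Then G is a simplex graph; more precisely, there exists a finite graph F such that G is isomorphic to the simplex graph κ(F) and Inc(G) is isomorphic to F. -/
open SimpleGraph

/-- The simplex graph `κ(F)` of a graph `F`: vertices are the cliques of `F`
(including the empty clique), two cliques being adjacent iff one is obtained
from the other by adding a single vertex. -/
def simplexGraph {α : Type} (F : SimpleGraph α) :
    SimpleGraph {s : Finset α // F.IsClique (s : Set α)} :=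
  SimpleGraph.fromRel (fun s t =>
    ∃ a : α, a ∉ s.1 ∧ (t.1 : Set α) = insert a (s.1 : Set α))

/-- A walk is an induced path if it is a path and it contains every edge of the
graph joining two of its vertices (it has no chords). -/
def IsInducedPath {V : Type} {G : SimpleGraph V} {u v : V} (p : G.Walk u v) :
    Prop :=
  p.IsPath ∧ ∀ a ∈ p.support, ∀ b ∈ p.support, G.Adj a b → s(a, b) ∈ p.edges

set_option linter.unusedVariables false
set_option linter.unusedSectionVars false

section Basics

variable {V : Type} [Fintype V] {G : SimpleGraph V}

lemma mem_gI {u v z : V} : z ∈ gInterval G u v ↔ G.dist u z + G.dist z v = G.dist u v :=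
  Iff.rfl

lemma left_mem_gI (u v : V) : u ∈ gInterval G u v := by
  simp [mem_gI]

lemma right_mem_gI (u v : V) : v ∈ gInterval G u v := by
  simp [mem_gI]

variable (hG : IsMedianGraph G)

include hG

lemma dist_tri (x y z : V) : G.dist x z ≤ G.dist x y + G.dist y z :=
  hG.1.dist_triangle

lemma gdist_eq_zero {x y : V} (h : G.dist x y = 0) : x = y :=
  (hG.1.dist_eq_zero_iff).1 h

/-- The interval between adjacent vertices is the pair. -/
lemma gI_adj {a b : V} (hab : G.Adj a b) : gInterval G a b = {a, b} := by
  have h1 : G.dist a b = 1 := SimpleGraph.dist_eq_one_iff_adj.2 hab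
  ext z
  simp only [mem_gI, h1, Set.mem_insert_iff, Set.mem_singleton_iff]
  constructor
  · intro h
    have h0 : G.dist a z = 0 ∨ G.dist z b = 0 := by omega
    rcases h0 with h0 | h0
    · exact Or.inl (gdist_eq_zero hG h0).symm
    · exact Or.inr (gdist_eq_zero hG h0)
  · rintro (rfl | rfl) <;> simp [SimpleGraph.dist_self, h1]

/-- bipartite-type lemma: a vertex cannot be equidistant to the ends of an edge -/
lemma adj_dist_ne {p q : V} (hpq : G.Adj p q) (v : V) : G.dist v p ≠ G.dist v q := by
  intro heq
  obtain ⟨m, ⟨h1, h2, h3⟩, _⟩ := hG.2 v p q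
  have hI : m ∈ ({p, q} : Set V) := by rw [← gI_adj hG hpq]; exact h2
  have hd : G.dist p q = 1 := SimpleGraph.dist_eq_one_iff_adj.2 hpq
  rcases hI with hm | hm
  · rw [mem_gI, hm, hd] at h3
    omega
  · rw [mem_gI, hm] at h1
    have hd' : G.dist q p = 1 := SimpleGraph.dist_eq_one_iff_adj.2 hpq.symm
    rw [hd'] at h1
    omega

/-- distances to the two ends of an edge differ by exactly one -/
lemma adj_dist_cases {p q : V} (hpq : G.Adj p q) (v : V) :
    G.dist v q = G.dist v p + 1 ∨ G.dist v p = G.dist v q + 1 := by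
  have h1 : G.dist v q ≤ G.dist v p + 1 := by
    have := dist_tri hG v p q
    have hd : G.dist p q = 1 := SimpleGraph.dist_eq_one_iff_adj.2 hpq
    omega
  have h2 : G.dist v p ≤ G.dist v q + 1 := by
    have := dist_tri hG v q p
    have hd : G.dist q p = 1 := SimpleGraph.dist_eq_one_iff_adj.2 hpq.symm
    omega
  have := adj_dist_ne hG hpq v
  omega

/-- there is a neighbour of `u` on a geodesic towards `v` -/
lemma neighbor_toward {u v : V} (hne : u ≠ v) :
    ∃ w : V, G.Adj u w ∧ G.dist w v + 1 = G.dist u v := by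
  obtain ⟨p, hp⟩ := hG.1.exists_walk_length_eq_dist u v
  cases p with
  | nil => exact absurd rfl hne
  | cons h q =>
    rename_i b
    refine ⟨b, h, ?_⟩
    have hq : G.dist b v ≤ q.length := SimpleGraph.dist_le q
    have hub : G.dist u b = 1 := SimpleGraph.dist_eq_one_iff_adj.2 h
    have h2 : G.dist u v ≤ G.dist u b + G.dist b v := dist_tri hG u b v
    simp only [SimpleGraph.Walk.length_cons] at hp
    omega

end Basics
section Halfspaces

variable {V : Type} [Fintype V] {G : SimpleGraph V}

/-- chain lemma: if z ∈ I(x,y) and w ∈ I(x,z) then w ∈ I(x,y) and z ∈ I(w,y). -/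
lemma gI_chain (hG : IsMedianGraph G) {x y z w : V}
    (hz : z ∈ gInterval G x y) (hw : w ∈ gInterval G x z) :
    w ∈ gInterval G x y ∧ z ∈ gInterval G w y := by
  rw [mem_gI] at hz hw ⊢
  rw [mem_gI]
  have t1 : G.dist w y ≤ G.dist w z + G.dist z y := dist_tri hG w z y
  have t2 : G.dist x y ≤ G.dist x w + G.dist w y := dist_tri hG x w y
  omega

/-- chain lemma on the other side: if z ∈ I(x,y) and m ∈ I(z,y) then
    m ∈ I(x,y) and z ∈ I(x,m). -/
lemma gI_chain' (hG : IsMedianGraph G) {x y z m : V}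
    (hz : z ∈ gInterval G x y) (hm : m ∈ gInterval G z y) :
    m ∈ gInterval G x y ∧ z ∈ gInterval G x m := by
  rw [mem_gI] at hz hm ⊢
  rw [mem_gI]
  have t1 : G.dist x m ≤ G.dist x z + G.dist z m := dist_tri hG x z m
  have t2 : G.dist x y ≤ G.dist x m + G.dist m y := dist_tri hG x m y
  omega

/-- The halfspace of an edge. -/
def hsp (G : SimpleGraph V) (a b : V) : Set V := {x | G.dist x a < G.dist x b}

lemma mem_hsp {a b x : V} : x ∈ hsp G a b ↔ G.dist x a < G.dist x b := Iff.rfl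

lemma mem_hsp_iff (hG : IsMedianGraph G) {a b : V} (hab : G.Adj a b) {x : V} :
    x ∈ hsp G a b ↔ G.dist x b = G.dist x a + 1 := by
  have := adj_dist_cases hG hab x
  rw [mem_hsp]
  omega

lemma notMem_hsp_iff (hG : IsMedianGraph G) {a b : V} (hab : G.Adj a b) {x : V} :
    x ∉ hsp G a b ↔ G.dist x a = G.dist x b + 1 := by
  have := adj_dist_cases hG hab x
  rw [mem_hsp]
  omega

lemma hsp_union (hG : IsMedianGraph G) {a b : V} (hab : G.Adj a b) :
    hsp G a b ∪ hsp G b a = Set.univ := by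
  ext x
  simp only [Set.mem_union, mem_hsp, Set.mem_univ, iff_true]
  have := adj_dist_cases hG hab x
  omega

lemma hsp_disjoint {a b : V} : Disjoint (hsp G a b) (hsp G b a) := by
  rw [Set.disjoint_left]
  intro x h1 h2
  rw [mem_hsp] at h1 h2
  omega

lemma self_mem_hsp (hG : IsMedianGraph G) {a b : V} (hab : G.Adj a b) : a ∈ hsp G a b := by
  rw [mem_hsp, SimpleGraph.dist_self, SimpleGraph.dist_eq_one_iff_adj.2 hab]
  omega

/-- C2 : a crossing edge points away from a. -/
lemma crossing_edge (hG : IsMedianGraph G) {a b x z : V} (hab : G.Adj a b)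
    (hx : x ∈ hsp G a b) (hz : z ∉ hsp G a b) (hxz : G.Adj x z) :
    G.dist z a = G.dist x a + 1 ∧ G.dist z b + 1 = G.dist x b := by
  rw [mem_hsp_iff hG hab] at hx
  rw [notMem_hsp_iff hG hab] at hz
  have h1 := adj_dist_cases hG hxz a
  have h2 := adj_dist_cases hG hxz b
  have e1 : G.dist a z = G.dist z a := SimpleGraph.dist_comm
  have e2 : G.dist a x = G.dist x a := SimpleGraph.dist_comm
  have e3 : G.dist b z = G.dist z b := SimpleGraph.dist_comm
  have e4 : G.dist b x = G.dist x b := SimpleGraph.dist_comm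
  omega

/-- I(x,a) ⊆ W_ab for x ∈ W_ab. -/
lemma gI_subset_hsp (hG : IsMedianGraph G) {a b x : V} (hab : G.Adj a b)
    (hx : x ∈ hsp G a b) : gInterval G x a ⊆ hsp G a b := by
  intro v hv
  rw [mem_gI] at hv
  by_contra hvn
  rw [mem_hsp_iff hG hab] at hx
  rw [notMem_hsp_iff hG hab] at hvn
  have t : G.dist x b ≤ G.dist x v + G.dist v b := dist_tri hG x v b
  omega

/-- Key distance-2 lemma: two vertices of W_ab at distance 2 cannot have a
common neighbour outside W_ab. -/
lemma lemmaK (hG : IsMedianGraph G) {a b x u z : V} (hab : G.Adj a b)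
    (hx : x ∈ hsp G a b) (hu : u ∈ hsp G a b) (hxu : x ≠ u)
    (hz : z ∉ hsp G a b) (hxz : G.Adj x z) (huz : G.Adj z u) : False := by
  obtain ⟨cx1, cx2⟩ := crossing_edge hG hab hx hz hxz
  obtain ⟨cu1, cu2⟩ := crossing_edge hG hab hu hz huz.symm
  have hxb : G.dist x b = G.dist x a + 1 := (mem_hsp_iff hG hab).1 hx
  have hub : G.dist u b = G.dist u a + 1 := (mem_hsp_iff hG hab).1 hu
  -- d(x,u) = 2
  have hne : G.dist x z ≠ G.dist x u := adj_dist_ne hG huz x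
  have hdxz : G.dist x z = 1 := SimpleGraph.dist_eq_one_iff_adj.2 hxz
  have hdzu : G.dist z u = 1 := SimpleGraph.dist_eq_one_iff_adj.2 huz
  have htri : G.dist x u ≤ G.dist x z + G.dist z u := dist_tri hG x z u
  have hxu0 : G.dist x u ≠ 0 := fun h => hxu (gdist_eq_zero hG h)
  have hdxu : G.dist x u = 2 := by omega
  -- the median p of (x, u, a)
  obtain ⟨p, ⟨hp1, hp2, hp3⟩, hpu⟩ := hG.2 x u a
  rw [mem_gI] at hp1 hp2 hp3
  rw [hdxu] at hp1
  have cpu : G.dist u p = G.dist p u := SimpleGraph.dist_comm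
  -- distances of p
  have hxa_ua : G.dist u a = G.dist x a := by omega
  have hpx1 : G.dist x p = 1 := by omega
  have hpu1 : G.dist p u = 1 := by omega
  have hpa : G.dist p a + 1 = G.dist x a := by omega
  -- distance of p to b
  have c1 := adj_dist_cases hG hab p
  have hpadj : G.Adj x p := SimpleGraph.dist_eq_one_iff_adj.1 hpx1
  have c2 := adj_dist_cases hG hpadj b
  have e3 : G.dist b p = G.dist p b := SimpleGraph.dist_comm
  have e4 : G.dist b x = G.dist x b := SimpleGraph.dist_comm
  have hpb : G.dist p b = G.dist x a := by omega
  -- now p and z are both medians of (x, u, b); contradiction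
  obtain ⟨m, _, hmu⟩ := hG.2 x u b
  have hmp : p = m := by
    apply hmu
    refine ⟨?_, ?_, ?_⟩ <;> rw [mem_gI]
    · omega
    · omega
    · omega
  have hmz : z = m := by
    apply hmu
    have hdzx : G.dist u z = 1 := by rw [SimpleGraph.dist_comm]; exact hdzu
    have hdzx' : G.dist x z = 1 := hdxz
    have hzb : G.dist z b + 1 = G.dist x b := cx2
    have cuz : G.dist u z = G.dist z u := SimpleGraph.dist_comm
    refine ⟨?_, ?_, ?_⟩ <;> rw [mem_gI]
    · omega
    · omega
    · omega
  rw [← hmz] at hmp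
  -- but d(p,a) = d(x,a) - 1 while d(z,a) = d(x,a)+1
  rw [hmp] at hpa
  omega

end Halfspaces
section Convexity

variable {V : Type} [Fintype V] {G : SimpleGraph V}

lemma hsp_conv_aux (hG : IsMedianGraph G) {a b : V} (hab : G.Adj a b) :
    ∀ n : ℕ, ∀ x y z : V, G.dist x y = n → x ∈ hsp G a b → y ∈ hsp G a b →
      z ∈ gInterval G x y → z ∈ hsp G a b := by
  intro n
  induction n using Nat.strong_induction_on with
  | _ n IH =>
  intro x y z hn hx hy hz
  by_contra hzn
  by_cases hzx : z = x
  · exact hzn (hzx ▸ hx)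
  by_cases hzy : z = y
  · exact hzn (hzy ▸ hy)
  have hz' := mem_gI.1 hz
  have hxz0 : G.dist x z ≠ 0 := fun h => hzx (gdist_eq_zero hG h).symm
  have hzy0 : G.dist z y ≠ 0 := fun h => hzy (gdist_eq_zero hG h)
  have hn2 : 2 ≤ n := by omega
  -- main chain : no counterexample adjacent to x
  have main : ∀ w, G.Adj x w → w ∈ gInterval G x y → w ∉ hsp G a b → False := by
    intro w hadj hwI hwn
    have hw' := mem_gI.1 hwI
    have hdxw : G.dist x w = 1 := SimpleGraph.dist_eq_one_iff_adj.2 hadj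
    have hwy : G.dist w y + 1 = n := by omega
    by_cases hncase : n = 2
    · -- distance 2 : use the key lemma
      have hwy1 : G.dist w y = 1 := by omega
      have hwyadj : G.Adj w y := SimpleGraph.dist_eq_one_iff_adj.1 hwy1
      have hxy : x ≠ y := fun h => by rw [h, SimpleGraph.dist_self] at hn; omega
      exact lemmaK hG hab hx hy hxy hwn hadj hwyadj
    · have hn3 : 3 ≤ n := by omega
      -- step (i) : y ∈ I(w,a)
      have hyIwa : G.dist w y + G.dist y a = G.dist w a := by
        obtain ⟨m, ⟨hm1, hm2, hm3⟩, _⟩ := hG.2 w y a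
        have hmW : m ∈ hsp G a b := gI_subset_hsp hG hab hy hm2
        by_cases hmy : m = y
        · subst hmy; exact mem_gI.1 hm3
        · exfalso
          obtain ⟨hmI, hwIm⟩ := gI_chain' hG hwI hm1
          have hmI' := mem_gI.1 hmI
          have hm1' := mem_gI.1 hm1
          have hmy0 : G.dist m y ≠ 0 := fun h => hmy (gdist_eq_zero hG h)
          exact hwn (IH (G.dist x m) (by omega) x m w rfl hx hmW hwIm)
      obtain ⟨cw1, cw2⟩ := crossing_edge hG hab hx hwn hadj
      have hyb : G.dist y b = G.dist y a + 1 := (mem_hsp_iff hG hab).1 hy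
      have hwb : G.dist w a = G.dist w b + 1 := (notMem_hsp_iff hG hab).1 hwn
      -- step (iv) : the median t of (w,y,b)
      obtain ⟨t, ⟨ht1, ht2, ht3⟩, _⟩ := hG.2 w y b
      have ht1' := mem_gI.1 ht1
      have ht2' := mem_gI.1 ht2
      have ht3' := mem_gI.1 ht3
      have cty : G.dist y t = G.dist t y := SimpleGraph.dist_comm
      have hty : G.dist t y = 1 := by omega
      have htw : G.dist w t + 2 = n := by omega
      obtain ⟨htI, hwIt⟩ := gI_chain' hG hwI ht1
      have htI' := mem_gI.1 htI
      have hdxt : G.dist x t + 1 = n := by omega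
      by_cases htW : t ∈ hsp G a b
      · exact hwn (IH (G.dist x t) (by omega) x t w rfl hx htW hwIt)
      · -- t ∉ W ; use the median of (t,x,a)
        have hyt : G.Adj y t := SimpleGraph.dist_eq_one_iff_adj.1 (by omega)
        obtain ⟨ct1, ct2⟩ := crossing_edge hG hab hy htW hyt
        obtain ⟨m2, ⟨hq1, hq2, hq3⟩, _⟩ := hG.2 t x a
        have hm2W : m2 ∈ hsp G a b := gI_subset_hsp hG hab hx hq2
        by_cases hm2x : m2 = x
        · have hq3' := mem_gI.1 hq3
          rw [hm2x] at hq3'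
          have cxt : G.dist x t = G.dist t x := SimpleGraph.dist_comm
          omega
        · have htI2 : t ∈ gInterval G y x := by
            rw [mem_gI]
            have c1 : G.dist y t = G.dist t y := SimpleGraph.dist_comm
            have c2 : G.dist t x = G.dist x t := SimpleGraph.dist_comm
            have c3 : G.dist y x = G.dist x y := SimpleGraph.dist_comm
            omega
          obtain ⟨hm2I, htIm2⟩ := gI_chain' hG htI2 hq1
          have hm2I' := mem_gI.1 hm2I
          have hm2x0 : G.dist m2 x ≠ 0 := fun h => hm2x (gdist_eq_zero hG h)
          have c3 : G.dist y x = G.dist x y := SimpleGraph.dist_comm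
          exact htW (IH (G.dist y m2) (by omega) y m2 t rfl hy hm2W htIm2)
  -- now the general z
  by_cases hdxz1 : G.dist x z = 1
  · exact main z (SimpleGraph.dist_eq_one_iff_adj.1 hdxz1) hz hzn
  · obtain ⟨s, hs_adj, hs_d⟩ := neighbor_toward hG (show x ≠ z from fun h => hzx h.symm)
    have hsI : s ∈ gInterval G x z := by
      rw [mem_gI]
      have : G.dist x s = 1 := SimpleGraph.dist_eq_one_iff_adj.2 hs_adj
      omega
    obtain ⟨hsIxy, hzIsy⟩ := gI_chain hG hz hsI
    by_cases hsW : s ∈ hsp G a b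
    · have hs' := mem_gI.1 hsIxy
      have hxs : G.dist x s = 1 := SimpleGraph.dist_eq_one_iff_adj.2 hs_adj
      exact hzn (IH (G.dist s y) (by omega) s y z rfl hsW hy hzIsy)
    · exact main s hs_adj hsIxy hsW

theorem hsp_convex (hG : IsMedianGraph G) {a b : V} (hab : G.Adj a b) :
    IsConvexSet G (hsp G a b) := by
  intro u hu v hv z hz
  exact hsp_conv_aux hG hab (G.dist u v) u v z rfl hu hv hz

/-- The edge split. -/
lemma edge_split (hG : IsMedianGraph G) {a b : V} (hab : G.Adj a b) :
    IsConvexSplit G {hsp G a b, hsp G b a} := by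
  refine ⟨hsp G a b, hsp G b a, rfl, ⟨a, self_mem_hsp hG hab⟩, ⟨b, self_mem_hsp hG hab.symm⟩,
    hsp_convex hG hab, hsp_convex hG hab.symm, hsp_union hG hab, hsp_disjoint⟩

end Convexity
section Sides

variable {V : Type} [Fintype V] {G : SimpleGraph V}

open Classical in
noncomputable def sideOf (P : Set (Set V)) (v : V) : Set V :=
  if h : ∃ A, A ∈ P ∧ v ∈ A then h.choose else ∅

lemma sideOf_mem_and_mem {P : Set (Set V)} (hP : IsConvexSplit G P) (v : V) :
    sideOf P v ∈ P ∧ v ∈ sideOf P v := by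
  obtain ⟨A, B, hPeq, -, -, -, -, hU, -⟩ := hP
  have hex : ∃ C, C ∈ P ∧ v ∈ C := by
    have : v ∈ A ∪ B := by rw [hU]; trivial
    rcases this with h | h
    · exact ⟨A, by simp [hPeq], h⟩
    · exact ⟨B, by simp [hPeq], h⟩
  simp only [sideOf]
  rw [dif_pos hex]
  exact hex.choose_spec

lemma mem_split_unique {P : Set (Set V)} (hP : IsConvexSplit G P) {A B : Set V} {v : V}
    (hA : A ∈ P) (hB : B ∈ P) (hvA : v ∈ A) (hvB : v ∈ B) : A = B := by
  obtain ⟨A0, B0, hPeq, -, -, -, -, -, hD⟩ := hP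
  subst hPeq
  rcases hA with rfl | hA
  · rcases hB with rfl | hB
    · rfl
    · rw [Set.mem_singleton_iff] at hB; subst hB
      exact absurd hvB (Set.disjoint_left.1 hD hvA)
  · rw [Set.mem_singleton_iff] at hA; subst hA
    rcases hB with rfl | hB
    · exact absurd hvB (Set.disjoint_right.1 hD hvA)
    · rw [Set.mem_singleton_iff] at hB; subst hB; rfl

lemma sideOf_eq {P : Set (Set V)} (hP : IsConvexSplit G P) {A : Set V} {v : V}
    (hA : A ∈ P) (hv : v ∈ A) : sideOf P v = A :=
  mem_split_unique hP (sideOf_mem_and_mem hP v).1 hA (sideOf_mem_and_mem hP v).2 hv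

lemma split_nonempty {P : Set (Set V)} (hP : IsConvexSplit G P) {A : Set V} (hA : A ∈ P) :
    A.Nonempty := by
  obtain ⟨A0, B0, hPeq, h1, h2, -, -, -, -⟩ := hP
  subst hPeq
  rcases hA with rfl | hA
  · exact h1
  · rw [Set.mem_singleton_iff] at hA; subst hA; exact h2

lemma split_convex {P : Set (Set V)} (hP : IsConvexSplit G P) {A : Set V} (hA : A ∈ P) :
    IsConvexSet G A := by
  obtain ⟨A0, B0, hPeq, -, -, h1, h2, -, -⟩ := hP
  subst hPeq
  rcases hA with rfl | hA
  · exact h1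
  · rw [Set.mem_singleton_iff] at hA; subst hA; exact h2

lemma split_compl_mem {P : Set (Set V)} (hP : IsConvexSplit G P) {A : Set V} (hA : A ∈ P) :
    Aᶜ ∈ P := by
  obtain ⟨A0, B0, hPeq, -, -, -, -, hU, hD⟩ := hP
  subst hPeq
  have hc : A0ᶜ = B0 := by
    ext x
    simp only [Set.mem_compl_iff]
    constructor
    · intro hx
      have hx2 : x ∈ A0 ∪ B0 := by rw [hU]; trivial
      rcases hx2 with h | h
      · exact absurd h hx
      · exact h
    · intro hx hx0
      exact Set.disjoint_left.1 hD hx0 hx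
  rcases hA with rfl | hA
  · rw [hc]; right; rfl
  · rw [Set.mem_singleton_iff] at hA; subst hA
    rw [← hc, compl_compl]; left; rfl

lemma split_pair_eq {P : Set (Set V)} (hP : IsConvexSplit G P) {A B : Set V}
    (hA : A ∈ P) (hB : B ∈ P) (hne : A ≠ B) : P = {A, B} := by
  obtain ⟨A0, B0, hPeq, -, -, -, -, -, -⟩ := hP
  subst hPeq
  rcases hA with rfl | hA <;> rcases hB with rfl | hB <;>
    simp_all [Set.pair_comm]

lemma notMem_sideOf {P : Set (Set V)} (hP : IsConvexSplit G P) {A : Set V} {v : V}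
    (hA : A ∈ P) (hv : v ∉ A) : sideOf P v = Aᶜ :=
  sideOf_eq hP (split_compl_mem hP hA) hv

/-- `P` separates `u` and `v`. -/
def seps (P : Set (Set V)) (u v : V) : Prop := sideOf P u ≠ sideOf P v

lemma seps_of_notMem {P : Set (Set V)} (hP : IsConvexSplit G P) {A : Set V} {u v : V}
    (hA : A ∈ P) (hu : u ∈ A) (hv : v ∉ A) : seps P u v := by
  rw [seps, sideOf_eq hP hA hu, notMem_sideOf hP hA hv]
  intro h
  have : u ∈ Aᶜ := h ▸ hu
  exact this hu

lemma not_seps_of_mem {P : Set (Set V)} (hP : IsConvexSplit G P) {A : Set V} {u v : V}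
    (hA : A ∈ P) (hu : u ∈ A) (hv : v ∈ A) : ¬ seps P u v := by
  rw [seps, sideOf_eq hP hA hu, sideOf_eq hP hA hv]
  simp

lemma seps_iff_notMem {P : Set (Set V)} (hP : IsConvexSplit G P) {u v : V} :
    seps P u v ↔ v ∉ sideOf P u := by
  constructor
  · intro h hv
    exact h (sideOf_eq hP (sideOf_mem_and_mem hP u).1 hv).symm
  · intro h
    exact seps_of_notMem hP (sideOf_mem_and_mem hP u).1 (sideOf_mem_and_mem hP u).2 h

end Sides
section EdgeSplits

variable {V : Type} [Fintype V] {G : SimpleGraph V}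

/-- The split determined by an edge. -/
def eSp (G : SimpleGraph V) (a b : V) : Set (Set V) := {hsp G a b, hsp G b a}

lemma sideOf_two_cases {P : Set (Set V)} (hP : IsConvexSplit G P) {A B : Set V}
    (hA : A ∈ P) (hB : B ∈ P) (hne : A ≠ B) (x : V) :
    sideOf P x = A ∨ sideOf P x = B := by
  have hpair := split_pair_eq hP hA hB hne
  subst hpair
  have h := (sideOf_mem_and_mem hP x).1
  rcases h with h | h
  · exact Or.inl h
  · exact Or.inr (Set.mem_singleton_iff.1 h)

lemma eSp_isSplit (hG : IsMedianGraph G) {a b : V} (hab : G.Adj a b) :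
    IsConvexSplit G (eSp G a b) := edge_split hG hab

lemma not_self_mem_hsp (a b : V) : b ∉ hsp G a b := by
  rw [mem_hsp, SimpleGraph.dist_self]
  omega

lemma eSp_seps (hG : IsMedianGraph G) {a b : V} (hab : G.Adj a b) : seps (eSp G a b) a b :=
  seps_of_notMem (eSp_isSplit hG hab) (Or.inl rfl) (self_mem_hsp hG hab)
    (not_self_mem_hsp a b)

/-- any split separating the two ends of an edge is the edge split -/
lemma sep_edge_unique (hG : IsMedianGraph G) {a b : V} (hab : G.Adj a b)
    {P : Set (Set V)} (hP : IsConvexSplit G P) (h : seps P a b) : P = eSp G a b := by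
  set A := sideOf P a with hA_def
  set B := sideOf P b with hB_def
  have hA : A ∈ P := (sideOf_mem_and_mem hP a).1
  have hB : B ∈ P := (sideOf_mem_and_mem hP b).1
  have haA : a ∈ A := (sideOf_mem_and_mem hP a).2
  have hbB : b ∈ B := (sideOf_mem_and_mem hP b).2
  have hd : G.dist a b = 1 := SimpleGraph.dist_eq_one_iff_adj.2 hab
  have step1 : A ⊆ hsp G a b := by
    intro x hx
    by_contra hxn
    rw [notMem_hsp_iff hG hab] at hxn
    have hbI : b ∈ gInterval G x a := by
      rw [mem_gI]
      have : G.dist b a = 1 := SimpleGraph.dist_eq_one_iff_adj.2 hab.symm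
      omega
    have hbA : b ∈ A := split_convex hP hA x hx a haA hbI
    exact h (mem_split_unique hP hA hB hbA hbB)
  have step2 : B ⊆ hsp G b a := by
    intro x hx
    by_contra hxn
    rw [notMem_hsp_iff hG hab.symm] at hxn
    have haI : a ∈ gInterval G x b := by
      rw [mem_gI]
      omega
    have haB : a ∈ B := split_convex hP hB x hx b hbB haI
    exact h (mem_split_unique hP hA hB haA haB)
  have hpair : P = {A, B} := split_pair_eq hP hA hB h
  have step3 : hsp G a b ⊆ A := by
    intro x hx
    have hxm := (sideOf_mem_and_mem hP x).2
    rcases sideOf_two_cases hP hA hB h x with hh | hh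
    · rwa [hh] at hxm
    · rw [hh] at hxm
      have := step2 hxm
      rw [mem_hsp] at hx this
      omega
  have step4 : hsp G b a ⊆ B := by
    intro x hx
    have hxm := (sideOf_mem_and_mem hP x).2
    rcases sideOf_two_cases hP hA hB h x with hh | hh
    · rw [hh] at hxm
      have := step1 hxm
      rw [mem_hsp] at hx this
      omega
    · rwa [hh] at hxm
  rw [hpair, eSp, Set.Subset.antisymm step1 step3, Set.Subset.antisymm step2 step4]

/-- any two distinct vertices are separated by some convex split -/
lemma exists_seps_of_ne (hG : IsMedianGraph G) {u v : V} (hne : u ≠ v) :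
    ∃ P : Set (Set V), IsConvexSplit G P ∧ seps P u v := by
  obtain ⟨w, hadj, hd⟩ := neighbor_toward hG hne
  refine ⟨eSp G u w, eSp_isSplit hG hadj, ?_⟩
  refine seps_of_notMem (eSp_isSplit hG hadj) (Or.inl rfl) (self_mem_hsp hG hadj) ?_
  rw [mem_hsp]
  have c1 : G.dist v u = G.dist u v := SimpleGraph.dist_comm
  have c2 : G.dist v w = G.dist w v := SimpleGraph.dist_comm
  omega

/-- vertices at distance at least two are separated by two distinct splits -/
lemma two_seps_of_dist (hG : IsMedianGraph G) :
    ∀ n : ℕ, ∀ u v : V, G.dist u v = n → 2 ≤ n →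
    ∃ P Q : Set (Set V), IsConvexSplit G P ∧ IsConvexSplit G Q ∧ P ≠ Q ∧
      seps P u v ∧ seps Q u v := by
  intro n
  induction n using Nat.strong_induction_on with
  | _ n IH =>
  intro u v hn h2
  have hne : u ≠ v := by
    intro h; rw [h, SimpleGraph.dist_self] at hn; omega
  obtain ⟨w, hadj, hd⟩ := neighbor_toward hG hne
  have hduw : G.dist u w = 1 := SimpleGraph.dist_eq_one_iff_adj.2 hadj
  have cvu : G.dist v u = G.dist u v := SimpleGraph.dist_comm
  have cvw : G.dist v w = G.dist w v := SimpleGraph.dist_comm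
  by_cases hc : n = 2
  · -- base case
    have hwv : G.Adj w v := SimpleGraph.dist_eq_one_iff_adj.1 (by omega)
    refine ⟨eSp G u w, eSp G w v, eSp_isSplit hG hadj, eSp_isSplit hG hwv, ?_, ?_, ?_⟩
    · -- the two edge splits are distinct
      intro hPQ
      have hmem : hsp G u w ∈ eSp G w v := by rw [← hPQ]; exact Or.inl rfl
      have hw1 : w ∉ hsp G u w := not_self_mem_hsp u w
      have hw2 : w ∈ hsp G w v := self_mem_hsp hG hwv
      have hu1 : u ∈ hsp G u w := self_mem_hsp hG hadj
      have hu2 : u ∉ hsp G v w := by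
        rw [mem_hsp]; omega
      rcases hmem with hh | hh
      · rw [hh] at hw1; exact hw1 hw2
      · rw [Set.mem_singleton_iff] at hh; rw [hh] at hu1; exact hu2 hu1
    · refine seps_of_notMem (eSp_isSplit hG hadj) (Or.inl rfl) (self_mem_hsp hG hadj) ?_
      rw [mem_hsp]; omega
    · refine seps_of_notMem (eSp_isSplit hG hwv) (Or.inl rfl) ?_ (not_self_mem_hsp w v)
      rw [mem_hsp]
      have c3 : G.dist u w = G.dist w u := SimpleGraph.dist_comm
      omega
  · -- inductive step
    have h3 : 3 ≤ n := by omega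
    obtain ⟨P, Q, hP, hQ, hPQ, hsepP, hsepQ⟩ := IH (G.dist w v) (by omega) w v rfl (by omega)
    have key : ∀ R : Set (Set V), IsConvexSplit G R → seps R w v → seps R u v := by
      intro R hR hsep hnsep
      have hsepuw : seps R u w := by
        simp only [seps] at hsep hnsep ⊢
        intro h
        exact hsep (h.symm.trans hnsep)
      have hRe : R = eSp G u w := sep_edge_unique hG hadj hR hsepuw
      have hwm : w ∈ hsp G w u := self_mem_hsp hG hadj.symm
      have hvm : v ∈ hsp G w u := by
        rw [mem_hsp]; omega
      exact not_seps_of_mem hR (by rw [hRe]; exact Or.inr rfl) hwm hvm hsep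
    exact ⟨P, Q, hP, hQ, hPQ, key P hP hsepP, key Q hQ hsepQ⟩

end EdgeSplits
section Helly

variable {V : Type} [Fintype V] {G : SimpleGraph V}

lemma helly3 (hG : IsMedianGraph G) {A B C : Set V}
    (hA : IsConvexSet G A) (hB : IsConvexSet G B) (hC : IsConvexSet G C)
    (hBC : (B ∩ C).Nonempty) (hAC : (A ∩ C).Nonempty) (hAB : (A ∩ B).Nonempty) :
    (A ∩ B ∩ C).Nonempty := by
  obtain ⟨x, hxB, hxC⟩ := hBC
  obtain ⟨y, hyA, hyC⟩ := hAC
  obtain ⟨z, hzA, hzB⟩ := hAB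
  obtain ⟨m, ⟨h1, h2, h3⟩, -⟩ := hG.2 x y z
  exact ⟨m, ⟨hA y hyA z hzA h2, hB x hxB z hzB h3⟩, hC x hxC y hyC h1⟩

lemma helly_list (hG : IsMedianGraph G) :
    ∀ n : ℕ, ∀ L : List (Set V), L.length = n →
      (∀ A ∈ L, IsConvexSet G A) → (∀ A ∈ L, ∀ B ∈ L, (A ∩ B).Nonempty) →
      ∃ x : V, ∀ A ∈ L, x ∈ A := by
  intro n
  induction n using Nat.strong_induction_on with
  | _ n IH =>
  intro L hlen hconv hpair
  match L with
  | [] =>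
    obtain ⟨x⟩ := hG.1.nonempty
    exact ⟨x, by simp⟩
  | A :: T =>
    match T with
    | [] =>
      obtain ⟨x, hx, -⟩ := hpair A (by simp) A (by simp)
      exact ⟨x, by simpa using hx⟩
    | B0 :: T' =>
      set T : List (Set V) := B0 :: T' with hT
      have hlen' : (T.map (· ∩ A)).length < n := by
        simp only [List.length_map]
        simp only [List.length_cons] at hlen
        omega
      have hconv' : ∀ C ∈ T.map (· ∩ A), IsConvexSet G C := by
        intro C hc
        obtain ⟨B, hB, rfl⟩ := List.mem_map.1 hc
        intro u hu v hv z hz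
        exact ⟨hconv B (by simp [hB]) u hu.1 v hv.1 hz,
               hconv A (by simp) u hu.2 v hv.2 hz⟩
      have hpair' : ∀ C ∈ T.map (· ∩ A), ∀ D ∈ T.map (· ∩ A), (C ∩ D).Nonempty := by
        intro C hc D hd
        obtain ⟨B, hB, rfl⟩ := List.mem_map.1 hc
        obtain ⟨B', hB', rfl⟩ := List.mem_map.1 hd
        have h3 := helly3 hG (hconv A (by simp)) (hconv B (by simp [hB]))
          (hconv B' (by simp [hB']))
          (hpair B (by simp [hB]) B' (by simp [hB']))
          (hpair A (by simp) B' (by simp [hB']))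
          (hpair A (by simp) B (by simp [hB]))
        obtain ⟨x, ⟨⟨hxA, hxB⟩, hxB'⟩⟩ := h3
        exact ⟨x, ⟨hxB, hxA⟩, ⟨hxB', hxA⟩⟩
      obtain ⟨x, hx⟩ := IH (T.map (· ∩ A)).length hlen' (T.map (· ∩ A)) rfl hconv' hpair'
      have hxA : x ∈ A := by
        have := hx (B0 ∩ A) (by simp [hT])
        exact this.2
      refine ⟨x, ?_⟩
      intro C hC
      rcases List.mem_cons.1 hC with rfl | hC
      · exact hxA
      · exact (hx (C ∩ A) (List.mem_map.2 ⟨C, hC, rfl⟩)).1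

end Helly
section Compat

variable {V : Type} [Fintype V] {G : SimpleGraph V}

lemma incompat_symm {P Q : Set (Set V)} (h : SplitsIncompatible P Q) :
    SplitsIncompatible Q P := by
  intro A hA B hB
  have := h B hB A hA
  rwa [Set.inter_comm] at this

lemma split_other_eq_compl {P : Set (Set V)} (hP : IsConvexSplit G P) {X Y : Set V}
    (hX : X ∈ P) (hY : Y ∈ P) (hne : X ≠ Y) : Y = Xᶜ := by
  obtain ⟨A0, B0, hPeq, -, -, -, -, hU, hD⟩ := hP
  subst hPeq
  have hc : A0ᶜ = B0 := by
    ext x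
    simp only [Set.mem_compl_iff]
    constructor
    · intro hx
      have hx2 : x ∈ A0 ∪ B0 := by rw [hU]; trivial
      rcases hx2 with h | h
      · exact absurd h hx
      · exact h
    · intro hx hx0
      exact Set.disjoint_left.1 hD hx0 hx
  rcases hX with rfl | hX <;> rcases hY with rfl | hY
  · exact absurd rfl hne
  · rw [Set.mem_singleton_iff] at hY; subst hY; exact hc.symm
  · rw [Set.mem_singleton_iff] at hX; subst hX
    rw [← hc, compl_compl]
  · rw [Set.mem_singleton_iff] at hX hY; subst hX; subst hY; exact absurd rfl hne

lemma split_ne_compl {P : Set (Set V)} (hP : IsConvexSplit G P) {X : Set V}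
    (hX : X ∈ P) : X ≠ Xᶜ := by
  intro h
  obtain ⟨x, hx⟩ := split_nonempty hP hX
  exact (h ▸ hx) hx

lemma exists_empty_pair {P Q : Set (Set V)}
    (hcompat : ¬ SplitsIncompatible P Q) : ∃ A ∈ P, ∃ C ∈ Q, A ∩ C = ∅ := by
  unfold SplitsIncompatible at hcompat
  push_neg at hcompat
  obtain ⟨A, hA, C, hC, h⟩ := hcompat
  exact ⟨A, hA, C, hC, h⟩

lemma empty_pair_unique {P Q : Set (Set V)} (hP : IsConvexSplit G P)
    (hQ : IsConvexSplit G Q) (hne : P ≠ Q) {A C A' C' : Set V}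
    (hA : A ∈ P) (hC : C ∈ Q) (h1 : A ∩ C = ∅)
    (hA' : A' ∈ P) (hC' : C' ∈ Q) (h2 : A' ∩ C' = ∅) : A = A' ∧ C = C' := by
  by_cases hAA : A' = A
  · subst hAA
    refine ⟨rfl, ?_⟩
    by_contra hCC
    have hC'c : C' = Cᶜ := split_other_eq_compl hQ hC hC' hCC
    subst hC'c
    obtain ⟨x, hx⟩ := split_nonempty hP hA
    have hxC : x ∉ C := fun h => Set.eq_empty_iff_forall_notMem.1 h1 x ⟨hx, h⟩
    have hxC' : x ∉ Cᶜ := fun h => Set.eq_empty_iff_forall_notMem.1 h2 x ⟨hx, h⟩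
    exact hxC' hxC
  · exfalso
    have hA'c : A' = Aᶜ := split_other_eq_compl hP hA hA' (fun h => hAA h.symm)
    subst hA'c
    by_cases hCC : C' = C
    · subst hCC
      obtain ⟨x, hx⟩ := split_nonempty hQ hC
      have h1' : x ∉ A := fun h => Set.eq_empty_iff_forall_notMem.1 h1 x ⟨h, hx⟩
      have h2' : x ∉ Aᶜ := fun h => Set.eq_empty_iff_forall_notMem.1 h2 x ⟨h, hx⟩
      exact h2' h1'
    · have hC'c : C' = Cᶜ := split_other_eq_compl hQ hC hC' (fun h => hCC h.symm)
      subst hC'c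
      -- then A = Cᶜ and Aᶜ = C, so P = Q
      have hsub1 : A ⊆ Cᶜ := by
        intro x hx hc
        exact Set.eq_empty_iff_forall_notMem.1 h1 x ⟨hx, hc⟩
      have hsub2 : Cᶜ ⊆ A := by
        intro x hx
        by_contra hc
        exact Set.eq_empty_iff_forall_notMem.1 h2 x ⟨hc, hx⟩
      have hac : A = Cᶜ := Set.Subset.antisymm hsub1 hsub2
      have hPp : P = {A, Aᶜ} :=
        split_pair_eq hP hA hA' (split_ne_compl hP hA)
      have hQp : Q = {C, Cᶜ} :=
        split_pair_eq hQ hC hC' (split_ne_compl hQ hC)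
      apply hne
      rw [hPp, hQp, hac, compl_compl, Set.pair_comm]

open Classical in
noncomputable def emptySide (P Q : Set (Set V)) : Set V :=
  if h : ∃ A ∈ P, ∃ C ∈ Q, A ∩ C = ∅ then h.choose else ∅

lemma emptySide_spec {P Q : Set (Set V)}
    (hcompat : ¬ SplitsIncompatible P Q) :
    emptySide P Q ∈ P ∧ ∃ C ∈ Q, emptySide P Q ∩ C = ∅ := by
  have hex := exists_empty_pair hcompat
  simp only [emptySide]
  rw [dif_pos hex]
  exact hex.choose_spec

lemma emptySide_eq {P Q : Set (Set V)} (hP : IsConvexSplit G P) (hQ : IsConvexSplit G Q)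
    (hne : P ≠ Q) (hcompat : ¬ SplitsIncompatible P Q) {A C : Set V}
    (hA : A ∈ P) (hC : C ∈ Q) (h1 : A ∩ C = ∅) : emptySide P Q = A := by
  obtain ⟨hmem, C', hC', h2⟩ := emptySide_spec hcompat
  exact (empty_pair_unique hP hQ hne hmem hC' h2 hA hC h1).1

/-- for distinct compatible splits the two empty sides face each other -/
lemma emptySide_pair {P Q : Set (Set V)} (hP : IsConvexSplit G P) (hQ : IsConvexSplit G Q)
    (hne : P ≠ Q) (hcompat : ¬ SplitsIncompatible P Q) :
    emptySide P Q ∩ emptySide Q P = ∅ := by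
  obtain ⟨hmem, C, hC, h1⟩ := emptySide_spec hcompat
  have hcompat' : ¬ SplitsIncompatible Q P := fun h => hcompat (incompat_symm h)
  have : emptySide Q P = C := emptySide_eq hQ hP hne.symm hcompat' hC hmem
    (by rw [Set.inter_comm]; exact h1)
  rw [this]
  exact h1

lemma emptySide_const_incompat {P Q Q' : Set (Set V)} (hP : IsConvexSplit G P)
    (hQ : IsConvexSplit G Q) (hQ' : IsConvexSplit G Q')
    (hne : P ≠ Q) (hne' : P ≠ Q')
    (hc : ¬ SplitsIncompatible P Q) (hc' : ¬ SplitsIncompatible P Q')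
    (hinc : SplitsIncompatible Q Q') : emptySide P Q = emptySide P Q' := by
  obtain ⟨hmem, C, hC, h1⟩ := emptySide_spec hc
  obtain ⟨hmem', C', hC', h2⟩ := emptySide_spec hc'
  by_contra hAA
  have hcompl : emptySide P Q' = (emptySide P Q)ᶜ :=
    split_other_eq_compl hP hmem hmem' (fun h => hAA h)
  obtain ⟨x, hxC, hxC'⟩ := hinc C hC C' hC'
  have hx1 : x ∉ emptySide P Q := fun h => Set.eq_empty_iff_forall_notMem.1 h1 x ⟨h, hxC⟩
  have hx2 : x ∉ emptySide P Q' := fun h => Set.eq_empty_iff_forall_notMem.1 h2 x ⟨h, hxC'⟩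
  rw [hcompl] at hx2
  exact hx2 hx1

end Compat
section Base

variable {V : Type} [Fintype V] {G : SimpleGraph V}

lemma inc_of_adj {P Q : {P : Set (Set V) // IsConvexSplit G P}}
    (h : (IncGraph G).Adj P Q) : SplitsIncompatible P.1 Q.1 := by
  rw [IncGraph, SimpleGraph.fromRel_adj] at h
  rcases h.2 with h' | h'
  · exact h'
  · exact incompat_symm h'

lemma walk_const (hG : IsMedianGraph G) (P : {P : Set (Set V) // IsConvexSplit G P}) :
    ∀ {Q Q' : {P : Set (Set V) // IsConvexSplit G P}} (w : (IncGraph G).Walk Q Q'),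
      (∀ t ∈ w.support, ¬ SplitsIncompatible t.1 P.1) → Q ≠ P → Q' ≠ P →
      emptySide P.1 Q.1 = emptySide P.1 Q'.1 := by
  intro Q Q' w
  induction w with
  | nil => intro _ _ _; rfl
  | @cons Q t Q' hadj w ih =>
    intro hsupp hQP hQ'P
    have hinc : SplitsIncompatible Q.1 t.1 := inc_of_adj hadj
    have hcQ : ¬ SplitsIncompatible P.1 Q.1 := by
      intro h
      exact hsupp Q (SimpleGraph.Walk.start_mem_support _) (incompat_symm h)
    have htP : t ≠ P := by
      rintro rfl
      exact hsupp Q (SimpleGraph.Walk.start_mem_support _) hinc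
    have hcT : ¬ SplitsIncompatible P.1 t.1 := by
      intro h
      refine hsupp t ?_ (incompat_symm h)
      rw [SimpleGraph.Walk.support_cons]
      exact List.mem_cons_of_mem _ (SimpleGraph.Walk.start_mem_support _)
    have hQP1 : P.1 ≠ Q.1 := fun h => hQP (Subtype.ext h.symm)
    have htP1 : P.1 ≠ t.1 := fun h => htP (Subtype.ext h.symm)
    have step : emptySide P.1 Q.1 = emptySide P.1 t.1 :=
      emptySide_const_incompat P.2 Q.2 t.2 hQP1 htP1 hcQ hcT hinc
    rw [step]
    apply ih ?_ htP hQ'P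
    intro s hs
    refine hsupp s ?_
    rw [SimpleGraph.Walk.support_cons]
    exact List.mem_cons_of_mem _ hs

lemma emptySide_const (hG : IsMedianGraph G)
    (hpath : ∀ s0 s1 s2 : {P : Set (Set V) // IsConvexSplit G P},
      s0 ≠ s1 → s0 ≠ s2 → s1 ≠ s2 →
      ¬ SplitsIncompatible s0.1 s1.1 → ¬ SplitsIncompatible s0.1 s2.1 →
      ¬ SplitsIncompatible s1.1 s2.1 →
      ∃ p : (IncGraph G).Walk s1 s2, IsInducedPath p ∧
        ∀ t ∈ p.support, ¬ SplitsIncompatible t.1 s0.1)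
    {P Q Q' : {P : Set (Set V) // IsConvexSplit G P}}
    (hQP : Q ≠ P) (hQ'P : Q' ≠ P)
    (hcQ : ¬ SplitsIncompatible P.1 Q.1) (hcQ' : ¬ SplitsIncompatible P.1 Q'.1) :
    emptySide P.1 Q.1 = emptySide P.1 Q'.1 := by
  by_cases hQQ : Q = Q'
  · rw [hQQ]
  by_cases hinc : SplitsIncompatible Q.1 Q'.1
  · exact emptySide_const_incompat P.2 Q.2 Q'.2
      (fun h => hQP (Subtype.ext h.symm)) (fun h => hQ'P (Subtype.ext h.symm))
      hcQ hcQ' hinc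
  · obtain ⟨p, -, hsupp⟩ := hpath P Q Q' (Ne.symm hQP) (Ne.symm hQ'P) hQQ hcQ hcQ' hinc
    exact walk_const hG P p hsupp hQP hQ'P

lemma exists_base (hG : IsMedianGraph G)
    (hpath : ∀ s0 s1 s2 : {P : Set (Set V) // IsConvexSplit G P},
      s0 ≠ s1 → s0 ≠ s2 → s1 ≠ s2 →
      ¬ SplitsIncompatible s0.1 s1.1 → ¬ SplitsIncompatible s0.1 s2.1 →
      ¬ SplitsIncompatible s1.1 s2.1 →
      ∃ p : (IncGraph G).Walk s1 s2, IsInducedPath p ∧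
        ∀ t ∈ p.support, ¬ SplitsIncompatible t.1 s0.1) :
    ∃ v0 : V, ∀ P Q : {P : Set (Set V) // IsConvexSplit G P}, P.1 ≠ Q.1 →
      ¬ SplitsIncompatible P.1 Q.1 →
      (sideOf P.1 v0)ᶜ ∩ (sideOf Q.1 v0)ᶜ = ∅ := by
  classical
  obtain ⟨x₀⟩ := hG.1.nonempty
  haveI : Finite {P : Set (Set V) // IsConvexSplit G P} := Subtype.finite
  letI : Fintype {P : Set (Set V) // IsConvexSplit G P} := Fintype.ofFinite _
  set Spl := {P : Set (Set V) // IsConvexSplit G P}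
  -- the Helly family
  set X : Spl → Set V := fun P =>
    if h : ∃ R : Spl, R.1 ≠ P.1 ∧ ¬ SplitsIncompatible P.1 R.1
    then (emptySide P.1 h.choose.1)ᶜ else sideOf P.1 x₀ with hX
  have hXmem : ∀ P : Spl, X P ∈ P.1 := by
    intro P
    rw [hX]
    by_cases h : ∃ R : Spl, R.1 ≠ P.1 ∧ ¬ SplitsIncompatible P.1 R.1
    · simp only [dif_pos h]
      exact split_compl_mem P.2 (emptySide_spec h.choose_spec.2).1
    · simp only [dif_neg h]
      exact (sideOf_mem_and_mem P.2 x₀).1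
  have hXeq : ∀ P Q : Spl, Q.1 ≠ P.1 → ¬ SplitsIncompatible P.1 Q.1 →
      X P = (emptySide P.1 Q.1)ᶜ := by
    intro P Q hne hc
    have h : ∃ R : Spl, R.1 ≠ P.1 ∧ ¬ SplitsIncompatible P.1 R.1 := ⟨Q, hne, hc⟩
    rw [hX]
    simp only [dif_pos h]
    congr 1
    exact emptySide_const hG hpath (fun hh => h.choose_spec.1 (congrArg Subtype.val hh))
      (fun hh => hne (congrArg Subtype.val hh)) h.choose_spec.2 hc
  -- pairwise intersections
  have hXpair : ∀ P Q : Spl, (X P ∩ X Q).Nonempty := by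
    intro P Q
    by_cases hPQ : P = Q
    · subst hPQ
      rw [Set.inter_self]
      exact split_nonempty P.2 (hXmem P)
    · have hne : P.1 ≠ Q.1 := fun h => hPQ (Subtype.ext h)
      by_cases hinc : SplitsIncompatible P.1 Q.1
      · exact hinc (X P) (hXmem P) (X Q) (hXmem Q)
      · have h1 : X P = (emptySide P.1 Q.1)ᶜ := hXeq P Q hne.symm hinc
        have h2 : X Q = (emptySide Q.1 P.1)ᶜ := hXeq Q P hne
          (fun h => hinc (incompat_symm h))
        rw [h1, h2]
        by_contra hemp
        rw [Set.not_nonempty_iff_eq_empty] at hemp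
        have hup := empty_pair_unique P.2 Q.2 hne
          (emptySide_spec hinc).1
          (emptySide_spec (fun h => hinc (incompat_symm h))).1
          (emptySide_pair P.2 Q.2 hne hinc)
          (split_compl_mem P.2 (emptySide_spec hinc).1)
          (split_compl_mem Q.2 (emptySide_spec (fun h => hinc (incompat_symm h))).1)
          hemp
        exact split_ne_compl P.2 (emptySide_spec hinc).1 hup.1
  -- apply Helly
  set L : List (Set V) := (Finset.univ : Finset Spl).toList.map X with hL
  have hconv : ∀ A ∈ L, IsConvexSet G A := by
    intro A hA
    obtain ⟨P, -, rfl⟩ := List.mem_map.1 hA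
    exact split_convex P.2 (hXmem P)
  have hpairL : ∀ A ∈ L, ∀ B ∈ L, (A ∩ B).Nonempty := by
    intro A hA B hB
    obtain ⟨P, -, rfl⟩ := List.mem_map.1 hA
    obtain ⟨Q, -, rfl⟩ := List.mem_map.1 hB
    exact hXpair P Q
  obtain ⟨v0, hv0⟩ := helly_list hG L.length L rfl hconv hpairL
  refine ⟨v0, ?_⟩
  intro P Q hne hc
  have hvP : v0 ∈ X P := hv0 (X P) (List.mem_map.2 ⟨P, Finset.mem_toList.2 (Finset.mem_univ P), rfl⟩)
  have hvQ : v0 ∈ X Q := hv0 (X Q) (List.mem_map.2 ⟨Q, Finset.mem_toList.2 (Finset.mem_univ Q), rfl⟩)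
  have h1 : X P = (emptySide P.1 Q.1)ᶜ := hXeq P Q hne.symm hc
  have h2 : X Q = (emptySide Q.1 P.1)ᶜ := hXeq Q P hne (fun h => hc (incompat_symm h))
  have s1 : sideOf P.1 v0 = (emptySide P.1 Q.1)ᶜ :=
    sideOf_eq P.2 (h1 ▸ hXmem P) (h1 ▸ hvP)
  have s2 : sideOf Q.1 v0 = (emptySide Q.1 P.1)ᶜ :=
    sideOf_eq Q.2 (h2 ▸ hXmem Q) (h2 ▸ hvQ)
  rw [s1, s2, compl_compl, compl_compl]
  exact emptySide_pair P.2 Q.2 hne hc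

end Base
section Phi

variable {V : Type} [Fintype V] {G : SimpleGraph V}

abbrev Spl (G : SimpleGraph V) := {P : Set (Set V) // IsConvexSplit G P}

noncomputable def phi (G : SimpleGraph V) [Fintype V] (v0 v : V) : Finset (Spl G) :=
  haveI : Finite (Spl G) := Subtype.finite
  (Set.toFinite {P : Spl G | seps P.1 v0 v}).toFinset

lemma mem_phi {v0 v : V} {P : Spl G} : P ∈ phi G v0 v ↔ seps P.1 v0 v := by
  simp [phi, Set.Finite.mem_toFinset]

lemma side_dichotomy {P : Set (Set V)} (hP : IsConvexSplit G P) {x y : V}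
    (h : sideOf P x ≠ sideOf P y) (z : V) :
    sideOf P z = sideOf P x ∨ sideOf P z = sideOf P y :=
  sideOf_two_cases hP (sideOf_mem_and_mem hP x).1 (sideOf_mem_and_mem hP y).1 h z

lemma sep_xor {P : Set (Set V)} (hP : IsConvexSplit G P) (w u v : V) :
    seps P u v ↔ ((seps P w u ∧ ¬ seps P w v) ∨ (¬ seps P w u ∧ seps P w v)) := by
  simp only [seps, not_not]
  constructor
  · intro h
    rcases side_dichotomy hP h w with hh | hh
    · right
      exact ⟨hh, fun hc => h (hh.symm.trans hc)⟩
    · left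
      exact ⟨fun hc => h (hc.symm.trans hh), hh⟩
  · rintro (⟨h1, h2⟩ | ⟨h1, h2⟩) h
    · exact h1 (h2.trans h.symm)
    · exact h2 (h1.trans h)
end Phi
section PhiMain

variable {V : Type} [Fintype V] {G : SimpleGraph V}

lemma phi_clique {v0 : V}
    (hstar : ∀ P Q : Spl G, P.1 ≠ Q.1 → ¬ SplitsIncompatible P.1 Q.1 →
      (sideOf P.1 v0)ᶜ ∩ (sideOf Q.1 v0)ᶜ = ∅) (v : V) :
    (IncGraph G).IsClique ↑(phi G v0 v) := by
  intro P hP Q hQ hne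
  rw [Finset.mem_coe, mem_phi] at hP hQ
  rw [IncGraph, SimpleGraph.fromRel_adj]
  refine ⟨hne, Or.inl ?_⟩
  by_contra hc
  have hne1 : P.1 ≠ Q.1 := fun h => hne (Subtype.ext h)
  have hemp := hstar P Q hne1 hc
  have hvP : v ∈ (sideOf P.1 v0)ᶜ := (seps_iff_notMem P.2).1 hP
  have hvQ : v ∈ (sideOf Q.1 v0)ᶜ := (seps_iff_notMem Q.2).1 hQ
  exact Set.eq_empty_iff_forall_notMem.1 hemp v ⟨hvP, hvQ⟩

lemma phi_inj (hG : IsMedianGraph G) (v0 : V) {u v : V}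
    (h : phi G v0 u = phi G v0 v) : u = v := by
  by_contra hne
  obtain ⟨P0, hP0, hsep⟩ := exists_seps_of_ne hG hne
  have hx := (sep_xor (G := G) hP0 v0 u v).1 hsep
  rcases hx with ⟨h1, h2⟩ | ⟨h1, h2⟩
  · have : (⟨P0, hP0⟩ : Spl G) ∈ phi G v0 u := mem_phi.2 h1
    rw [h] at this
    exact h2 (mem_phi.1 this)
  · have : (⟨P0, hP0⟩ : Spl G) ∈ phi G v0 v := mem_phi.2 h2
    rw [← h] at this
    exact h1 (mem_phi.1 this)

lemma phi_surj (hG : IsMedianGraph G) (v0 : V)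
    (hstar : ∀ P Q : Spl G, P.1 ≠ Q.1 → ¬ SplitsIncompatible P.1 Q.1 →
      (sideOf P.1 v0)ᶜ ∩ (sideOf Q.1 v0)ᶜ = ∅)
    (C : Finset (Spl G)) (hC : (IncGraph G).IsClique ↑C) :
    ∃ v : V, phi G v0 v = C := by
  classical
  haveI : Finite (Spl G) := Subtype.finite
  letI : Fintype (Spl G) := Fintype.ofFinite _
  set Y : Spl G → Set V := fun P =>
    if P ∈ C then (sideOf P.1 v0)ᶜ else sideOf P.1 v0 with hY
  have hYmem : ∀ P : Spl G, Y P ∈ P.1 := by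
    intro P
    rw [hY]
    by_cases h : P ∈ C
    · simp only [if_pos h]
      exact split_compl_mem P.2 (sideOf_mem_and_mem P.2 v0).1
    · simp only [if_neg h]
      exact (sideOf_mem_and_mem P.2 v0).1
  have hYpair : ∀ P Q : Spl G, (Y P ∩ Y Q).Nonempty := by
    intro P Q
    by_cases hPQ : P = Q
    · subst hPQ
      rw [Set.inter_self]
      exact split_nonempty P.2 (hYmem P)
    have hne1 : P.1 ≠ Q.1 := fun h => hPQ (Subtype.ext h)
    by_cases hinc : SplitsIncompatible P.1 Q.1
    · exact hinc (Y P) (hYmem P) (Y Q) (hYmem Q)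
    by_cases hPC : P ∈ C <;> by_cases hQC : Q ∈ C
    · -- both in the clique : they must be incompatible, contradiction
      exfalso
      have hadj := hC (Finset.mem_coe.2 hPC) (Finset.mem_coe.2 hQC) hPQ
      exact hinc (inc_of_adj hadj)
    · -- P ∈ C, Q ∉ C
      have hemp := hstar P Q hne1 hinc
      obtain ⟨z, hz⟩ := split_nonempty P.2 (split_compl_mem P.2 (sideOf_mem_and_mem P.2 v0).1)
      refine ⟨z, ?_, ?_⟩
      · rw [hY]; simp only [if_pos hPC]; exact hz
      · rw [hY]; simp only [if_neg hQC]
        by_contra hzq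
        exact Set.eq_empty_iff_forall_notMem.1 hemp z ⟨hz, hzq⟩
    · -- Q ∈ C, P ∉ C
      have hemp := hstar Q P hne1.symm (fun h => hinc (incompat_symm h))
      obtain ⟨z, hz⟩ := split_nonempty Q.2 (split_compl_mem Q.2 (sideOf_mem_and_mem Q.2 v0).1)
      refine ⟨z, ?_, ?_⟩
      · rw [hY]; simp only [if_neg hPC]
        by_contra hzp
        exact Set.eq_empty_iff_forall_notMem.1 hemp z ⟨hz, hzp⟩
      · rw [hY]; simp only [if_pos hQC]; exact hz
    · refine ⟨v0, ?_, ?_⟩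
      · rw [hY]; simp only [if_neg hPC]; exact (sideOf_mem_and_mem P.2 v0).2
      · rw [hY]; simp only [if_neg hQC]; exact (sideOf_mem_and_mem Q.2 v0).2
  set L : List (Set V) := (Finset.univ : Finset (Spl G)).toList.map Y with hL
  have hconv : ∀ A ∈ L, IsConvexSet G A := by
    intro A hA
    obtain ⟨P, -, rfl⟩ := List.mem_map.1 hA
    exact split_convex P.2 (hYmem P)
  have hpairL : ∀ A ∈ L, ∀ B ∈ L, (A ∩ B).Nonempty := by
    intro A hA B hB
    obtain ⟨P, -, rfl⟩ := List.mem_map.1 hA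
    obtain ⟨Q, -, rfl⟩ := List.mem_map.1 hB
    exact hYpair P Q
  obtain ⟨v, hv⟩ := helly_list hG L.length L rfl hconv hpairL
  have hvP : ∀ P : Spl G, v ∈ Y P := by
    intro P
    exact hv (Y P) (List.mem_map.2 ⟨P, Finset.mem_toList.2 (Finset.mem_univ P), rfl⟩)
  refine ⟨v, ?_⟩
  ext P
  rw [mem_phi]
  constructor
  · intro h
    by_contra hPC
    have := hvP P
    rw [hY] at this
    simp only [if_neg hPC] at this
    exact (seps_iff_notMem P.2).1 h this
  · intro hPC
    have := hvP P
    rw [hY] at this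
    simp only [if_pos hPC] at this
    exact (seps_iff_notMem P.2).2 this

/-- for adjacent u,v the separating-split sets differ by exactly one split -/
lemma phi_adj_insert (hG : IsMedianGraph G) (v0 : V) {u v : V} (hadj : G.Adj u v) :
    ∃ P : Spl G, (P ∉ phi G v0 v ∧ (↑(phi G v0 u) : Set (Spl G)) = insert P ↑(phi G v0 v))
      ∨ (P ∉ phi G v0 u ∧ (↑(phi G v0 v) : Set (Spl G)) = insert P ↑(phi G v0 u)) := by
  set P0 : Spl G := ⟨eSp G u v, eSp_isSplit hG hadj⟩ with hP0
  have hsep : seps P0.1 u v := eSp_seps hG hadj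
  have huniq : ∀ Q : Spl G, seps Q.1 u v → Q = P0 := by
    intro Q h
    exact Subtype.ext (sep_edge_unique hG hadj Q.2 h)
  have hnosep : ∀ Q : Spl G, Q ≠ P0 → (Q ∈ phi G v0 u ↔ Q ∈ phi G v0 v) := by
    intro Q hQ
    have hns : ¬ seps Q.1 u v := fun h => hQ (huniq Q h)
    rw [mem_phi, mem_phi]
    constructor
    · intro hA
      by_contra hB
      exact hns ((sep_xor Q.2 v0 u v).2 (Or.inl ⟨hA, hB⟩))
    · intro hB
      by_contra hA
      exact hns ((sep_xor Q.2 v0 u v).2 (Or.inr ⟨hA, hB⟩))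
  rcases (sep_xor P0.2 v0 u v).1 hsep with ⟨h1, h2⟩ | ⟨h1, h2⟩
  · -- P0 ∈ phi u, P0 ∉ phi v
    refine ⟨P0, Or.inl ⟨fun h => h2 (mem_phi.1 h), ?_⟩⟩
    ext Q
    simp only [Finset.mem_coe, Set.mem_insert_iff]
    constructor
    · intro hQ
      by_cases hQP : Q = P0
      · exact Or.inl hQP
      · exact Or.inr (Finset.mem_coe.2 ((hnosep Q hQP).1 hQ))
    · rintro (rfl | hQ)
      · exact mem_phi.2 h1
      · have hQP : Q ≠ P0 := by
          rintro rfl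
          exact h2 (mem_phi.1 (Finset.mem_coe.1 hQ))
        exact (hnosep Q hQP).2 (Finset.mem_coe.1 hQ)
  · refine ⟨P0, Or.inr ⟨fun h => h1 (mem_phi.1 h), ?_⟩⟩
    ext Q
    simp only [Finset.mem_coe, Set.mem_insert_iff]
    constructor
    · intro hQ
      by_cases hQP : Q = P0
      · exact Or.inl hQP
      · exact Or.inr (Finset.mem_coe.2 ((hnosep Q hQP).2 hQ))
    · rintro (rfl | hQ)
      · exact mem_phi.2 h2
      · have hQP : Q ≠ P0 := by
          rintro rfl
          exact h1 (mem_phi.1 (Finset.mem_coe.1 hQ))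
        exact (hnosep Q hQP).1 (Finset.mem_coe.1 hQ)

lemma adj_of_insert (hG : IsMedianGraph G) (v0 : V) {u v : V} {P : Spl G}
    (hPu : P ∉ phi G v0 u)
    (heq : (↑(phi G v0 v) : Set (Spl G)) = insert P ↑(phi G v0 u)) : G.Adj u v := by
  have hPv : P ∈ phi G v0 v := by
    have : (P : Spl G) ∈ (insert P ↑(phi G v0 u) : Set (Spl G)) := Set.mem_insert _ _
    rw [← heq] at this
    exact Finset.mem_coe.1 this
  have hsep : seps P.1 u v := (sep_xor P.2 v0 u v).2
    (Or.inr ⟨fun h => hPu (mem_phi.2 h), mem_phi.1 hPv⟩)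
  have hne : u ≠ v := by
    rintro rfl
    exact hsep rfl
  have huniq : ∀ Q : Spl G, seps Q.1 u v → Q = P := by
    intro Q h
    rcases (sep_xor Q.2 v0 u v).1 h with ⟨h1, h2⟩ | ⟨h1, h2⟩
    · exfalso
      have hQu : Q ∈ phi G v0 u := mem_phi.2 h1
      have : (Q : Spl G) ∈ (insert P ↑(phi G v0 u) : Set (Spl G)) :=
        Set.mem_insert_iff.2 (Or.inr (Finset.mem_coe.2 hQu))
      rw [← heq] at this
      exact h2 (mem_phi.1 (Finset.mem_coe.1 this))
    · have hQv : Q ∈ phi G v0 v := mem_phi.2 h2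
      have : (Q : Spl G) ∈ (insert P ↑(phi G v0 u) : Set (Spl G)) := by
        rw [← heq]; exact Finset.mem_coe.2 hQv
      rcases Set.mem_insert_iff.1 this with h' | h'
      · exact h'
      · exact absurd (mem_phi.1 (Finset.mem_coe.1 h')) h1
  have hd0 : G.dist u v ≠ 0 := by
    intro h
    exact hne ((hG.1.dist_eq_zero_iff).1 h)
  by_cases hd1 : G.dist u v = 1
  · exact SimpleGraph.dist_eq_one_iff_adj.1 hd1
  · exfalso
    obtain ⟨P1, P2, hP1, hP2, hne12, hs1, hs2⟩ :=
      two_seps_of_dist hG (G.dist u v) u v rfl (by omega)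
    have e1 : (⟨P1, hP1⟩ : Spl G) = P := huniq _ hs1
    have e2 : (⟨P2, hP2⟩ : Spl G) = P := huniq _ hs2
    exact hne12 (congrArg Subtype.val (e1.trans e2.symm))

end PhiMain

set_option maxHeartbeats 2000000 in
theorem median_is_simplexGraph_of_induced_paths' {V : Type} [Fintype V]
    (G : SimpleGraph V) (hG : IsMedianGraph G)
    (hpath : ∀ s0 s1 s2 : {P : Set (Set V) // IsConvexSplit G P},
      s0 ≠ s1 → s0 ≠ s2 → s1 ≠ s2 →
      ¬ SplitsIncompatible s0.1 s1.1 → ¬ SplitsIncompatible s0.1 s2.1 →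
      ¬ SplitsIncompatible s1.1 s2.1 →
      ∃ p : (IncGraph G).Walk s1 s2, IsInducedPath p ∧
        ∀ t ∈ p.support, ¬ SplitsIncompatible t.1 s0.1) :
    ∃ (α : Type) (F : SimpleGraph α), Finite α ∧
      Nonempty (G ≃g simplexGraph F) ∧ Nonempty (IncGraph G ≃g F) := by
  obtain ⟨v0, hstar⟩ := exists_base hG hpath
  refine ⟨{P : Set (Set V) // IsConvexSplit G P}, IncGraph G, Subtype.finite, ?_,
    ⟨RelIso.refl _⟩⟩
  -- the vertex map
  set Φ : V → {s : Finset (Spl G) // (IncGraph G).IsClique (s : Set (Spl G))} :=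
    fun v => ⟨phi G v0 v, phi_clique hstar v⟩ with hΦ
  have hinj : Function.Injective Φ := by
    intro u v h
    exact phi_inj hG v0 (congrArg Subtype.val h)
  have hsurj : Function.Surjective Φ := by
    rintro ⟨C, hC⟩
    obtain ⟨v, hv⟩ := phi_surj hG v0 hstar C hC
    exact ⟨v, Subtype.ext hv⟩
  have hbij : Function.Bijective Φ := ⟨hinj, hsurj⟩
  refine ⟨{ toEquiv := Equiv.ofBijective Φ hbij, map_rel_iff' := ?_ }⟩
  intro a b
  show (simplexGraph (IncGraph G)).Adj (Φ a) (Φ b) ↔ G.Adj a b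
  rw [simplexGraph, SimpleGraph.fromRel_adj]
  constructor
  · rintro ⟨hne, h | h⟩
    · obtain ⟨P, hP1, hP2⟩ := h
      exact adj_of_insert hG v0 hP1 hP2
    · obtain ⟨P, hP1, hP2⟩ := h
      exact (adj_of_insert hG v0 hP1 hP2).symm
  · intro hadj
    obtain ⟨P, h | h⟩ := phi_adj_insert hG v0 hadj
    · -- P ∉ phi b, phi a = insert P (phi b) : rel (Φ b) (Φ a)
      refine ⟨?_, Or.inr ⟨P, h.1, h.2⟩⟩
      intro hab
      have : phi G v0 a = phi G v0 b := congrArg Subtype.val hab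
      apply h.1
      rw [← this]
      have : (P : Spl G) ∈ (insert P (↑(phi G v0 b)) : Set (Spl G)) := Set.mem_insert _ _
      rw [← h.2] at this
      exact Finset.mem_coe.1 this
    · refine ⟨?_, Or.inl ⟨P, h.1, h.2⟩⟩
      intro hab
      have heq : phi G v0 a = phi G v0 b := congrArg Subtype.val hab
      apply h.1
      rw [heq]
      have : (P : Spl G) ∈ (insert P (↑(phi G v0 a)) : Set (Spl G)) := Set.mem_insert _ _
      rw [← h.2] at this
      exact Finset.mem_coe.1 this


/-- Let `G` be a finite median graph such that for every three pairwise
distinct, pairwise compatible convex splits `s0, s1, s2` there is an induced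
path in `Inc(G)` from `s1` to `s2` containing no split incompatible with `s0`.
Then `G` is a simplex graph: there is a finite graph `F` with `G ≅ κ(F)` and
`Inc(G) ≅ F`. -/
theorem median_is_simplexGraph_of_induced_paths {V : Type} [Fintype V]
    (G : SimpleGraph V) (hG : IsMedianGraph G)
    (hpath : ∀ s0 s1 s2 : {P : Set (Set V) // IsConvexSplit G P},
      s0 ≠ s1 → s0 ≠ s2 → s1 ≠ s2 →
      ¬ SplitsIncompatible s0.1 s1.1 → ¬ SplitsIncompatible s0.1 s2.1 →
      ¬ SplitsIncompatible s1.1 s2.1 →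
      ∃ p : (IncGraph G).Walk s1 s2, IsInducedPath p ∧
        ∀ t ∈ p.support, ¬ SplitsIncompatible t.1 s0.1) :
    ∃ (α : Type) (F : SimpleGraph α), Finite α ∧
      Nonempty (G ≃g simplexGraph F) ∧ Nonempty (IncGraph G ≃g F) := by
  exact median_is_simplexGraph_of_induced_paths' G hG hpath
end
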